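/- arXiv:1001.2163 — 7 statements merged into one kernel-verified Lean document; each statement's English description precedes it below -/
import Mathlib

section
/- Fix an integer n ≥ 1. Given a nondecreasing right-continuous ℕ-valued function E : [0,∞) → ℕ with left-hand limits, Q₀ ∈ ℕ, and sequences (ηᵢ)_{i≥1}, (η̃ᵢ)_{i≥1} of nonnegative reals, there exist functions Q : [0,∞) → ℕ and A : [0,∞) → ℕ, both right-continuous with left-hand limits and with A nondecreasing, satisfying the many-server queue equations: for all t ≥ 0, Q(t) = max(Q₀ − n, 0) + Q̃(t) + E(t) − Σ_{i=1}^{A(t)} 1{τᵢ + ηᵢ ≤ t} and A(t) = max(Q₀ − n, 0) + E(t) − max(Q(t) − n, 0), where τᵢ = inf{s ≥ 0 : A(s) ≥ i} and Q̃(t) = Σ_{i=1}^{min(Q₀,n)} 1{η̃ᵢ > t}. -/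
open Filter Set Topology

/-- A `ℕ`-valued function on `[0,∞)` that is right-continuous with left-hand limits
(with the discrete topology on `ℕ`, i.e. locally constant on the right and
eventually constant on the left). -/
def NatRCLL (g : ℝ → ℕ) : Prop :=
  (∀ t ≥ (0 : ℝ), ∀ᶠ s in nhdsWithin t (Set.Ici t), g s = g t) ∧
  (∀ t > (0 : ℝ), ∃ m : ℕ, ∀ᶠ s in nhdsWithin t (Set.Iio t), g s = m)

/-- `τᵢ = inf {s ≥ 0 : A(s) ≥ i}`. -/
noncomputable def entryTime (A : ℝ → ℕ) (i : ℕ) : ℝ :=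
  sInf {s : ℝ | 0 ≤ s ∧ i ≤ A s}

/-! ### Auxiliary construction -/


open scoped Classical in
/-- Entry-into-service time of the `i`-th customer, defined by strong recursion. -/
noncomputable def tauF (n K : ℕ) (E : ℝ → ℕ) (R : ℝ → ℕ) (η : ℕ → ℝ) : ℕ → ℝ
  | i => sInf {s : ℝ | 0 ≤ s ∧ i ≤ K + E s ∧
      R s + ((Finset.Ico 1 i).attach.filter
        (fun j => s < tauF n K E R η j.1 + η j.1)).card < n}
  termination_by i => i
  decreasing_by all_goals first
    | exact (Finset.mem_Ico.mp a.2).2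
    | exact (Finset.mem_Ico.mp j.2).2

open scoped Classical in
/-- `inSF i t` says that at time `t` customer `i` has already entered service. -/
def inSF (n K : ℕ) (E : ℝ → ℕ) (R : ℝ → ℕ) (η : ℕ → ℝ) (i : ℕ) (t : ℝ) : Prop :=
  0 ≤ t ∧ i ≤ K + E t ∧
    R t + ((Finset.Ico 1 i).filter (fun j => t < tauF n K E R η j + η j)).card < n

lemma card_attach_filter {α : Type*} (s : Finset α) (p : α → Prop) [DecidablePred p] :
    (s.attach.filter (fun a => p a.1)).card = (s.filter p).card := by
  rw [Finset.filter_attach]; simp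

open scoped Classical in
lemma tauF_eq (n K : ℕ) (E : ℝ → ℕ) (R : ℝ → ℕ) (η : ℕ → ℝ) (i : ℕ) :
    tauF n K E R η i = sInf {s | inSF n K E R η i s} := by
  rw [tauF]
  congr 1
  ext s
  simp only [inSF, Set.mem_setOf_eq]
  constructor <;> (rintro ⟨h1, h2, h3⟩; refine ⟨h1, h2, ?_⟩) <;>
    · have heq := card_attach_filter (Finset.Ico 1 i)
        (fun j => s < tauF n K E R η j + η j)
      omega

open scoped Classical in
/-- The cumulative number of customers that have entered service. -/
noncomputable def AF (n K : ℕ) (E : ℝ → ℕ) (R : ℝ → ℕ) (η : ℕ → ℝ) (t : ℝ) : ℕ :=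
  Nat.findGreatest (fun i => inSF n K E R η i t) (K + E t)

open scoped Classical in
/-- The cumulative number of departures from service. -/
noncomputable def DF (n K : ℕ) (E : ℝ → ℕ) (R : ℝ → ℕ) (η : ℕ → ℝ) (t : ℝ) : ℕ :=
  ((Finset.Icc 1 (AF n K E R η t)).filter (fun i => tauF n K E R η i + η i ≤ t)).card

/-- The queue length process. -/
noncomputable def QF (n K : ℕ) (E : ℝ → ℕ) (R : ℝ → ℕ) (η : ℕ → ℝ) (t : ℝ) : ℕ :=
  K + R t + E t - DF n K E R η t

section Lemmas

variable {n K : ℕ} {E R : ℝ → ℕ} {η : ℕ → ℝ}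

lemma inSF_mono_i {i j : ℕ} {t : ℝ} (h : inSF n K E R η i t) (hji : j ≤ i) :
    inSF n K E R η j t := by
  classical
  obtain ⟨h1, h2, h3⟩ := h
  refine ⟨h1, le_trans hji h2, ?_⟩
  refine lt_of_le_of_lt (Nat.add_le_add_left (Finset.card_le_card
    (Finset.filter_subset_filter _ (Finset.Ico_subset_Ico le_rfl hji))) _) h3

lemma inSF_upclosed (hE : MonotoneOn E (Set.Ici 0))
    (hRa : ∀ ⦃s t : ℝ⦄, s ≤ t → R t ≤ R s)
    {i : ℕ} {t t' : ℝ} (h : inSF n K E R η i t) (htt' : t ≤ t') :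
    inSF n K E R η i t' := by
  classical
  obtain ⟨h1, h2, h3⟩ := h
  have h1' : (0:ℝ) ≤ t' := le_trans h1 htt'
  refine ⟨h1', le_trans h2 (by gcongr; exact hE h1 h1' htt'), ?_⟩
  have hsub : ((Finset.Ico 1 i).filter (fun j => t' < tauF n K E R η j + η j)) ⊆
      ((Finset.Ico 1 i).filter (fun j => t < tauF n K E R η j + η j)) := by
    apply Finset.monotone_filter_right
    intro j _ hj
    exact lt_of_le_of_lt htt' hj
  exact lt_of_le_of_lt (Nat.add_le_add (hRa htt') (Finset.card_le_card hsub)) h3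

lemma AF_le (t : ℝ) : AF n K E R η t ≤ K + E t := by
  classical
  exact Nat.findGreatest_le _

lemma inSF_AF {t : ℝ} (h : AF n K E R η t ≠ 0) : inSF n K E R η (AF n K E R η t) t := by
  classical
  exact Nat.findGreatest_of_ne_zero rfl h

lemma le_AF {i : ℕ} {t : ℝ} (h : inSF n K E R η i t) : i ≤ AF n K E R η t := by
  classical
  exact Nat.le_findGreatest h.2.1 h

lemma inSF_iff_le_AF {i : ℕ} {t : ℝ} (hi : 1 ≤ i) :
    inSF n K E R η i t ↔ i ≤ AF n K E R η t := by
  constructor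
  · exact le_AF
  · intro h
    have hA : AF n K E R η t ≠ 0 := by omega
    exact inSF_mono_i (inSF_AF hA) h

lemma AF_monotone (hE : MonotoneOn E (Set.Ici 0))
    (hRa : ∀ ⦃s t : ℝ⦄, s ≤ t → R t ≤ R s) :
    MonotoneOn (AF n K E R η) (Set.Ici 0) := by
  intro s hs t ht hst
  rcases Nat.eq_zero_or_pos (AF n K E R η s) with h | h
  · omega
  · have hne : AF n K E R η s ≠ 0 := by omega
    exact le_AF (inSF_upclosed hE hRa (inSF_AF hne) hst)

lemma entryTime_AF_eq {i : ℕ} (hi : 1 ≤ i) :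
    entryTime (AF n K E R η) i = tauF n K E R η i := by
  rw [entryTime, tauF_eq]
  congr 1
  ext s
  simp only [Set.mem_setOf_eq]
  constructor
  · rintro ⟨h0, hle⟩
    have hne : AF n K E R η s ≠ 0 := by omega
    exact inSF_mono_i (inSF_AF hne) hle
  · intro h
    exact ⟨h.1, le_AF h⟩

/-! ### Eventual constancy helpers -/

lemma ev_right_lt (t c : ℝ) : ∀ᶠ s in nhdsWithin t (Set.Ici t), (s < c ↔ t < c) := by
  by_cases h : t < c
  · filter_upwards [mem_nhdsWithin_of_mem_nhds (Iio_mem_nhds h)] with s hs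
    exact iff_of_true hs h
  · filter_upwards [self_mem_nhdsWithin] with s hs
    exact iff_of_false (fun h' => h (lt_of_le_of_lt hs h')) h

lemma ev_right_le (t c : ℝ) : ∀ᶠ s in nhdsWithin t (Set.Ici t), (c ≤ s ↔ c ≤ t) := by
  filter_upwards [ev_right_lt t c] with s hs
  rw [← not_lt, hs, not_lt]

lemma ev_left_lt (t c : ℝ) : ∀ᶠ s in nhdsWithin t (Set.Iio t), (s < c ↔ t ≤ c) := by
  by_cases h : t ≤ c
  · filter_upwards [self_mem_nhdsWithin] with s hs
    exact iff_of_true (lt_of_lt_of_le hs h) h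
  · push_neg at h
    filter_upwards [mem_nhdsWithin_of_mem_nhds (Ioi_mem_nhds h)] with s hs
    exact iff_of_false (not_lt.2 (le_of_lt hs)) (not_le.2 h)

lemma ev_left_le (t c : ℝ) : ∀ᶠ s in nhdsWithin t (Set.Iio t), (c ≤ s ↔ c < t) := by
  filter_upwards [ev_left_lt t c] with s hs
  rw [← not_lt, hs, not_le]

lemma ev_left_pos {t : ℝ} (ht : 0 < t) : ∀ᶠ s in nhdsWithin t (Set.Iio t), (0:ℝ) ≤ s := by
  filter_upwards [mem_nhdsWithin_of_mem_nhds (Ioi_mem_nhds ht)] with s hs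
  exact le_of_lt hs

lemma findGreatest_congr {P Q : ℕ → Prop} [DecidablePred P] [DecidablePred Q] {b : ℕ}
    (h : ∀ i, i ≤ b → (P i ↔ Q i)) : Nat.findGreatest P b = Nat.findGreatest Q b := by
  induction b with
  | zero => rfl
  | succ b ih =>
    rw [Nat.findGreatest_succ, Nat.findGreatest_succ]
    by_cases hp : P (b + 1)
    · rw [if_pos hp, if_pos ((h _ le_rfl).1 hp)]
    · rw [if_neg hp, if_neg (fun hq => hp ((h _ le_rfl).2 hq))]
      exact ih (fun i hi => h i (le_trans hi (Nat.le_succ b)))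

end Lemmas

section Lemmas2

variable {n K : ℕ} {E R : ℝ → ℕ} {η : ℕ → ℝ}

lemma tauF_mem (hE : MonotoneOn E (Set.Ici 0))
    (hEr : ∀ t ≥ (0:ℝ), ∀ᶠ s in nhdsWithin t (Set.Ici t), E s = E t)
    (hRa : ∀ ⦃s t : ℝ⦄, s ≤ t → R t ≤ R s)
    (hRr : ∀ t : ℝ, ∀ᶠ s in nhdsWithin t (Set.Ici t), R s = R t)
    {i : ℕ} (hne : {s | inSF n K E R η i s}.Nonempty) :
    inSF n K E R η i (tauF n K E R η i) := by
  classical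
  rw [tauF_eq]
  set S := {s | inSF n K E R η i s} with hS
  have hbdd : BddBelow S := ⟨0, fun s hs => hs.1⟩
  set m := sInf S with hm
  have hm0 : 0 ≤ m := le_csInf hne fun s hs => hs.1
  have hup : ∀ t, m < t → t ∈ S := by
    intro t htm
    obtain ⟨s, hsS, hst⟩ := (csInf_lt_iff hbdd hne).1 htm
    exact inSF_upclosed hE hRa hsS (le_of_lt hst)
  have hmono : nhdsWithin m (Set.Ioi m) ≤ nhdsWithin m (Set.Ici m) :=
    nhdsWithin_mono _ Set.Ioi_subset_Ici_self
  have hEv : ∀ᶠ s in nhdsWithin m (Set.Ioi m), E s = E m := hmono (hEr m hm0)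
  have hRv : ∀ᶠ s in nhdsWithin m (Set.Ioi m), R s = R m := hmono (hRr m)
  have hτv : ∀ᶠ s in nhdsWithin m (Set.Ioi m), ∀ j ∈ Finset.Ico 1 i,
      (s < tauF n K E R η j + η j ↔ m < tauF n K E R η j + η j) :=
    hmono ((Finset.eventually_all _).2 fun j _ => ev_right_lt m _)
  obtain ⟨s, ⟨hEs, hRs, hτs⟩, hs_mem⟩ :=
    ((hEv.and (hRv.and hτv)).and eventually_mem_nhdsWithin).exists
  have hsS : s ∈ S := hup s hs_mem
  obtain ⟨-, h2, h3⟩ := hsS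
  refine ⟨hm0, by rwa [hEs] at h2, ?_⟩
  have hcount : (Finset.Ico 1 i).filter (fun j => s < tauF n K E R η j + η j) =
      (Finset.Ico 1 i).filter (fun j => m < tauF n K E R η j + η j) :=
    Finset.filter_congr fun j hj => hτs j hj
  rwa [hRs, hcount] at h3

lemma tauF_le {i : ℕ} {t : ℝ} (h : inSF n K E R η i t) : tauF n K E R η i ≤ t := by
  rw [tauF_eq]
  exact csInf_le ⟨0, fun s hs => hs.1⟩ h

lemma AF_right (hEr : ∀ t ≥ (0:ℝ), ∀ᶠ s in nhdsWithin t (Set.Ici t), E s = E t)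
    (hRr : ∀ t : ℝ, ∀ᶠ s in nhdsWithin t (Set.Ici t), R s = R t)
    {t : ℝ} (ht : 0 ≤ t) :
    ∀ᶠ s in nhdsWithin t (Set.Ici t), AF n K E R η s = AF n K E R η t := by
  classical
  have hτ : ∀ᶠ s in nhdsWithin t (Set.Ici t), ∀ j ∈ Finset.Ico 1 (K + E t),
      (s < tauF n K E R η j + η j ↔ t < tauF n K E R η j + η j) :=
    (Finset.eventually_all _).2 fun j _ => ev_right_lt t _
  filter_upwards [hEr t ht, hRr t, hτ, self_mem_nhdsWithin] with s hEs hRs hτs hst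
  have hst' : t ≤ s := hst
  have key : ∀ i, i ≤ K + E t → (inSF n K E R η i s ↔ inSF n K E R η i t) := by
    intro i hi
    have hcount : (Finset.Ico 1 i).filter (fun j => s < tauF n K E R η j + η j) =
        (Finset.Ico 1 i).filter (fun j => t < tauF n K E R η j + η j) := by
      refine Finset.filter_congr fun j hj => hτs j ?_
      rw [Finset.mem_Ico] at hj ⊢
      omega
    unfold inSF
    rw [hEs, hRs, hcount]
    have h0s : (0:ℝ) ≤ s := le_trans ht hst'
    simp [ht, h0s]
  unfold AF
  rw [hEs]
  exact findGreatest_congr key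

lemma AF_left (hEl : ∀ t > (0:ℝ), ∃ m, ∀ᶠ s in nhdsWithin t (Set.Iio t), E s = m)
    (hRl : ∀ t > (0:ℝ), ∃ m, ∀ᶠ s in nhdsWithin t (Set.Iio t), R s = m)
    {t : ℝ} (ht : 0 < t) :
    ∃ m, ∀ᶠ s in nhdsWithin t (Set.Iio t), AF n K E R η s = m := by
  classical
  obtain ⟨mE, hEl'⟩ := hEl t ht
  obtain ⟨mR, hRl'⟩ := hRl t ht
  refine ⟨Nat.findGreatest (fun i => i ≤ K + mE ∧
      mR + ((Finset.Ico 1 i).filter (fun j => t ≤ tauF n K E R η j + η j)).card < n)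
      (K + mE), ?_⟩
  have hτ : ∀ᶠ s in nhdsWithin t (Set.Iio t), ∀ j ∈ Finset.Ico 1 (K + mE),
      (s < tauF n K E R η j + η j ↔ t ≤ tauF n K E R η j + η j) :=
    (Finset.eventually_all _).2 fun j _ => ev_left_lt t _
  filter_upwards [hEl', hRl', hτ, ev_left_pos ht] with s hEs hRs hτs hs0
  have key : ∀ i, i ≤ K + mE → (inSF n K E R η i s ↔ (i ≤ K + mE ∧
      mR + ((Finset.Ico 1 i).filter (fun j => t ≤ tauF n K E R η j + η j)).card < n)) := by
    intro i hi
    have hcount : (Finset.Ico 1 i).filter (fun j => s < tauF n K E R η j + η j) =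
        (Finset.Ico 1 i).filter (fun j => t ≤ tauF n K E R η j + η j) := by
      refine Finset.filter_congr fun j hj => hτs j ?_
      rw [Finset.mem_Ico] at hj ⊢
      omega
    unfold inSF
    rw [hEs, hRs, hcount]
    simp [hs0]
  unfold AF
  rw [hEs]
  exact findGreatest_congr key

end Lemmas2

section Lemmas3

variable {n K : ℕ} {E R : ℝ → ℕ} {η : ℕ → ℝ}

lemma QF_right (hEr : ∀ t ≥ (0:ℝ), ∀ᶠ s in nhdsWithin t (Set.Ici t), E s = E t)
    (hRr : ∀ t : ℝ, ∀ᶠ s in nhdsWithin t (Set.Ici t), R s = R t)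
    {t : ℝ} (ht : 0 ≤ t) :
    ∀ᶠ s in nhdsWithin t (Set.Ici t), QF n K E R η s = QF n K E R η t := by
  classical
  have hdep : ∀ᶠ s in nhdsWithin t (Set.Ici t), ∀ j ∈ Finset.Icc 1 (AF n K E R η t),
      (tauF n K E R η j + η j ≤ s ↔ tauF n K E R η j + η j ≤ t) :=
    (Finset.eventually_all _).2 fun j _ => ev_right_le t _
  filter_upwards [hEr t ht, hRr t, AF_right hEr hRr ht, hdep] with s hEs hRs hAs hds
  have hD : DF n K E R η s = DF n K E R η t := by
    unfold DF
    rw [hAs]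
    congr 1
    exact Finset.filter_congr fun j hj => hds j hj
  unfold QF
  rw [hEs, hRs, hD]

lemma QF_left (hEl : ∀ t > (0:ℝ), ∃ m, ∀ᶠ s in nhdsWithin t (Set.Iio t), E s = m)
    (hRl : ∀ t > (0:ℝ), ∃ m, ∀ᶠ s in nhdsWithin t (Set.Iio t), R s = m)
    {t : ℝ} (ht : 0 < t) :
    ∃ m, ∀ᶠ s in nhdsWithin t (Set.Iio t), QF n K E R η s = m := by
  classical
  obtain ⟨mE, hEl'⟩ := hEl t ht
  obtain ⟨mR, hRl'⟩ := hRl t ht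
  obtain ⟨mA, hAl⟩ := AF_left (n := n) (K := K) (η := η) hEl hRl ht
  refine ⟨K + mR + mE -
      ((Finset.Icc 1 mA).filter (fun j => tauF n K E R η j + η j < t)).card, ?_⟩
  have hdep : ∀ᶠ s in nhdsWithin t (Set.Iio t), ∀ j ∈ Finset.Icc 1 mA,
      (tauF n K E R η j + η j ≤ s ↔ tauF n K E R η j + η j < t) :=
    (Finset.eventually_all _).2 fun j _ => ev_left_le t _
  filter_upwards [hEl', hRl', hAl, hdep] with s hEs hRs hAs hds
  have hD : DF n K E R η s =
      ((Finset.Icc 1 mA).filter (fun j => tauF n K E R η j + η j < t)).card := by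
    unfold DF
    rw [hAs]
    congr 1
    exact Finset.filter_congr fun j hj => hds j hj
  unfold QF
  rw [hEs, hRs, hD]

end Lemmas3

/-- Existence of solutions to the many-server queue equations (Lemma A.1, existence part). -/
theorem manyServerQueue_equations_exist
    (n : ℕ) (hn : 1 ≤ n)
    (E : ℝ → ℕ) (hEmono : MonotoneOn E (Set.Ici 0)) (hErcll : NatRCLL E)
    (Q₀ : ℕ) (η η' : ℕ → ℝ)
    (hη : ∀ i, 1 ≤ i → 0 ≤ η i) (hη' : ∀ i, 1 ≤ i → 0 ≤ η' i) :
    ∃ Q A : ℝ → ℕ,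
      NatRCLL Q ∧ NatRCLL A ∧ MonotoneOn A (Set.Ici 0) ∧
      ∀ t ≥ (0 : ℝ),
        ((Q t : ℤ) =
            max ((Q₀ : ℤ) - n) 0
              + (∑ i ∈ Finset.Icc 1 (min Q₀ n), if t < η' i then (1 : ℤ) else 0)
              + (E t : ℤ)
              - ∑ i ∈ Finset.Icc 1 (A t),
                  (if entryTime A i + η i ≤ t then (1 : ℤ) else 0)) ∧
        ((A t : ℤ) = max ((Q₀ : ℤ) - n) 0 + (E t : ℤ) - max ((Q t : ℤ) - n) 0) := by
  classical
  obtain ⟨hEr, hEl⟩ := hErcll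
  set K : ℕ := Q₀ - n with hKdef
  set R : ℝ → ℕ := fun t => ((Finset.Icc 1 (min Q₀ n)).filter (fun i => t < η' i)).card
    with hRdef
  have hRa : ∀ ⦃s t : ℝ⦄, s ≤ t → R t ≤ R s := by
    intro s t hst
    refine Finset.card_le_card (Finset.monotone_filter_right _ ?_)
    intro i _ hi
    exact lt_of_le_of_lt hst hi
  have hRr : ∀ t : ℝ, ∀ᶠ s in nhdsWithin t (Set.Ici t), R s = R t := by
    intro t
    have h := (Finset.eventually_all (Finset.Icc 1 (min Q₀ n))).2
      (fun i _ => ev_right_lt t (η' i))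
    filter_upwards [h] with s hs
    exact congrArg Finset.card (Finset.filter_congr fun i hi => hs i hi)
  have hRl : ∀ t > (0:ℝ), ∃ m, ∀ᶠ s in nhdsWithin t (Set.Iio t), R s = m := by
    intro t ht
    refine ⟨((Finset.Icc 1 (min Q₀ n)).filter (fun i => t ≤ η' i)).card, ?_⟩
    have h := (Finset.eventually_all (Finset.Icc 1 (min Q₀ n))).2
      (fun i _ => ev_left_lt t (η' i))
    filter_upwards [h] with s hs
    exact congrArg Finset.card (Finset.filter_congr fun i hi => hs i hi)
  have hRn : ∀ t : ℝ, R t ≤ n := by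
    intro t
    calc R t ≤ (Finset.Icc 1 (min Q₀ n)).card := Finset.card_filter_le _ _
      _ ≤ n := by rw [Nat.card_Icc]; omega
  refine ⟨QF n K E R η, AF n K E R η, ⟨fun t ht => QF_right hEr hRr ht,
    fun t ht => QF_left hEl hRl ht⟩, ⟨fun t ht => AF_right hEr hRr ht,
    fun t ht => AF_left hEl hRl ht⟩, AF_monotone hEmono hRa, ?_⟩
  intro t ht
  set a := AF n K E R η t with ha
  set d := DF n K E R η t with hd
  have hde : d ≤ a := by
    calc d ≤ (Finset.Icc 1 a).card := Finset.card_filter_le _ _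
      _ = a := by rw [Nat.card_Icc]; omega
  have ha_le : a ≤ K + E t := AF_le t
  have hqn : R t ≤ n := hRn t
  have hsplit : ((Finset.Icc 1 a).filter (fun i => t < tauF n K E R η i + η i)).card + d = a := by
    have h1 := Finset.card_filter_add_card_filter_not
      (s := Finset.Icc 1 a) (p := fun i => t < tauF n K E R η i + η i)
    have h2 : (Finset.Icc 1 a).filter (fun i => ¬ t < tauF n K E R η i + η i) =
        (Finset.Icc 1 a).filter (fun i => tauF n K E R η i + η i ≤ t) :=
      Finset.filter_congr fun i _ => not_lt
    rw [h2] at h1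
    have h3 : d = ((Finset.Icc 1 a).filter
        (fun i => tauF n K E R η i + η i ≤ t)).card := by
      rw [hd]; unfold DF; rw [← ha]
    rw [Nat.card_Icc] at h1
    omega
  have h1 : R t + a ≤ n + d := by
    rcases Nat.eq_zero_or_pos a with h0 | hpos
    · omega
    · have hin : inSF n K E R η a t := (inSF_iff_le_AF hpos).2 le_rfl
      have h3 := hin.2.2
      have hsub : (Finset.Icc 1 a).filter (fun i => t < tauF n K E R η i + η i) ⊆
          insert a ((Finset.Ico 1 a).filter (fun i => t < tauF n K E R η i + η i)) := by
        intro x hx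
        rw [Finset.mem_filter, Finset.mem_Icc] at hx
        rw [Finset.mem_insert, Finset.mem_filter, Finset.mem_Ico]
        by_cases hxa : x = a
        · exact Or.inl hxa
        · exact Or.inr ⟨⟨hx.1.1, lt_of_le_of_ne hx.1.2 hxa⟩, hx.2⟩
      have hcard := le_trans (Finset.card_le_card hsub) (Finset.card_insert_le _ _)
      omega
  have h2 : a = K + E t ∨ n + d ≤ R t + a := by
    by_contra h
    push_neg at h
    obtain ⟨hlt, hlt2⟩ := h
    have ha1 : a + 1 ≤ K + E t := by omega
    have hin : inSF n K E R η (a + 1) t := by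
      refine ⟨ht, ha1, ?_⟩
      rw [Finset.Ico_add_one_right_eq_Icc]
      omega
    have := le_AF hin
    omega
  have hQcast : (QF n K E R η t : ℤ) = (K : ℤ) + R t + E t - d := by
    unfold QF
    rw [← hd]
    have hle : d ≤ K + R t + E t := by omega
    push_cast [Nat.cast_sub hle]
    ring
  have hK : (K : ℤ) = max ((Q₀ : ℤ) - n) 0 := by
    rw [hKdef]; omega
  have hRsum : (∑ i ∈ Finset.Icc 1 (min Q₀ n), if t < η' i then (1 : ℤ) else 0) =
      (R t : ℤ) := by
    rw [hRdef]
    push_cast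
    rw [Finset.sum_boole]
    try norm_num
  have hDsum : (∑ i ∈ Finset.Icc 1 a, if entryTime (AF n K E R η) i + η i ≤ t
      then (1 : ℤ) else 0) = (d : ℤ) := by
    rw [show (∑ i ∈ Finset.Icc 1 a, if entryTime (AF n K E R η) i + η i ≤ t
        then (1 : ℤ) else 0) = ∑ i ∈ Finset.Icc 1 a,
        if tauF n K E R η i + η i ≤ t then (1 : ℤ) else 0 from
      Finset.sum_congr rfl fun i hi => by
        rw [entryTime_AF_eq (Finset.mem_Icc.mp hi).1]]
    rw [Finset.sum_boole, hd]
    unfold DF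
    rw [← ha]
  constructor
  · rw [hQcast, hK, hRsum, hDsum]
    try push_cast
    try ring
  · rw [hQcast, hK]
    have hE0 : (0:ℤ) ≤ E t := by positivity
    omega
end

section
/- Fix an integer n ≥ 1. Given a nondecreasing right-continuous ℕ-valued function E : [0,∞) → ℕ with left-hand limits, Q₀ ∈ ℕ, and sequences (ηᵢ)_{i≥1}, (η̃ᵢ)_{i≥1} of nonnegative reals such that ηᵢ > 0 for every i ≥ 1, there is at most one pair of functions Q : [0,∞) → ℕ and A : [0,∞) → ℕ, both right-continuous with left-hand limits and with A nondecreasing, satisfying for all t ≥ 0: Q(t) = max(Q₀ − n, 0) + Q̃(t) + E(t) − Σ_{i=1}^{A(t)} 1{τᵢ + ηᵢ ≤ t} and A(t) = max(Q₀ − n, 0) + E(t) − max(Q(t) − n, 0), where τᵢ = inf{s ≥ 0 : A(s) ≥ i} and Q̃(t) = Σ_{i=1}^{min(Q₀,n)} 1{η̃ᵢ > t}. -/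
open Filter Set Topology

/-- `(Q, A)` solves the many-server queue equations on `[0,∞)`. -/
def SolvesQueue (n : ℕ) (E : ℝ → ℕ) (Q₀ : ℕ) (η η' : ℕ → ℝ) (Q A : ℝ → ℕ) : Prop :=
  NatRCLL Q ∧ NatRCLL A ∧ MonotoneOn A (Set.Ici 0) ∧
  ∀ t ≥ (0 : ℝ),
    ((Q t : ℤ) =
        max ((Q₀ : ℤ) - n) 0
          + (∑ i ∈ Finset.Icc 1 (min Q₀ n), if t < η' i then (1 : ℤ) else 0)
          + (E t : ℤ)
          - ∑ i ∈ Finset.Icc 1 (A t),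
              (if entryTime A i + η i ≤ t then (1 : ℤ) else 0)) ∧
    ((A t : ℤ) = max ((Q₀ : ℤ) - n) 0 + (E t : ℤ) - max ((Q t : ℤ) - n) 0)

lemma sInf_inter_Iio {S : Set ℝ} {t s₀ : ℝ} (hb : BddBelow S)
    (hs₀ : s₀ ∈ S) (hlt : s₀ < t) : sInf S = sInf (S ∩ Set.Iio t) := by
  apply le_antisymm
  · exact csInf_le_csInf hb ⟨s₀, hs₀, hlt⟩ Set.inter_subset_left
  · refine le_csInf ⟨s₀, hs₀⟩ ?_
    intro x hx
    rcases lt_or_ge x t with h | h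
    · exact csInf_le (hb.mono Set.inter_subset_left) ⟨hx, h⟩
    · exact le_trans (le_trans (csInf_le (hb.mono Set.inter_subset_left) ⟨hs₀, hlt⟩) hlt.le) h

lemma key_mem {t : ℝ} (ht : 0 ≤ t) {η : ℕ → ℝ} (hη : ∀ i, 1 ≤ i → 0 < η i)
    {A₁ A₂ : ℝ → ℕ} (hm₂ : MonotoneOn A₂ (Set.Ici 0))
    (hag : ∀ s, 0 ≤ s → s < t → A₁ s = A₂ s)
    {i : ℕ} (hi : 1 ≤ i) (h₁ : i ≤ A₁ t) (h₂ : entryTime A₁ i + η i ≤ t) :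
    i ≤ A₂ t ∧ entryTime A₂ i + η i ≤ t := by
  have hne : ({s : ℝ | 0 ≤ s ∧ i ≤ A₁ s}).Nonempty := ⟨t, ht, h₁⟩
  have hbd : BddBelow {s : ℝ | 0 ≤ s ∧ i ≤ A₁ s} := ⟨0, fun x hx => hx.1⟩
  have hbd₂ : BddBelow {s : ℝ | 0 ≤ s ∧ i ≤ A₂ s} := ⟨0, fun x hx => hx.1⟩
  have h₂' := h₂
  unfold entryTime at h₂'
  have hτlt : sInf {s : ℝ | 0 ≤ s ∧ i ≤ A₁ s} < t := by have := hη i hi; linarith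
  obtain ⟨s₀, hs₀, hs₀t⟩ := exists_lt_of_csInf_lt hne hτlt
  have hs₀' : i ≤ A₂ s₀ := by rw [← hag s₀ hs₀.1 hs₀t]; exact hs₀.2
  have hle : i ≤ A₂ t := le_trans hs₀' (hm₂ hs₀.1 ht hs₀t.le)
  have hτeq : entryTime A₂ i = entryTime A₁ i := by
    unfold entryTime
    rw [sInf_inter_Iio hbd₂ ⟨hs₀.1, hs₀'⟩ hs₀t, sInf_inter_Iio hbd hs₀ hs₀t]
    congr 1
    ext x
    simp only [Set.mem_inter_iff, Set.mem_setOf_eq, Set.mem_Iio]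
    constructor
    · rintro ⟨⟨hx0, hxi⟩, hxt⟩; exact ⟨⟨hx0, by rwa [hag x hx0 hxt]⟩, hxt⟩
    · rintro ⟨⟨hx0, hxi⟩, hxt⟩; exact ⟨⟨hx0, by rwa [← hag x hx0 hxt]⟩, hxt⟩
  exact ⟨hle, by rwa [hτeq]⟩

lemma key_sum {t : ℝ} (ht : 0 ≤ t) {η : ℕ → ℝ} (hη : ∀ i, 1 ≤ i → 0 < η i)
    {A₁ A₂ : ℝ → ℕ} (hm₁ : MonotoneOn A₁ (Set.Ici 0)) (hm₂ : MonotoneOn A₂ (Set.Ici 0))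
    (hag : ∀ s, 0 ≤ s → s < t → A₁ s = A₂ s) :
    ∑ i ∈ Finset.Icc 1 (A₁ t), (if entryTime A₁ i + η i ≤ t then (1:ℤ) else 0)
      = ∑ i ∈ Finset.Icc 1 (A₂ t), (if entryTime A₂ i + η i ≤ t then (1:ℤ) else 0) := by
  classical
  have hag' : ∀ s, 0 ≤ s → s < t → A₂ s = A₁ s := fun s h1 h2 => (hag s h1 h2).symm
  have hset : (Finset.Icc 1 (A₁ t)).filter (fun i => entryTime A₁ i + η i ≤ t)
      = (Finset.Icc 1 (A₂ t)).filter (fun i => entryTime A₂ i + η i ≤ t) := by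
    ext i
    simp only [Finset.mem_filter, Finset.mem_Icc]
    constructor
    · rintro ⟨⟨h1, h2⟩, h3⟩
      obtain ⟨ha, hb⟩ := key_mem ht hη hm₂ hag h1 h2 h3
      exact ⟨⟨h1, ha⟩, hb⟩
    · rintro ⟨⟨h1, h2⟩, h3⟩
      obtain ⟨ha, hb⟩ := key_mem ht hη hm₁ hag' h1 h2 h3
      exact ⟨⟨h1, ha⟩, hb⟩
  rw [Finset.sum_boole, Finset.sum_boole, hset]

/-- Uniqueness of solutions to the many-server queue equations when all service times are
positive (Lemma A.1, uniqueness part). -/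
theorem manyServerQueue_equations_unique
    (n : ℕ) (hn : 1 ≤ n)
    (E : ℝ → ℕ) (hEmono : MonotoneOn E (Set.Ici 0)) (hErcll : NatRCLL E)
    (Q₀ : ℕ) (η η' : ℕ → ℝ)
    (hη : ∀ i, 1 ≤ i → 0 < η i) (hη' : ∀ i, 1 ≤ i → 0 ≤ η' i)
    (Q₁ A₁ Q₂ A₂ : ℝ → ℕ)
    (h₁ : SolvesQueue n E Q₀ η η' Q₁ A₁) (h₂ : SolvesQueue n E Q₀ η η' Q₂ A₂) :
    ∀ t ≥ (0 : ℝ), Q₁ t = Q₂ t ∧ A₁ t = A₂ t := by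
  classical
  obtain ⟨hQ₁, hA₁, hm₁, heq₁⟩ := h₁
  obtain ⟨hQ₂, hA₂, hm₂, heq₂⟩ := h₂
  by_contra hcon
  push_neg at hcon
  obtain ⟨t₀, ht₀, hbad⟩ := hcon
  set B : Set ℝ := {t : ℝ | 0 ≤ t ∧ ¬(Q₁ t = Q₂ t ∧ A₁ t = A₂ t)} with hB
  have hBne : B.Nonempty := ⟨t₀, ht₀, fun h => hbad h.1 h.2⟩
  have hBbd : BddBelow B := ⟨0, fun x hx => hx.1⟩
  set T : ℝ := sInf B with hTdef
  have hT0 : 0 ≤ T := le_csInf hBne (fun x hx => hx.1)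
  have hagree : ∀ s, 0 ≤ s → s < T → Q₁ s = Q₂ s ∧ A₁ s = A₂ s := by
    intro s hs hsT
    by_contra h
    exact absurd (csInf_le hBbd ⟨hs, h⟩) (not_le.mpr hsT)
  -- agreement at T
  have hDT := key_sum hT0 hη hm₁ hm₂ (fun s hs h => (hagree s hs h).2)
  have hQT : Q₁ T = Q₂ T := by
    have : (Q₁ T : ℤ) = (Q₂ T : ℤ) := by
      rw [(heq₁ T hT0).1, (heq₂ T hT0).1, hDT]
    exact_mod_cast this
  have hAT : A₁ T = A₂ T := by
    have : (A₁ T : ℤ) = (A₂ T : ℤ) := by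
      rw [(heq₁ T hT0).2, (heq₂ T hT0).2, hQT]
    exact_mod_cast this
  -- right-constancy beyond T
  have hev : ∀ᶠ s in nhdsWithin T (Set.Ici T),
      Q₁ s = Q₁ T ∧ Q₂ s = Q₂ T ∧ A₁ s = A₁ T ∧ A₂ s = A₂ T :=
    ((hQ₁.1 T hT0).and ((hQ₂.1 T hT0).and ((hA₁.1 T hT0).and (hA₂.1 T hT0))))
  obtain ⟨u, hu, hsub⟩ := mem_nhdsGE_iff_exists_Ico_subset.1 hev
  have hTu : T < u := hu
  have : u ≤ T := by
    refine le_csInf hBne ?_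
    intro x hx
    by_contra hxu
    push_neg at hxu
    rcases lt_or_ge x T with hxT | hxT
    · exact hx.2 (hagree x hx.1 hxT)
    · have hc := hsub ⟨hxT, hxu⟩
      exact hx.2 ⟨by rw [hc.1, hQT, ← hc.2.1], by rw [hc.2.2.1, hAT, ← hc.2.2.2]⟩
  linarith
end

section
/- Let B be a distribution function of a nonnegative random variable with B(0) < 1, let T > 0, let x : [0,T] → ℝ be a bounded Borel function, and let f : ℝ × [0,∞) → ℝ be a Borel function satisfying |f(y,t)| ≤ |y| and |f(y₁,t) − f(y₂,t)| ≤ |y₁ − y₂| for all y, y₁, y₂ ∈ ℝ and t ≥ 0. Then there exists a unique bounded Borel function y : [0,T] → ℝ such that y(t) = x(t) + ∫₀ᵗ f(y(t−s), t−s) dB(s) for all t ∈ [0,T]. -/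
open MeasureTheory Filter Set Topology

/-- `B` is the distribution function of a nonnegative random variable:
it vanishes on the negatives and tends to `1` at infinity.  (As a `StieltjesFunction`
it is already nondecreasing and right-continuous; its Lebesgue–Stieltjes measure
`B.measure` assigns mass `B 0` to `{0}` and mass `B b - B a` to `(a, b]`.) -/
def IsNNDistFun (B : StieltjesFunction ℝ) : Prop :=
  (∀ x < (0 : ℝ), B x = 0) ∧ Tendsto B atTop (nhds 1)

/-- `y` is a bounded Borel solution on `[0,T]` of the convolution equation
`y(t) = x(t) + ∫₀ᵗ f(y(t-s), t-s) dB(s)`. -/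
def SolvesConv (B : StieltjesFunction ℝ) (T : ℝ) (x : ℝ → ℝ) (f : ℝ → ℝ → ℝ)
    (y : ℝ → ℝ) : Prop :=
  Measurable (fun t : Set.Icc (0 : ℝ) T => y t) ∧
  (∃ C : ℝ, ∀ t ∈ Set.Icc (0 : ℝ) T, |y t| ≤ C) ∧
  ∀ t ∈ Set.Icc (0 : ℝ) T,
    y t = x t + ∫ s in Set.Icc (0 : ℝ) t, f (y (t - s)) (t - s) ∂B.measure

/-- Extension by zero of a function measurable on `Icc 0 T` is measurable. -/
lemma auxMeasIndicator (T : ℝ) {g : ℝ → ℝ}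
    (hg : Measurable fun t : Set.Icc (0 : ℝ) T => g t) :
    Measurable ((Set.Icc (0 : ℝ) T).indicator g) := by
  have heq : (Set.Icc (0 : ℝ) T).indicator g =
      Function.extend (Subtype.val : Set.Icc (0 : ℝ) T → ℝ)
        (fun t : Set.Icc (0 : ℝ) T => g t) (fun _ => 0) := by
    ext u
    by_cases h : u ∈ Set.Icc (0 : ℝ) T
    · rw [Set.indicator_of_mem h]
      have : u = ((⟨u, h⟩ : Set.Icc (0 : ℝ) T) : ℝ) := rfl
      rw [this, Subtype.val_injective.extend_apply]
    · rw [Set.indicator_of_notMem h, Function.extend_apply']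
      rintro ⟨a, rfl⟩
      exact h a.2
  rw [heq]
  exact (MeasurableEmbedding.subtype_coe measurableSet_Icc).measurable_extend hg
    measurable_const

/-- A measurable function bounded on `Icc 0 t` is integrable there w.r.t. `B.measure`. -/
lemma auxIntegrableOn (B : StieltjesFunction ℝ) (t : ℝ) {h : ℝ → ℝ} (hh : Measurable h)
    (c : ℝ) (hbd : ∀ s ∈ Set.Icc (0 : ℝ) t, |h s| ≤ c) :
    IntegrableOn h (Set.Icc (0 : ℝ) t) B.measure := by
  haveI : Fact (B.measure (Set.Icc (0 : ℝ) t) < ⊤) :=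
    ⟨isCompact_Icc.measure_lt_top⟩
  refine Integrable.mono' (integrable_const c) hh.aestronglyMeasurable ?_
  filter_upwards [ae_restrict_mem measurableSet_Icc] with s hs
  simpa using hbd s hs

/-- Key contraction estimate. -/
lemma auxKeyEst (B : StieltjesFunction ℝ) (t lam q D : ℝ) (hlam : 0 ≤ lam) (hD : 0 ≤ D)
    (ht : 0 ≤ t)
    (hI : ∫ s in Set.Icc (0 : ℝ) t, Real.exp (-(lam * s)) ∂B.measure ≤ q)
    {g : ℝ → ℝ} (hg : Measurable g)
    (hbd : ∀ u ∈ Set.Icc (0 : ℝ) t, |g u| ≤ D * Real.exp (lam * u)) :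
    |∫ s in Set.Icc (0 : ℝ) t, g (t - s) ∂B.measure| ≤ D * Real.exp (lam * t) * q := by
  have hgm : Measurable fun s : ℝ => g (t - s) := hg.comp (measurable_const.sub measurable_id)
  have hmem : ∀ s ∈ Set.Icc (0 : ℝ) t, t - s ∈ Set.Icc (0 : ℝ) t := by
    intro s hs; exact ⟨by linarith [hs.2], by linarith [hs.1]⟩
  have hbd' : ∀ s ∈ Set.Icc (0 : ℝ) t, |g (t - s)| ≤ D * Real.exp (lam * (t - s)) :=
    fun s hs => hbd _ (hmem s hs)
  have hint1 : IntegrableOn (fun s => g (t - s)) (Set.Icc (0 : ℝ) t) B.measure := by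
    refine auxIntegrableOn B t hgm (D * Real.exp (lam * t)) ?_
    intro s hs
    refine (hbd' s hs).trans ?_
    have : Real.exp (lam * (t - s)) ≤ Real.exp (lam * t) :=
      Real.exp_le_exp.2 (by nlinarith [hs.1])
    nlinarith
  have hint2 : IntegrableOn (fun s => D * Real.exp (lam * (t - s))) (Set.Icc (0 : ℝ) t)
      B.measure := by
    refine auxIntegrableOn B t (measurable_const.mul ((measurable_const.sub measurable_id).const_mul lam).exp) (D * Real.exp (lam * t)) ?_
    intro s hs
    have h1 : Real.exp (lam * (t - s)) ≤ Real.exp (lam * t) :=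
      Real.exp_le_exp.2 (by nlinarith [hs.1])
    rw [abs_of_nonneg (by positivity)]
    nlinarith
  calc |∫ s in Set.Icc (0 : ℝ) t, g (t - s) ∂B.measure|
      ≤ ∫ s in Set.Icc (0 : ℝ) t, |g (t - s)| ∂B.measure := by simpa [Real.norm_eq_abs] using norm_integral_le_integral_norm (μ := B.measure.restrict (Set.Icc (0:ℝ) t)) fun s => g (t - s)
    _ ≤ ∫ s in Set.Icc (0 : ℝ) t, D * Real.exp (lam * (t - s)) ∂B.measure := by
        refine setIntegral_mono_on hint1.abs hint2 measurableSet_Icc ?_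
        intro s hs; exact hbd' s hs
    _ = (D * Real.exp (lam * t)) * ∫ s in Set.Icc (0 : ℝ) t,
          Real.exp (-(lam * s)) ∂B.measure := by
        rw [← integral_const_mul]
        refine setIntegral_congr_fun measurableSet_Icc fun s _ => ?_
        rw [mul_assoc, ← Real.exp_add]
        ring_nf
    _ ≤ (D * Real.exp (lam * t)) * q := by
        refine mul_le_mul_of_nonneg_left hI (by positivity)

lemma auxMeasSel (B : StieltjesFunction ℝ) (hBneg : ∀ x < (0 : ℝ), B x = 0) (hB0 : B 0 < 1)
    (T : ℝ) (hT : 0 < T) :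
    ∃ lam : ℝ, 0 ≤ lam ∧ ∀ t, 0 ≤ t → t ≤ T →
      ∫ s in Set.Icc (0 : ℝ) t, Real.exp (-(lam * s)) ∂B.measure ≤ (1 + B 0) / 2 := by
  have hB0' : 0 ≤ B 0 := by
    have := hBneg (-1) (by norm_num)
    linarith [B.mono (show (-1 : ℝ) ≤ 0 by norm_num)]
  -- the measure of {0} is B 0
  have hsing : B.measure {(0 : ℝ)} = ENNReal.ofReal (B 0) := by
    rw [B.measure_singleton]
    congr 1
    have hll : Function.leftLim B 0 = 0 := by
      refine leftLim_eq_of_tendsto ?_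
      have : (fun x => B x) =ᶠ[𝓝[<] (0 : ℝ)] fun _ => 0 := by
        filter_upwards [self_mem_nhdsWithin] with x hx
        exact hBneg x hx
      exact Tendsto.congr' this.symm tendsto_const_nhds
    rw [hll, sub_zero]
  haveI : Fact (B.measure (Set.Ioc (0 : ℝ) T) < ⊤) := by
    constructor
    rw [B.measure_Ioc]
    exact ENNReal.ofReal_lt_top
  -- the integral over Ioc 0 T tends to 0
  have htend : Tendsto (fun n : ℕ => ∫ s in Set.Ioc (0 : ℝ) T,
      Real.exp (-((n : ℝ) * s)) ∂B.measure) atTop (𝓝 0) := by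
    have key : Tendsto (fun n : ℕ => ∫ s in Set.Ioc (0 : ℝ) T,
        Real.exp (-((n : ℝ) * s)) ∂B.measure) atTop
        (𝓝 (∫ s in Set.Ioc (0 : ℝ) T, (0 : ℝ) ∂B.measure)) := by
      refine tendsto_integral_of_dominated_convergence
          (F := fun (n : ℕ) (s : ℝ) => Real.exp (-((n : ℝ) * s))) (f := fun _ => (0 : ℝ))
          (μ := B.measure.restrict (Set.Ioc (0 : ℝ) T)) (fun _ => (1 : ℝ)) ?_ ?_ ?_ ?_
      · intro n
        exact (Continuous.aestronglyMeasurable (by continuity))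
      · exact integrable_const 1
      · intro n
        filter_upwards [ae_restrict_mem measurableSet_Ioc] with s hs
        rw [Real.norm_eq_abs, abs_of_nonneg (Real.exp_pos _).le]
        exact Real.exp_le_one_iff.2 (by nlinarith [hs.1, Nat.cast_nonneg (α := ℝ) n])
      · filter_upwards [ae_restrict_mem measurableSet_Ioc] with s hs
        have h1 : Tendsto (fun n : ℕ => -((n : ℝ) * s)) atTop atBot := by
          have := (tendsto_natCast_atTop_atTop (R := ℝ)).atTop_mul_const hs.1
          exact tendsto_neg_atBot_iff.2 this
        exact Real.tendsto_exp_atBot.comp h1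
    simpa using key
  have hev : ∀ᶠ n : ℕ in atTop, (∫ s in Set.Ioc (0 : ℝ) T,
      Real.exp (-((n : ℝ) * s)) ∂B.measure) < (1 - B 0) / 2 :=
    htend.eventually (gt_mem_nhds (by linarith))
  obtain ⟨n, hn⟩ := hev.exists
  refine ⟨(n : ℝ), Nat.cast_nonneg n, ?_⟩
  intro t ht0 htT
  have hintT : IntegrableOn (fun s => Real.exp (-((n : ℝ) * s))) (Set.Icc (0 : ℝ) T)
      B.measure := by
    refine auxIntegrableOn B T (((measurable_id.const_mul ((n:ℝ))).neg).exp) 1 ?_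
    intro s hs
    rw [abs_of_nonneg (Real.exp_pos _).le]
    exact Real.exp_le_one_iff.2 (by nlinarith [hs.1, Nat.cast_nonneg (α := ℝ) n])
  have hmono : ∫ s in Set.Icc (0 : ℝ) t, Real.exp (-((n : ℝ) * s)) ∂B.measure ≤
      ∫ s in Set.Icc (0 : ℝ) T, Real.exp (-((n : ℝ) * s)) ∂B.measure := by
    refine setIntegral_mono_set hintT ?_ ?_
    · filter_upwards with s using (Real.exp_pos _).le
    · exact (Set.Icc_subset_Icc le_rfl htT).eventuallyLE
  have hsplit : Set.Icc (0 : ℝ) T = {(0 : ℝ)} ∪ Set.Ioc (0 : ℝ) T := by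
    rw [← Set.Icc_self (0 : ℝ), Set.Icc_union_Ioc_eq_Icc le_rfl hT.le]
  have hdisj : Disjoint ({(0 : ℝ)} : Set ℝ) (Set.Ioc (0 : ℝ) T) := by
    simp [Set.disjoint_singleton_left]
  have hval : ∫ s in Set.Icc (0 : ℝ) T, Real.exp (-((n : ℝ) * s)) ∂B.measure =
      B 0 + ∫ s in Set.Ioc (0 : ℝ) T, Real.exp (-((n : ℝ) * s)) ∂B.measure := by
    rw [hsplit, setIntegral_union hdisj measurableSet_Ioc
      (hintT.mono_set (by rw [hsplit]; exact Set.subset_union_left))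
      (hintT.mono_set (by rw [hsplit]; exact Set.subset_union_right))]
    congr 1
    rw [integral_singleton, measureReal_def, hsing]
    simp [ENNReal.toReal_ofReal hB0']
  calc ∫ s in Set.Icc (0 : ℝ) t, Real.exp (-((n : ℝ) * s)) ∂B.measure
      ≤ ∫ s in Set.Icc (0 : ℝ) T, Real.exp (-((n : ℝ) * s)) ∂B.measure := hmono
    _ ≤ B 0 + (1 - B 0) / 2 := by rw [hval]; linarith
    _ ≤ (1 + B 0) / 2 := by linarith

lemma auxPhiMeas (B : StieltjesFunction ℝ) {F : ℝ → ℝ} (hF : Measurable F) :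
    Measurable fun t : ℝ => ∫ s in Set.Icc (0 : ℝ) t, F (t - s) ∂B.measure := by
  have hK : Measurable fun p : ℝ × ℝ =>
      Set.indicator {q : ℝ × ℝ | 0 ≤ q.2 ∧ q.2 ≤ q.1} (fun q => F (q.1 - q.2)) p := by
    refine Measurable.indicator (hF.comp (measurable_fst.sub measurable_snd)) ?_
    exact (measurableSet_le measurable_const measurable_snd).inter
      (measurableSet_le measurable_snd measurable_fst)
  have := (Measurable.stronglyMeasurable hK).integral_prod_right'
    (ν := B.measure)
  have heq : (fun t : ℝ => ∫ s in Set.Icc (0 : ℝ) t, F (t - s) ∂B.measure) =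
      fun t : ℝ => ∫ s, Set.indicator {q : ℝ × ℝ | 0 ≤ q.2 ∧ q.2 ≤ q.1}
        (fun q => F (q.1 - q.2)) (t, s) ∂B.measure := by
    funext t
    rw [← integral_indicator measurableSet_Icc]
    congr 1
  rw [heq]
  exact this.measurable


set_option maxHeartbeats 4000000 in
/-- Existence and uniqueness of bounded Borel solutions of the convolution equation
(Lemma B.1, existence and uniqueness part). -/
theorem convolutionEquation_existsUnique
    (B : StieltjesFunction ℝ) (hB : IsNNDistFun B) (hB0 : B 0 < 1)
    (T : ℝ) (hT : 0 < T)
    (x : ℝ → ℝ) (hxm : Measurable (fun t : Set.Icc (0 : ℝ) T => x t))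
    (hxb : ∃ C : ℝ, ∀ t ∈ Set.Icc (0 : ℝ) T, |x t| ≤ C)
    (f : ℝ → ℝ → ℝ) (hfm : Measurable (Function.uncurry f))
    (hf1 : ∀ (y t : ℝ), 0 ≤ t → |f y t| ≤ |y|)
    (hf2 : ∀ (y₁ y₂ t : ℝ), 0 ≤ t → |f y₁ t - f y₂ t| ≤ |y₁ - y₂|) :
    (∃ y : ℝ → ℝ, SolvesConv B T x f y) ∧
    ∀ y₁ y₂ : ℝ → ℝ, SolvesConv B T x f y₁ → SolvesConv B T x f y₂ →
      ∀ t ∈ Set.Icc (0 : ℝ) T, y₁ t = y₂ t := by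
  obtain ⟨hBneg, _⟩ := hB
  have hB0' : 0 ≤ B 0 := by
    have h1 := hBneg (-1) (by norm_num)
    linarith [B.mono (show (-1 : ℝ) ≤ 0 by norm_num)]
  obtain ⟨lam, hlam, hI⟩ := auxMeasSel B hBneg hB0 T hT
  set q : ℝ := (1 + B 0) / 2 with hqdef
  have hq0 : 0 ≤ q := by positivity
  have hq1 : q < 1 := by rw [hqdef]; linarith
  -- the weight function
  set expo : ℝ → ℝ := fun u => Real.exp (lam * u) with hexpodef
  have hexpo1 : ∀ u : ℝ, 0 ≤ u → 1 ≤ expo u := fun u hu =>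
    Real.one_le_exp (by positivity)
  have hexpomono : ∀ u v : ℝ, u ≤ v → expo u ≤ expo v := fun u v huv =>
    Real.exp_le_exp.2 (by nlinarith)
  have hexpopos : ∀ u : ℝ, 0 < expo u := fun u => Real.exp_pos _
  -- measurability of composed integrands
  have compM : ∀ {g : ℝ → ℝ}, Measurable g → Measurable (fun w => f (g w) w) :=
    fun hg => hfm.comp (hg.prodMk measurable_id)
  -- integrability of the convolution integrands
  have hintf : ∀ (u : ℝ → ℝ), Measurable u → ∀ t M : ℝ,
      (∀ w ∈ Set.Icc (0 : ℝ) t, |u w| ≤ M) →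
      IntegrableOn (fun s => f (u (t - s)) (t - s)) (Set.Icc (0 : ℝ) t) B.measure := by
    intro u hu t M hM
    refine auxIntegrableOn B t ((compM hu).comp (measurable_const.sub measurable_id)) M ?_
    intro s hs
    exact (hf1 _ _ (by linarith [hs.2])).trans
      (hM _ ⟨by linarith [hs.2], by linarith [hs.1]⟩)
  -- the master contraction estimate
  have hstep : ∀ (u v : ℝ → ℝ), Measurable u → Measurable v → ∀ t ∈ Set.Icc (0 : ℝ) T,
      ∀ Mu Mv E : ℝ, 0 ≤ E →
      (∀ w ∈ Set.Icc (0 : ℝ) t, |u w| ≤ Mu) →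
      (∀ w ∈ Set.Icc (0 : ℝ) t, |v w| ≤ Mv) →
      (∀ w ∈ Set.Icc (0 : ℝ) t, |u w - v w| ≤ E * expo w) →
      |(∫ s in Set.Icc (0 : ℝ) t, f (u (t - s)) (t - s) ∂B.measure) -
        ∫ s in Set.Icc (0 : ℝ) t, f (v (t - s)) (t - s) ∂B.measure| ≤ E * expo t * q := by
    intro u v hu hv t ht Mu Mv E hE hMu hMv hbd
    rw [← integral_sub (hintf u hu t Mu hMu) (hintf v hv t Mv hMv)]
    exact auxKeyEst B t lam q E hlam hE ht.1 (hI t ht.1 ht.2)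
      ((compM hu).sub (compM hv))
      (fun w hw => (hf2 _ _ _ hw.1).trans (hbd w hw))
  -- the data, extended by zero
  obtain ⟨Cx₀, hCx₀⟩ := hxb
  set Cx : ℝ := max Cx₀ 0 with hCxdef
  have hCx0 : 0 ≤ Cx := le_max_right _ _
  set xE : ℝ → ℝ := (Set.Icc (0 : ℝ) T).indicator x with hxEdef
  have hxE : Measurable xE := auxMeasIndicator T hxm
  have hxEbd : ∀ u : ℝ, |xE u| ≤ Cx := by
    intro u
    by_cases h : u ∈ Set.Icc (0 : ℝ) T
    · rw [hxEdef, Set.indicator_of_mem h]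
      exact (hCx₀ u h).trans (le_max_left _ _)
    · rw [hxEdef, Set.indicator_of_notMem h, abs_zero]; exact hCx0
  have hxEeq : ∀ u ∈ Set.Icc (0 : ℝ) T, xE u = x u := fun u hu =>
    Set.indicator_of_mem hu x
  -- Picard iteration
  set Φ : (ℝ → ℝ) → ℝ → ℝ := fun g t =>
    xE t + ∫ s in Set.Icc (0 : ℝ) t, f (g (t - s)) (t - s) ∂B.measure with hΦdef
  have hΦMeas : ∀ {g : ℝ → ℝ}, Measurable g → Measurable (Φ g) := fun hg =>
    hxE.add (auxPhiMeas B (compM hg))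
  set seq : ℕ → ℝ → ℝ := fun n => Φ^[n] xE with hseqdef
  have hseq : ∀ n, seq (n + 1) = Φ (seq n) := fun n =>
    Function.iterate_succ_apply' Φ n xE
  have hseqM : ∀ n, Measurable (seq n) := by
    intro n
    induction n with
    | zero => exact hxE
    | succ n ih => rw [hseq n]; exact hΦMeas ih
  -- uniform geometric bounds on the iterates
  set D : ℝ := Cx / (1 - q) with hDdef
  have h1q : (0 : ℝ) < 1 - q := by linarith
  have hD0 : 0 ≤ D := by
    rw [hDdef]; exact div_nonneg hCx0 h1q.le
  have hDq : D * (1 - q) = Cx := by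
    rw [hDdef]; field_simp
  have hCxD : Cx + q * D = D := by nlinarith [hDq]
  have hCxleD : Cx ≤ D := by nlinarith [hDq]
  have hbd : ∀ n, ∀ u ∈ Set.Icc (0 : ℝ) T, |seq n u| ≤ D * expo u := by
    intro n
    induction n with
    | zero =>
      intro u hu
      calc |seq 0 u| = |xE u| := rfl
        _ ≤ Cx := hxEbd u
        _ ≤ D := hCxleD
        _ ≤ D * expo u := by nlinarith [hexpo1 u hu.1, hexpopos u]
    | succ n ih =>
      intro t ht
      have key : |∫ s in Set.Icc (0 : ℝ) t, f (seq n (t - s)) (t - s) ∂B.measure| ≤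
          D * expo t * q := by
        refine auxKeyEst B t lam q D hlam hD0 ht.1 (hI t ht.1 ht.2) (compM (hseqM n)) ?_
        intro w hw
        exact (hf1 _ _ hw.1).trans (ih w ⟨hw.1, hw.2.trans ht.2⟩)
      have h1 : |seq (n + 1) t| ≤ Cx +
          |∫ s in Set.Icc (0 : ℝ) t, f (seq n (t - s)) (t - s) ∂B.measure| := by
        rw [hseq n]
        exact (abs_add_le _ _).trans (add_le_add_left (hxEbd t) _)
      have h2 : Cx + D * expo t * q ≤ D * expo t := by
        nlinarith [hexpo1 t ht.1, hexpopos t]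
      linarith
  -- geometric decay of successive differences
  have hdiff : ∀ n, ∀ t ∈ Set.Icc (0 : ℝ) T,
      |seq (n + 1) t - seq n t| ≤ (2 * D) * q ^ n * expo t := by
    intro n
    induction n with
    | zero =>
      intro t ht
      calc |seq 1 t - seq 0 t| ≤ |seq 1 t| + |seq 0 t| := abs_sub _ _
        _ ≤ D * expo t + D * expo t := add_le_add (hbd 1 t ht) (hbd 0 t ht)
        _ = (2 * D) * q ^ 0 * expo t := by ring
    | succ n ih =>
      intro t ht
      have heq2 : seq (n + 2) t - seq (n + 1) t =
          (∫ s in Set.Icc (0 : ℝ) t, f (seq (n + 1) (t - s)) (t - s) ∂B.measure) -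
          ∫ s in Set.Icc (0 : ℝ) t, f (seq n (t - s)) (t - s) ∂B.measure := by
        rw [hseq (n + 1), hseq n]; simp [hΦdef]
      rw [heq2]
      have := hstep (seq (n + 1)) (seq n) (hseqM (n + 1)) (hseqM n) t ht
        (D * expo T) (D * expo T) ((2 * D) * q ^ n) (by positivity)
        (fun w hw => (hbd (n + 1) w ⟨hw.1, hw.2.trans ht.2⟩).trans
          (by nlinarith [hexpomono w T (hw.2.trans ht.2)]))
        (fun w hw => (hbd n w ⟨hw.1, hw.2.trans ht.2⟩).trans
          (by nlinarith [hexpomono w T (hw.2.trans ht.2)]))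
        (fun w hw => ih w ⟨hw.1, hw.2.trans ht.2⟩)
      calc |(∫ s in Set.Icc (0 : ℝ) t, f (seq (n + 1) (t - s)) (t - s) ∂B.measure) -
          ∫ s in Set.Icc (0 : ℝ) t, f (seq n (t - s)) (t - s) ∂B.measure| ≤
          ((2 * D) * q ^ n) * expo t * q := this
        _ = (2 * D) * q ^ (n + 1) * expo t := by ring
  -- the sequences are Cauchy
  have hcaudist : ∀ t ∈ Set.Icc (0 : ℝ) T, ∀ n,
      dist (seq n t) (seq (n + 1) t) ≤ (2 * D * expo t) * q ^ n := by
    intro t ht n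
    rw [Real.dist_eq, abs_sub_comm]
    calc |seq (n + 1) t - seq n t| ≤ (2 * D) * q ^ n * expo t := hdiff n t ht
      _ = (2 * D * expo t) * q ^ n := by ring
  have hcau : ∀ t ∈ Set.Icc (0 : ℝ) T, CauchySeq (fun n => seq n t) := fun t ht =>
    cauchySeq_of_le_geometric q (2 * D * expo t) hq1 (hcaudist t ht)
  -- the limit function
  set y0 : ℝ → ℝ := fun t => limUnder atTop (fun n => seq n t) with hy0def
  have htendy : ∀ t ∈ Set.Icc (0 : ℝ) T,
      Tendsto (fun n => seq n t) atTop (𝓝 (y0 t)) := fun t ht =>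
    (hcau t ht).tendsto_limUnder
  have hy0meas : Measurable (fun t : Set.Icc (0 : ℝ) T => y0 t) := by
    refine measurable_of_tendsto_metrizable
      (f := fun n => fun t : Set.Icc (0 : ℝ) T => seq n t)
      (fun n => (hseqM n).comp measurable_subtype_coe) ?_
    exact tendsto_pi_nhds.2 fun t => htendy t t.2
  set yE : ℝ → ℝ := (Set.Icc (0 : ℝ) T).indicator y0 with hyEdef
  have hyE : Measurable yE := auxMeasIndicator T hy0meas
  have hyEeq : ∀ u ∈ Set.Icc (0 : ℝ) T, yE u = y0 u := fun u hu =>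
    Set.indicator_of_mem hu y0
  have htendyE : ∀ t ∈ Set.Icc (0 : ℝ) T,
      Tendsto (fun n => seq n t) atTop (𝓝 (yE t)) := fun t ht =>
    (hyEeq t ht).symm ▸ htendy t ht
  -- error bound for the approximation
  have herr : ∀ n, ∀ t ∈ Set.Icc (0 : ℝ) T,
      |yE t - seq n t| ≤ (2 * D / (1 - q)) * q ^ n * expo t := by
    intro n t ht
    have h := dist_le_of_le_geometric_of_tendsto q (2 * D * expo t) hq1
      (hcaudist t ht) (htendyE t ht) n
    rw [dist_comm, Real.dist_eq] at h
    calc |yE t - seq n t| ≤ (2 * D * expo t) * q ^ n / (1 - q) := h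
      _ = (2 * D / (1 - q)) * q ^ n * expo t := by ring
  -- uniform bound of the limit
  have hbdy : ∀ t ∈ Set.Icc (0 : ℝ) T, |yE t| ≤ D * expo t := by
    intro t ht
    refine le_of_tendsto ((htendyE t ht).abs) (Eventually.of_forall fun n => hbd n t ht)
  -- the limit satisfies the equation
  have heqn : ∀ t ∈ Set.Icc (0 : ℝ) T,
      yE t = xE t + ∫ s in Set.Icc (0 : ℝ) t, f (yE (t - s)) (t - s) ∂B.measure := by
    intro t ht
    have ha : Tendsto (fun n => seq (n + 1) t) atTop (𝓝 (yE t)) :=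
      (htendyE t ht).comp (tendsto_add_atTop_nat 1)
    have hb : Tendsto (fun n => seq (n + 1) t) atTop
        (𝓝 (xE t + ∫ s in Set.Icc (0 : ℝ) t, f (yE (t - s)) (t - s) ∂B.measure)) := by
      have hform : ∀ n : ℕ, seq (n + 1) t = xE t +
          ∫ s in Set.Icc (0 : ℝ) t, f (seq n (t - s)) (t - s) ∂B.measure := by
        intro n; rw [hseq n]
      have hIn : Tendsto
          (fun n => ∫ s in Set.Icc (0 : ℝ) t, f (seq n (t - s)) (t - s) ∂B.measure)
          atTop (𝓝 (∫ s in Set.Icc (0 : ℝ) t, f (yE (t - s)) (t - s) ∂B.measure)) := by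
        rw [tendsto_iff_dist_tendsto_zero]
        have hd : ∀ n : ℕ,
            dist (∫ s in Set.Icc (0 : ℝ) t, f (seq n (t - s)) (t - s) ∂B.measure)
              (∫ s in Set.Icc (0 : ℝ) t, f (yE (t - s)) (t - s) ∂B.measure) ≤
            ((2 * D / (1 - q)) * expo t * q) * q ^ n := by
          intro n
          rw [Real.dist_eq]
          have hst := hstep (seq n) yE (hseqM n) hyE t ht (D * expo T) (D * expo T)
            ((2 * D / (1 - q)) * q ^ n)
            (by have := h1q; positivity)
            (fun w hw => (hbd n w ⟨hw.1, hw.2.trans ht.2⟩).trans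
              (by nlinarith [hexpomono w T (hw.2.trans ht.2)]))
            (fun w hw => (hbdy w ⟨hw.1, hw.2.trans ht.2⟩).trans
              (by nlinarith [hexpomono w T (hw.2.trans ht.2)]))
            (fun w hw => by
              rw [abs_sub_comm]; exact herr n w ⟨hw.1, hw.2.trans ht.2⟩)
          calc |(∫ s in Set.Icc (0 : ℝ) t, f (seq n (t - s)) (t - s) ∂B.measure) -
              ∫ s in Set.Icc (0 : ℝ) t, f (yE (t - s)) (t - s) ∂B.measure| ≤
              ((2 * D / (1 - q)) * q ^ n) * expo t * q := hst
            _ = ((2 * D / (1 - q)) * expo t * q) * q ^ n := by ring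
        refine squeeze_zero (fun n => dist_nonneg) hd ?_
        have hpow := tendsto_pow_atTop_nhds_zero_of_lt_one hq0 hq1
        simpa using hpow.const_mul ((2 * D / (1 - q)) * expo t * q)
      exact Tendsto.congr (fun n => (hform n).symm) (tendsto_const_nhds.add hIn)
    exact tendsto_nhds_unique ha hb
  -- existence
  constructor
  · refine ⟨yE, (hyE.comp measurable_subtype_coe :), ⟨D * expo T, ?_⟩, ?_⟩
    · intro t ht
      exact (hbdy t ht).trans (by nlinarith [hexpomono t T ht.2, hexpopos t, hexpopos T])
    · intro t ht
      rw [← hxEeq t ht]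
      exact heqn t ht
  -- uniqueness
  · intro y₁ y₂ hy₁ hy₂ t ht
    obtain ⟨hm₁, ⟨C₁, hC₁⟩, he₁⟩ := hy₁
    obtain ⟨hm₂, ⟨C₂, hC₂⟩, he₂⟩ := hy₂
    set y₁E : ℝ → ℝ := (Set.Icc (0 : ℝ) T).indicator y₁ with hy₁Edef
    set y₂E : ℝ → ℝ := (Set.Icc (0 : ℝ) T).indicator y₂ with hy₂Edef
    have hmE₁ : Measurable y₁E := auxMeasIndicator T hm₁
    have hmE₂ : Measurable y₂E := auxMeasIndicator T hm₂
    have heqE₁ : ∀ u ∈ Set.Icc (0 : ℝ) T, y₁E u = y₁ u := fun u hu =>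
      Set.indicator_of_mem hu y₁
    have heqE₂ : ∀ u ∈ Set.Icc (0 : ℝ) T, y₂E u = y₂ u := fun u hu =>
      Set.indicator_of_mem hu y₂
    set M : ℝ := max C₁ 0 + max C₂ 0 with hMdef
    have hM0 : 0 ≤ M := add_nonneg (le_max_right _ _) (le_max_right _ _)
    have key : ∀ n : ℕ, ∀ u ∈ Set.Icc (0 : ℝ) T, |y₁ u - y₂ u| ≤ M * q ^ n * expo u := by
      intro n
      induction n with
      | zero =>
        intro u hu
        have h1 : |y₁ u - y₂ u| ≤ M := by
          refine (abs_sub _ _).trans (add_le_add ?_ ?_)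
          · exact (hC₁ u hu).trans (le_max_left _ _)
          · exact (hC₂ u hu).trans (le_max_left _ _)
        calc |y₁ u - y₂ u| ≤ M := h1
          _ ≤ M * q ^ 0 * expo u := by nlinarith [hexpo1 u hu.1, hexpopos u]
      | succ n ih =>
        intro u hu
        have hsub : ∀ s ∈ Set.Icc (0 : ℝ) u, u - s ∈ Set.Icc (0 : ℝ) T :=
          fun s hs => ⟨by linarith [hs.2], by linarith [hs.1, hu.2]⟩
        have hrw₁ : (∫ s in Set.Icc (0 : ℝ) u, f (y₁ (u - s)) (u - s) ∂B.measure) =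
            ∫ s in Set.Icc (0 : ℝ) u, f (y₁E (u - s)) (u - s) ∂B.measure :=
          (setIntegral_congr_fun measurableSet_Icc fun s hs => by
            rw [heqE₁ (u - s) (hsub s hs)]).symm
        have hrw₂ : (∫ s in Set.Icc (0 : ℝ) u, f (y₂ (u - s)) (u - s) ∂B.measure) =
            ∫ s in Set.Icc (0 : ℝ) u, f (y₂E (u - s)) (u - s) ∂B.measure :=
          (setIntegral_congr_fun measurableSet_Icc fun s hs => by
            rw [heqE₂ (u - s) (hsub s hs)]).symm
        have hdiffeq : y₁ u - y₂ u =
            (∫ s in Set.Icc (0 : ℝ) u, f (y₁E (u - s)) (u - s) ∂B.measure) -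
            ∫ s in Set.Icc (0 : ℝ) u, f (y₂E (u - s)) (u - s) ∂B.measure := by
          rw [he₁ u hu, he₂ u hu, hrw₁, hrw₂]; ring
        rw [hdiffeq]
        have hst := hstep y₁E y₂E hmE₁ hmE₂ u hu (max C₁ 0) (max C₂ 0) (M * q ^ n)
          (by positivity)
          (fun w hw => by
            rw [heqE₁ w ⟨hw.1, hw.2.trans hu.2⟩]
            exact (hC₁ w ⟨hw.1, hw.2.trans hu.2⟩).trans (le_max_left _ _))
          (fun w hw => by
            rw [heqE₂ w ⟨hw.1, hw.2.trans hu.2⟩]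
            exact (hC₂ w ⟨hw.1, hw.2.trans hu.2⟩).trans (le_max_left _ _))
          (fun w hw => by
            rw [heqE₁ w ⟨hw.1, hw.2.trans hu.2⟩, heqE₂ w ⟨hw.1, hw.2.trans hu.2⟩]
            exact ih w ⟨hw.1, hw.2.trans hu.2⟩)
        calc |(∫ s in Set.Icc (0 : ℝ) u, f (y₁E (u - s)) (u - s) ∂B.measure) -
            ∫ s in Set.Icc (0 : ℝ) u, f (y₂E (u - s)) (u - s) ∂B.measure| ≤
            (M * q ^ n) * expo u * q := hst
          _ = M * q ^ (n + 1) * expo u := by ring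
    have h0 : Tendsto (fun n : ℕ => M * q ^ n * expo t) atTop (𝓝 0) := by
      have hpow := tendsto_pow_atTop_nhds_zero_of_lt_one hq0 hq1
      simpa using (hpow.const_mul M).mul_const (expo t)
    have hle : |y₁ t - y₂ t| ≤ 0 :=
      ge_of_tendsto h0 (Eventually.of_forall fun n => key n t ht)
    have : |y₁ t - y₂ t| = 0 := le_antisymm hle (abs_nonneg _)
    exact sub_eq_zero.1 (abs_eq_zero.1 this)
end

section
/- Let B be a distribution function of a nonnegative random variable, let T > 0, and let t₀ ∈ (0,T] satisfy B(t₀) < 1. If bounded Borel functions x, y : [0,T] → ℝ satisfy |y(t)| ≤ |x(t)| + ∫₀ᵗ |y(t−s)| dB(s) for all t ∈ [0,T], then sup_{t∈[0,T]} |y(t)| ≤ (Σ_{i=1}^{⌊T/t₀⌋+1} (1 − B(t₀))^{−i}) · sup_{t∈[0,T]} |x(t)|. -/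
open MeasureTheory Filter Set Topology

/-- Gronwall-type bound for the convolution inequality (Lemma B.1, a priori bound). -/
theorem convolutionInequality_bound
    (B : StieltjesFunction ℝ) (hB : IsNNDistFun B)
    (T : ℝ) (hT : 0 < T)
    (t₀ : ℝ) (ht₀ : t₀ ∈ Set.Ioc (0 : ℝ) T) (hBt₀ : B t₀ < 1)
    (x y : ℝ → ℝ)
    (hxm : Measurable (fun t : Set.Icc (0 : ℝ) T => x t))
    (hxb : ∃ C : ℝ, ∀ t ∈ Set.Icc (0 : ℝ) T, |x t| ≤ C)
    (hym : Measurable (fun t : Set.Icc (0 : ℝ) T => y t))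
    (hyb : ∃ C : ℝ, ∀ t ∈ Set.Icc (0 : ℝ) T, |y t| ≤ C)
    (hineq : ∀ t ∈ Set.Icc (0 : ℝ) T,
      |y t| ≤ |x t| + ∫ s in Set.Icc (0 : ℝ) t, |y (t - s)| ∂B.measure) :
    (⨆ t : Set.Icc (0 : ℝ) T, |y t|) ≤
      (∑ i ∈ Finset.Icc 1 (⌊T / t₀⌋₊ + 1), ((1 - B t₀)⁻¹) ^ i) *
        ⨆ t : Set.Icc (0 : ℝ) T, |x t| := by
  obtain ⟨ht₀0, ht₀T⟩ := ht₀
  obtain ⟨Cy, hCy⟩ := hyb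
  obtain ⟨Cx, hCx⟩ := hxb
  haveI : Nonempty (Set.Icc (0:ℝ) T) := ⟨⟨0, le_refl 0, hT.le⟩⟩
  -- basic facts about B
  have hBnn : ∀ a : ℝ, 0 ≤ B a := by
    intro a
    rcases lt_or_ge a 0 with h | h
    · exact (hB.1 a h).ge
    · calc (0:ℝ) = B (-1) := (hB.1 (-1) (by norm_num)).symm
        _ ≤ B a := B.mono (by linarith)
  have hBle1 : ∀ a : ℝ, B a ≤ 1 := fun a => B.mono.ge_of_tendsto hB.2 a
  have hll : Function.leftLim B 0 = 0 := by
    apply leftLim_eq_of_tendsto (h := nhdsLT_neBot (0:ℝ))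
    have : (fun a : ℝ => B a) =ᶠ[𝓝[<] (0:ℝ)] fun _ => (0:ℝ) := by
      filter_upwards [self_mem_nhdsWithin] with a ha
      exact hB.1 a ha
    exact Tendsto.congr' this.symm tendsto_const_nhds
  have h1B : 0 < 1 - B t₀ := by linarith
  set q : ℝ := (1 - B t₀)⁻¹ with hq
  have hq0 : 0 ≤ q := le_of_lt (inv_pos.2 h1B)
  -- the globally defined version of y
  set z : ℝ → ℝ := fun s => y (projIcc 0 T hT.le s) with hzdef
  have hzm : Measurable z := hym.comp continuous_projIcc.measurable
  have hzy : ∀ u ∈ Set.Icc (0:ℝ) T, z u = y u := by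
    intro u hu
    simp only [hzdef, projIcc_of_mem hT.le hu]
  have hzb : ∀ s : ℝ, |z s| ≤ Cy := fun s => hCy _ (projIcc 0 T hT.le s).2
  -- the truncated sup function
  set F : ℕ → Set.Icc (0:ℝ) T → ℝ :=
    fun k t => if (t:ℝ) < (k:ℝ) * t₀ then |y t| else 0 with hF
  have hFval : ∀ (k : ℕ) (u : Set.Icc (0:ℝ) T),
      F k u = if (u:ℝ) < (k:ℝ) * t₀ then |y u| else 0 := fun _ _ => rfl
  have hFnn : ∀ k t, 0 ≤ F k t := by
    intro k t; simp only [hF]; split <;> positivity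
  have hFbdd : ∀ k, BddAbove (Set.range (F k)) := by
    intro k
    refine ⟨max Cy 0, ?_⟩
    rintro _ ⟨t, rfl⟩
    simp only [hF]
    split
    · exact le_max_of_le_left (hCy _ t.2)
    · exact le_max_right _ _
  set M : ℕ → ℝ := fun k => ⨆ t, F k t with hM
  have hFleM : ∀ k t, F k t ≤ M k := fun k t => le_ciSup (hFbdd k) t
  have hMnn : ∀ k, 0 ≤ M k := fun k =>
    le_trans (hFnn k ⟨0, le_refl 0, hT.le⟩) (hFleM k _)
  have hxbdd : BddAbove (Set.range fun t : Set.Icc (0:ℝ) T => |x t|) := by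
    refine ⟨Cx, ?_⟩; rintro _ ⟨t, rfl⟩; exact hCx _ t.2
  set X : ℝ := ⨆ t : Set.Icc (0:ℝ) T, |x t| with hX
  have hxleX : ∀ t : Set.Icc (0:ℝ) T, |x t| ≤ X := fun t => le_ciSup hxbdd t
  have hXnn : 0 ≤ X := le_trans (abs_nonneg _) (hxleX ⟨0, le_refl 0, hT.le⟩)
  -- the key step inequality
  have hstep : ∀ k : ℕ, M (k + 1) ≤ X + B t₀ * M (k + 1) + M k := by
    intro k
    refine ciSup_le fun t => ?_
    simp only [hF]
    split
    case isFalse => nlinarith [hXnn, hMnn k, hMnn (k+1), hBnn t₀]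
    case isTrue h2 =>
      by_cases h1 : (t:ℝ) < (k:ℝ) * t₀
      · have : |y t| ≤ M k := by
          have := hFleM k t
          rwa [hFval, if_pos h1] at this
        nlinarith [hMnn (k+1), hBnn t₀]
      push_neg at h1
      -- the nontrivial case : k * t₀ ≤ t < (k+1) * t₀
      obtain ⟨ht0, htT⟩ := t.2
      set tr : ℝ := (t : ℝ)
      set c : ℝ := tr - (k:ℝ) * t₀ with hc
      have hkt₀ : 0 ≤ (k:ℝ) * t₀ := by positivity
      have hc0 : 0 ≤ c := by simp only [hc]; linarith
      have hct : c ≤ tr := by simp only [hc]; linarith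
      have hct₀ : c ≤ t₀ := by
        push_cast at h2; simp only [hc]; nlinarith
      have hiy := hineq tr t.2
      -- rewrite with z
      have hmem : ∀ s ∈ Set.Icc (0:ℝ) tr, tr - s ∈ Set.Icc (0:ℝ) T := by
        rintro s ⟨hs0, hs1⟩
        exact ⟨by linarith, by linarith⟩
      have hcong : ∫ s in Set.Icc (0:ℝ) tr, |y (tr - s)| ∂B.measure
          = ∫ s in Set.Icc (0:ℝ) tr, |z (tr - s)| ∂B.measure := by
        refine setIntegral_congr_fun measurableSet_Icc fun s hs => ?_
        rw [hzy _ (hmem s hs)]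
      rw [hcong] at hiy
      have hsplit : Set.Icc (0:ℝ) tr = Set.Icc 0 c ∪ Set.Ioc c tr :=
        (Set.Icc_union_Ioc_eq_Icc hc0 hct).symm
      have hdisj : Disjoint (Set.Icc (0:ℝ) c) (Set.Ioc c tr) := by
        apply Set.disjoint_left.2
        rintro s ⟨_, hs1⟩ ⟨hs2, _⟩
        exact absurd hs1 (not_le.2 hs2)
      have hgm : AEStronglyMeasurable (fun s => |z (tr - s)|) B.measure :=
        ((hzm.comp (measurable_const.sub measurable_id)).abs).aestronglyMeasurable
      have hint : ∀ A : Set ℝ, B.measure A ≠ ⊤ →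
          IntegrableOn (fun s => |z (tr - s)|) A B.measure := by
        intro A hA
        exact Measure.integrableOn_of_bounded hA hgm
          (ae_of_all _ fun s => by
            simpa [Real.norm_eq_abs, abs_abs] using hzb (tr - s))
      have hfin1 : B.measure (Set.Icc (0:ℝ) c) < ⊤ := by
        rw [B.measure_Icc]; exact ENNReal.ofReal_lt_top
      have hfin2 : B.measure (Set.Ioc c tr) < ⊤ := by
        rw [B.measure_Ioc]; exact ENNReal.ofReal_lt_top
      have hunion : ∫ s in Set.Icc (0:ℝ) tr, |z (tr - s)| ∂B.measure
          = (∫ s in Set.Icc (0:ℝ) c, |z (tr - s)| ∂B.measure)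
            + ∫ s in Set.Ioc c tr, |z (tr - s)| ∂B.measure := by
        rw [hsplit]
        exact setIntegral_union hdisj measurableSet_Ioc (hint _ hfin1.ne) (hint _ hfin2.ne)
      -- bound the first piece
      have hb1 : (∫ s in Set.Icc (0:ℝ) c, |z (tr - s)| ∂B.measure)
          ≤ M (k+1) * B t₀ := by
        have hbd : ∀ s ∈ Set.Icc (0:ℝ) c, ‖|z (tr - s)|‖ ≤ M (k+1) := by
          rintro s ⟨hs0, hs1⟩
          have hmem' : tr - s ∈ Set.Icc (0:ℝ) T := ⟨by linarith, by linarith⟩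
          rw [Real.norm_eq_abs, abs_abs, hzy _ hmem']
          have := hFleM (k+1) ⟨tr - s, hmem'⟩
          rwa [hFval, if_pos (by push_cast at h2 ⊢; linarith)] at this
        calc (∫ s in Set.Icc (0:ℝ) c, |z (tr - s)| ∂B.measure)
            ≤ ‖∫ s in Set.Icc (0:ℝ) c, |z (tr - s)| ∂B.measure‖ := le_abs_self _
          _ ≤ M (k+1) * (B.measure (Set.Icc (0:ℝ) c)).toReal :=
              norm_setIntegral_le_of_norm_le_const hfin1 hbd
          _ ≤ M (k+1) * B t₀ := by
              apply mul_le_mul_of_nonneg_left _ (hMnn (k+1))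
              rw [B.measure_Icc, hll, sub_zero, ENNReal.toReal_ofReal (hBnn c)]
              exact B.mono hct₀
      -- bound the second piece
      have hb2 : (∫ s in Set.Ioc c tr, |z (tr - s)| ∂B.measure) ≤ M k := by
        have hbd : ∀ s ∈ Set.Ioc c tr, ‖|z (tr - s)|‖ ≤ M k := by
          rintro s ⟨hs0, hs1⟩
          have hmem' : tr - s ∈ Set.Icc (0:ℝ) T := ⟨by linarith, by linarith⟩
          rw [Real.norm_eq_abs, abs_abs, hzy _ hmem']
          have := hFleM k ⟨tr - s, hmem'⟩
          rwa [hFval, if_pos (by simp only; linarith [hs0])] at this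
        calc (∫ s in Set.Ioc c tr, |z (tr - s)| ∂B.measure)
            ≤ ‖∫ s in Set.Ioc c tr, |z (tr - s)| ∂B.measure‖ := le_abs_self _
          _ ≤ M k * (B.measure (Set.Ioc c tr)).toReal :=
              norm_setIntegral_le_of_norm_le_const hfin2 hbd
          _ ≤ M k * 1 := by
              apply mul_le_mul_of_nonneg_left _ (hMnn k)
              rw [B.measure_Ioc, ENNReal.toReal_ofReal (by nlinarith [B.mono hct] : (0:ℝ) ≤ B tr - B c)]
              nlinarith [hBle1 tr, hBnn c]
          _ = M k := mul_one _
      have hxX := hxleX t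
      rw [hunion] at hiy
      have : B t₀ * M (k+1) = M (k+1) * B t₀ := mul_comm _ _
      linarith
  -- solve the recursion
  have hrec : ∀ k : ℕ, M (k + 1) ≤ q * (X + M k) := by
    intro k
    have h := hstep k
    have h2 : (1 - B t₀) * M (k + 1) ≤ X + M k := by nlinarith
    rw [hq, inv_mul_eq_div, le_div_iff₀ h1B]
    linarith [h2, mul_comm (M (k+1)) (1 - B t₀)]
  -- sum identity
  have key : ∀ m : ℕ, (∑ i ∈ Finset.Icc 1 m, q ^ i)
      = q * ∑ i ∈ Finset.range m, q ^ i := by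
    intro m
    induction m with
    | zero => simp
    | succ n ih =>
        rw [Finset.sum_Icc_succ_top (by omega : 1 ≤ n + 1), ih, Finset.sum_range_succ]
        ring
  have hsum : ∀ k : ℕ, (∑ i ∈ Finset.Icc 1 (k+1), q ^ i)
      = q * (1 + ∑ i ∈ Finset.Icc 1 k, q ^ i) := by
    intro k
    rw [key, key, geom_sum_succ]
    ring
  -- the main induction
  have hmain : ∀ k : ℕ, M k ≤ (∑ i ∈ Finset.Icc 1 k, q ^ i) * X := by
    intro k
    induction k with
    | zero =>
        rw [show Finset.Icc 1 0 = ∅ from Finset.Icc_eq_empty (by omega)]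
        simp only [Finset.sum_empty, zero_mul]
        refine ciSup_le fun t => ?_
        rw [hFval, if_neg (by push_cast; simp only [zero_mul]; exact not_lt.2 t.2.1)]
    | succ n ih =>
        calc M (n+1) ≤ q * (X + M n) := hrec n
          _ ≤ q * (X + (∑ i ∈ Finset.Icc 1 n, q ^ i) * X) := by
              apply mul_le_mul_of_nonneg_left _ hq0
              linarith [ih]
          _ = (∑ i ∈ Finset.Icc 1 (n+1), q ^ i) * X := by rw [hsum n]; ring
  -- conclude
  have hK : T < ((⌊T / t₀⌋₊ : ℝ) + 1) * t₀ := by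
    have := Nat.lt_floor_add_one (T / t₀)
    rw [div_lt_iff₀ ht₀0] at this
    linarith
  refine ciSup_le fun t => ?_
  have hFt : |y ↑t| = F (⌊T / t₀⌋₊ + 1) t := by
    rw [hFval, if_pos]
    push_cast
    exact lt_of_le_of_lt t.2.2 hK
  calc |y t| = F (⌊T / t₀⌋₊ + 1) t := hFt
    _ ≤ M (⌊T / t₀⌋₊ + 1) := hFleM _ t
    _ ≤ _ := hmain _
end

section
/- Let B be a distribution function of a nonnegative random variable with B(0) < 1, let T > 0, let x : [0,T] → ℝ be bounded Borel, and let f : ℝ × [0,∞) → ℝ be Borel with |f(y,t)| ≤ |y| and |f(y₁,t) − f(y₂,t)| ≤ |y₁ − y₂| for all y, y₁, y₂, t. If x is right-continuous with left-hand limits on [0,T] and, for each y ∈ ℝ, the function t ↦ f(y,t) is right-continuous with left-hand limits, then the unique bounded Borel solution y of y(t) = x(t) + ∫₀ᵗ f(y(t−s), t−s) dB(s), t ∈ [0,T], is right-continuous with left-hand limits. -/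
open MeasureTheory Filter Set Topology

/-- `g` is right-continuous with left-hand limits on `[0,T]`. -/
def RCLLOn (g : ℝ → ℝ) (T : ℝ) : Prop :=
  (∀ t ∈ Set.Ico (0 : ℝ) T, Tendsto g (nhdsWithin t (Set.Ioi t)) (nhds (g t))) ∧
  (∀ t ∈ Set.Ioc (0 : ℝ) T, ∃ L : ℝ, Tendsto g (nhdsWithin t (Set.Iio t)) (nhds L))

/-- `g` is right-continuous with left-hand limits on `[0,∞)`. -/
def RCLLOnNonneg (g : ℝ → ℝ) : Prop :=
  (∀ t ≥ (0 : ℝ), Tendsto g (nhdsWithin t (Set.Ioi t)) (nhds (g t))) ∧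
  (∀ t > (0 : ℝ), ∃ L : ℝ, Tendsto g (nhdsWithin t (Set.Iio t)) (nhds L))

section AuxLemmas

noncomputable def Iop (B : StieltjesFunction ℝ) (f : ℝ → ℝ → ℝ) (g : ℝ → ℝ) (t : ℝ) : ℝ :=
  ∫ s in Set.Icc (0:ℝ) t, f (g (t - s)) (t - s) ∂B.measure

section Aux
variable {B : StieltjesFunction ℝ} {f : ℝ → ℝ → ℝ}

lemma B_nonneg (hB : IsNNDistFun B) (r : ℝ) : 0 ≤ B r := by
  have h := hB.1 (-1) (by norm_num)
  rcases le_or_gt 0 r with h'|h'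
  · rw [← h]; exact B.mono (by linarith)
  · rw [hB.1 r h']

lemma B_le_one (hB : IsNNDistFun B) (r : ℝ) : B r ≤ 1 :=
  ge_of_tendsto hB.2 (eventually_atTop.2 ⟨r, fun u hu => B.mono hu⟩)

lemma B_leftLim0 (hB : IsNNDistFun B) : Function.leftLim B 0 = 0 := by
  apply leftLim_eq_of_tendsto
  apply Tendsto.congr' (f₁ := fun _ => (0:ℝ)) _ tendsto_const_nhds
  filter_upwards [self_mem_nhdsWithin] with u hu
  exact (hB.1 u hu).symm

lemma B_measure_Icc (hB : IsNNDistFun B) (r : ℝ) :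
    B.measure (Set.Icc 0 r) = ENNReal.ofReal (B r) := by
  rw [StieltjesFunction.measure_Icc, B_leftLim0 hB, sub_zero]

lemma B_measure_le_one (hB : IsNNDistFun B) (s : Set ℝ) : B.measure s ≤ 1 := by
  have h1 : B.measure s ≤ B.measure Set.univ := measure_mono (Set.subset_univ s)
  have h2 : Tendsto B atBot (nhds 0) := by
    apply Tendsto.congr' (f₁ := fun _ => (0:ℝ)) _ tendsto_const_nhds
    filter_upwards [eventually_lt_atBot (0:ℝ)] with u hu
    exact (hB.1 u hu).symm
  rw [B.measure_univ h2 hB.2] at h1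
  simpa using h1

lemma B_measure_Icc_toReal_le_one (hB : IsNNDistFun B) (r : ℝ) :
    (B.measure (Set.Icc 0 r)).toReal ≤ 1 := by
  have := B_measure_le_one hB (Set.Icc 0 r)
  have h := ENNReal.toReal_mono (by norm_num) this
  simpa using h

lemma F_meas (hfm : Measurable (Function.uncurry f)) {g : ℝ → ℝ} (hg : Measurable g) (t : ℝ) :
    Measurable (fun s => f (g (t - s)) (t - s)) := by
  have h1 : Measurable (fun s : ℝ => t - s) := measurable_const.sub measurable_id
  exact hfm.comp ((hg.comp h1).prodMk h1)

lemma F_bound (hf1 : ∀ (y t : ℝ), 0 ≤ t → |f y t| ≤ |y|)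
    {g : ℝ → ℝ} {K : ℝ} (hK : ∀ u, |g u| ≤ K) {t : ℝ} {s : ℝ} (hs : s ∈ Set.Icc 0 t) :
    ‖f (g (t - s)) (t - s)‖ ≤ K := by
  rw [Real.norm_eq_abs]
  exact (hf1 _ _ (by linarith [hs.1, hs.2])).trans (hK _)

lemma F_intble (hB : IsNNDistFun B) (hfm : Measurable (Function.uncurry f))
    (hf1 : ∀ (y t : ℝ), 0 ≤ t → |f y t| ≤ |y|)
    {g : ℝ → ℝ} (hg : Measurable g) {K : ℝ} (hK : ∀ u, |g u| ≤ K) (t : ℝ) :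
    IntegrableOn (fun s => f (g (t - s)) (t - s)) (Set.Icc 0 t) B.measure := by
  have hfin : B.measure (Set.Icc 0 t) < ⊤ := lt_of_le_of_lt (B_measure_le_one hB _) (by norm_num)
  exact Integrable.mono' (g := fun _ => K) (integrableOn_const (ne_of_lt hfin))
    ((F_meas hfm hg t).aestronglyMeasurable)
    (ae_restrict_of_forall_mem measurableSet_Icc (fun s hs => F_bound hf1 hK hs))

/-- Core comparison estimate. -/
lemma core_est (hB : IsNNDistFun B) {F1 F2 : ℝ → ℝ} {v δ c1 c2 : ℝ}
    (h1 : IntegrableOn F1 (Set.Icc 0 v) B.measure) (h2 : IntegrableOn F2 (Set.Icc 0 v) B.measure)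
    (hc1 : 0 ≤ c1) (hc2 : 0 ≤ c2)
    (hpt : ∀ s ∈ Set.Icc (0:ℝ) v, ‖F1 s - F2 s‖ ≤ c1 + (Set.Icc 0 δ).indicator (fun _ => c2) s) :
    |∫ s in Set.Icc (0:ℝ) v, F1 s ∂B.measure - ∫ s in Set.Icc (0:ℝ) v, F2 s ∂B.measure| ≤
      c1 + c2 * B δ := by
  rw [← integral_sub h1 h2]
  have habs : |∫ s in Set.Icc (0:ℝ) v, (F1 s - F2 s) ∂B.measure| ≤
      ∫ s in Set.Icc (0:ℝ) v, ‖F1 s - F2 s‖ ∂B.measure := by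
    rw [← Real.norm_eq_abs]
    exact norm_integral_le_integral_norm _
  refine habs.trans ?_
  have hintb : IntegrableOn (fun s => c1 + (Set.Icc 0 δ).indicator (fun _ => c2) s)
      (Set.Icc 0 v) B.measure := by
    refine Integrable.add (integrableOn_const (ne_of_lt (lt_of_le_of_lt (B_measure_le_one hB _) (by norm_num)))) ?_
    refine Integrable.indicator (integrableOn_const (ne_of_lt (lt_of_le_of_lt (B_measure_le_one hB _) (by norm_num)))) measurableSet_Icc
  have hmono := setIntegral_mono_on ((h1.sub h2).norm) hintb measurableSet_Icc hpt
  refine hmono.trans ?_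
  rw [integral_add (integrableOn_const (C := c1) (ne_of_lt (lt_of_le_of_lt (B_measure_le_one hB _) (by norm_num))))
    (Integrable.indicator (integrableOn_const (C := c2) (ne_of_lt (lt_of_le_of_lt (B_measure_le_one hB _) (by norm_num)))) measurableSet_Icc)]
  gcongr
  · calc ∫ _ in Set.Icc (0:ℝ) v, c1 ∂B.measure = (B.measure (Set.Icc 0 v)).toReal • c1 := setIntegral_const c1
      _ ≤ c1 := by
          rw [smul_eq_mul]
          nlinarith [B_measure_Icc_toReal_le_one hB v, ENNReal.toReal_nonneg (a := B.measure (Set.Icc 0 v))]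
  · rw [setIntegral_indicator measurableSet_Icc, setIntegral_const c2, smul_eq_mul]
    have hm : (B.measure (Set.Icc 0 v ∩ Set.Icc 0 δ)).toReal ≤ B δ := by
      have hle : B.measure (Set.Icc 0 v ∩ Set.Icc 0 δ) ≤ B.measure (Set.Icc 0 δ) :=
        measure_mono Set.inter_subset_right
      rw [B_measure_Icc hB] at hle
      have := ENNReal.toReal_mono ENNReal.ofReal_ne_top hle
      rwa [ENNReal.toReal_ofReal (B_nonneg hB δ)] at this
    nlinarith [hc2, show B.measure.real (Set.Icc 0 v ∩ Set.Icc 0 δ) = (B.measure (Set.Icc 0 v ∩ Set.Icc 0 δ)).toReal from rfl]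

lemma Iop_congr {g g' : ℝ → ℝ} {t : ℝ} (h : ∀ u, 0 ≤ u → u ≤ t → g u = g' u) :
    Iop B f g t = Iop B f g' t := by
  unfold Iop
  refine setIntegral_congr_fun measurableSet_Icc (fun s hs => ?_)
  rw [h (t - s) (by linarith [hs.1, hs.2]) (by linarith [hs.1, hs.2])]

lemma Iop_neg {g : ℝ → ℝ} {t : ℝ} (ht : t < 0) : Iop B f g t = 0 := by
  unfold Iop
  rw [Set.Icc_eq_empty (by linarith), Measure.restrict_empty, integral_zero_measure]

lemma Iop_zero_fun (hf1 : ∀ (y t : ℝ), 0 ≤ t → |f y t| ≤ |y|) (t : ℝ) :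
    Iop B f (fun _ => 0) t = 0 := by
  unfold Iop
  refine integral_eq_zero_of_ae (ae_restrict_of_forall_mem measurableSet_Icc (fun s hs => ?_))
  have := hf1 0 (t - s) (by linarith [hs.1, hs.2])
  simpa [abs_nonpos_iff] using this

lemma Iop_bound (hB : IsNNDistFun B) (hfm : Measurable (Function.uncurry f))
    (hf1 : ∀ (y t : ℝ), 0 ≤ t → |f y t| ≤ |y|)
    {g : ℝ → ℝ} (hg : Measurable g) {K : ℝ} (hK : ∀ u, |g u| ≤ K) (t : ℝ) :
    |Iop B f g t| ≤ K := by
  have hK0 : 0 ≤ K := le_trans (abs_nonneg _) (hK 0)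
  have h := core_est (δ := 0) hB (F_intble hB hfm hf1 hg hK t)
    (integrableOn_const (ne_of_lt (lt_of_le_of_lt (B_measure_le_one hB _) (by norm_num))))
    hK0 le_rfl (F2 := fun _ => (0:ℝ)) ?_
  · simpa [Iop] using h
  · intro s hs
    simp only [sub_zero]
    refine (F_bound hf1 hK hs).trans ?_
    have : (0:ℝ) ≤ (Set.Icc (0:ℝ) 0).indicator (fun _ => (0:ℝ)) s := by
      simp [Set.indicator]
    linarith

/-- Lipschitz estimate with freeze point `a`: if `g = g'` on `(-∞, a]` and `|g - g'| ≤ c`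
globally, and `v - a ≤ δ`, then `|Iop g v - Iop g' v| ≤ c * B δ`. -/
lemma Iop_lip (hB : IsNNDistFun B) (hfm : Measurable (Function.uncurry f))
    (hf1 : ∀ (y t : ℝ), 0 ≤ t → |f y t| ≤ |y|)
    (hf2 : ∀ (y₁ y₂ t : ℝ), 0 ≤ t → |f y₁ t - f y₂ t| ≤ |y₁ - y₂|)
    {g g' : ℝ → ℝ} (hg : Measurable g) (hg' : Measurable g')
    {K K' : ℝ} (hK : ∀ u, |g u| ≤ K) (hK' : ∀ u, |g' u| ≤ K')
    {a δ v c : ℝ} (hfr : ∀ u ≤ a, g u = g' u) (hc : ∀ u, |g u - g' u| ≤ c)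
    (hva : v - a ≤ δ) :
    |Iop B f g v - Iop B f g' v| ≤ c * B δ := by
  have hc0 : 0 ≤ c := le_trans (abs_nonneg _) (hc 0)
  have h := core_est (δ := δ) hB (F_intble hB hfm hf1 hg hK v) (F_intble hB hfm hf1 hg' hK' v)
    le_rfl hc0 ?_
  · simpa [Iop] using h
  · intro s hs
    rcases le_or_gt (v - s) a with h'|h'
    · rw [Real.norm_eq_abs]
      have : g (v - s) = g' (v - s) := hfr _ h'
      rw [show f (g (v-s)) (v-s) - f (g' (v-s)) (v-s) = 0 by rw [this]; ring]
      simp only [abs_zero, zero_add]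
      exact Set.indicator_nonneg (fun _ _ => hc0) s
    · have hmem : s ∈ Set.Icc 0 δ := ⟨hs.1, by linarith⟩
      rw [Set.indicator_of_mem hmem, Real.norm_eq_abs, zero_add]
      exact (hf2 _ _ _ (by linarith [hs.1, hs.2])).trans (hc _)

/-- Window bound: if `|g| ≤ Cz` on `(-∞, a]`, `|g| ≤ K` globally and `v - a ≤ δ` then
`|Iop g v| ≤ Cz + K * B δ`. -/
lemma Iop_bound_window (hB : IsNNDistFun B) (hfm : Measurable (Function.uncurry f))
    (hf1 : ∀ (y t : ℝ), 0 ≤ t → |f y t| ≤ |y|)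
    {g : ℝ → ℝ} (hg : Measurable g) {a δ v : ℝ}
    {K Cz : ℝ} (hK : ∀ u, |g u| ≤ K) (hCz : ∀ u ≤ a, |g u| ≤ Cz)
    (hva : v - a ≤ δ) :
    |Iop B f g v| ≤ Cz + K * B δ := by
  have hK0 : 0 ≤ K := le_trans (abs_nonneg _) (hK 0)
  have hCz0 : 0 ≤ Cz := le_trans (abs_nonneg _) (hCz (min a 0) (min_le_left _ _))
  have h := core_est (δ := δ) hB (F_intble hB hfm hf1 hg hK v)
    (integrableOn_const (ne_of_lt (lt_of_le_of_lt (B_measure_le_one hB _) (by norm_num))))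
    hCz0 hK0 (F2 := fun _ => (0:ℝ)) ?_
  · simpa [Iop] using h
  · intro s hs
    simp only [sub_zero, Real.norm_eq_abs]
    have h0 : 0 ≤ v - s := by linarith [hs.1, hs.2]
    rcases le_or_gt (v - s) a with h'|h'
    · refine ((hf1 _ _ h0).trans (hCz _ h')).trans ?_
      have : (0:ℝ) ≤ (Set.Icc (0:ℝ) δ).indicator (fun _ => K) s :=
        Set.indicator_nonneg (fun _ _ => hK0) s
      linarith
    · have hmem : s ∈ Set.Icc 0 δ := ⟨hs.1, by linarith⟩
      rw [Set.indicator_of_mem hmem]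
      have hb : |f (g (v-s)) (v-s)| ≤ K := (hf1 (g (v-s)) _ h0).trans (hK _)
      linarith

/-- Right/left regularity of `v ↦ f (g v) v`. -/
lemma pt_right (hf2 : ∀ (y₁ y₂ t : ℝ), 0 ≤ t → |f y₁ t - f y₂ t| ≤ |y₁ - y₂|)
    (hfr : ∀ y : ℝ, RCLLOnNonneg (fun t => f y t)) {g : ℝ → ℝ} {u : ℝ}
    (hrc : Tendsto g (nhdsWithin u (Set.Ioi u)) (nhds (g u))) (hu : 0 ≤ u) :
    Tendsto (fun v => f (g v) v) (nhdsWithin u (Set.Ioi u)) (nhds (f (g u) u)) := by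
  have h1 : Tendsto (fun v => f (g u) v) (nhdsWithin u (Set.Ioi u)) (nhds (f (g u) u)) :=
    (hfr (g u)).1 u hu
  have h2 : Tendsto (fun v => f (g v) v - f (g u) v) (nhdsWithin u (Set.Ioi u)) (nhds 0) := by
    apply squeeze_zero_norm' (a := fun v => |g v - g u|)
    · filter_upwards [self_mem_nhdsWithin] with v hv
      exact hf2 _ _ _ (le_trans hu (le_of_lt hv))
    · have := (hrc.sub_const (g u)).abs
      simpa using this
  have := h2.add h1
  simpa using this

lemma pt_left (hf2 : ∀ (y₁ y₂ t : ℝ), 0 ≤ t → |f y₁ t - f y₂ t| ≤ |y₁ - y₂|)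
    (hfr : ∀ y : ℝ, RCLLOnNonneg (fun t => f y t)) {g : ℝ → ℝ} {u L : ℝ}
    (hll : Tendsto g (nhdsWithin u (Set.Iio u)) (nhds L)) (hu : 0 < u) :
    ∃ M, Tendsto (fun v => f (g v) v) (nhdsWithin u (Set.Iio u)) (nhds M) := by
  obtain ⟨M, hM⟩ := (hfr L).2 u hu
  refine ⟨M, ?_⟩
  have h2 : Tendsto (fun v => f (g v) v - f L v) (nhdsWithin u (Set.Iio u)) (nhds 0) := by
    apply squeeze_zero_norm' (a := fun v => |g v - L|)
    · filter_upwards [Ioo_mem_nhdsLT_of_mem (Set.mem_Ioc.2 ⟨hu, le_rfl⟩)] with v hv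
      exact hf2 _ _ _ (le_of_lt hv.1)
    · have := (hll.sub_const L).abs
      simpa using this
  have := h2.add hM
  simpa using this

lemma tendsto_sub_within_Ioi (s t : ℝ) :
    Tendsto (fun v : ℝ => v - s) (nhdsWithin t (Set.Ioi t)) (nhdsWithin (t - s) (Set.Ioi (t - s))) := by
  apply tendsto_nhdsWithin_of_tendsto_nhds_of_eventually_within
  · exact ((continuous_sub_right s).tendsto t).mono_left nhdsWithin_le_nhds
  · filter_upwards [self_mem_nhdsWithin] with v hv
    exact sub_lt_sub_right hv s

lemma tendsto_sub_within_Iio (s t : ℝ) :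
    Tendsto (fun v : ℝ => v - s) (nhdsWithin t (Set.Iio t)) (nhdsWithin (t - s) (Set.Iio (t - s))) := by
  apply tendsto_nhdsWithin_of_tendsto_nhds_of_eventually_within
  · exact ((continuous_sub_right s).tendsto t).mono_left nhdsWithin_le_nhds
  · filter_upwards [self_mem_nhdsWithin] with v hv
    exact sub_lt_sub_right hv s

lemma Iop_rc (hB : IsNNDistFun B) (hfm : Measurable (Function.uncurry f))
    (hf1 : ∀ (y t : ℝ), 0 ≤ t → |f y t| ≤ |y|)
    (hf2 : ∀ (y₁ y₂ t : ℝ), 0 ≤ t → |f y₁ t - f y₂ t| ≤ |y₁ - y₂|)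
    (hfr : ∀ y : ℝ, RCLLOnNonneg (fun t => f y t))
    {g : ℝ → ℝ} (hg : Measurable g) {K : ℝ} (hK : ∀ u, |g u| ≤ K)
    (hrc : ∀ u, Tendsto g (nhdsWithin u (Set.Ioi u)) (nhds (g u))) (t : ℝ) :
    Tendsto (Iop B f g) (nhdsWithin t (Set.Ioi t)) (nhds (Iop B f g t)) := by
  have hK0 : 0 ≤ K := le_trans (abs_nonneg _) (hK 0)
  rcases lt_or_ge t 0 with ht|ht
  · apply Tendsto.congr' (f₁ := fun _ => Iop B f g t)
    · filter_upwards [Ioo_mem_nhdsGT_of_mem (Set.mem_Ico.2 ⟨le_refl t, ht⟩)] with v hv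
      rw [Iop_neg hv.2, Iop_neg ht]
    · exact tendsto_const_nhds
  -- t ≥ 0
  have hfin : ∀ r : ℝ, B.measure (Set.Icc 0 r) < ⊤ :=
    fun r => lt_of_le_of_lt (B_measure_le_one hB _) (by norm_num)
  have hpart1 : Tendsto (fun v => ∫ s in Set.Icc (0:ℝ) t, f (g (v - s)) (v - s) ∂B.measure)
      (nhdsWithin t (Set.Ioi t)) (nhds (Iop B f g t)) := by
    unfold Iop
    apply tendsto_integral_filter_of_dominated_convergence (bound := fun _ => K)
    · exact Eventually.of_forall (fun v => (F_meas hfm hg v).aestronglyMeasurable)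
    · filter_upwards [self_mem_nhdsWithin] with v hv
      refine ae_restrict_of_forall_mem measurableSet_Icc (fun s hs => ?_)
      rw [Real.norm_eq_abs]
      exact (hf1 _ _ (by simp only [Set.mem_Ioi] at hv; linarith [hs.1, hs.2])).trans (hK _)
    · exact integrableOn_const (ne_of_lt (hfin t))
    · refine ae_restrict_of_forall_mem measurableSet_Icc (fun s hs => ?_)
      exact (pt_right hf2 hfr (hrc (t - s)) (by linarith [hs.1, hs.2])).comp (tendsto_sub_within_Ioi s t)
  have hpart2 : Tendsto (fun v => ∫ s in Set.Ioc t v, f (g (v - s)) (v - s) ∂B.measure)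
      (nhdsWithin t (Set.Ioi t)) (nhds 0) := by
    apply squeeze_zero_norm' (a := fun v => K * (B v - B t))
    · filter_upwards [self_mem_nhdsWithin] with v hv
      simp only [Set.mem_Ioi] at hv
      have hb : ∀ s ∈ Set.Ioc t v, ‖f (g (v - s)) (v - s)‖ ≤ K := by
        intro s hs
        rw [Real.norm_eq_abs]
        exact (hf1 _ _ (by linarith [hs.1, hs.2])).trans (hK _)
      have hmeas : AEStronglyMeasurable (fun s => f (g (v - s)) (v - s)) (B.measure.restrict (Set.Ioc t v)) :=
        (F_meas hfm hg v).aestronglyMeasurable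
      have := norm_setIntegral_le_of_norm_le_const (μ := B.measure)
        (lt_of_le_of_lt (B_measure_le_one hB _) (by norm_num)) hb
      refine this.trans ?_
      rw [Measure.real, StieltjesFunction.measure_Ioc, ENNReal.toReal_ofReal (by linarith [B.mono (le_of_lt hv)])]
    · have hBt : Tendsto B (nhdsWithin t (Set.Ioi t)) (nhds (B t)) :=
        (B.right_continuous t).tendsto.mono_left (nhdsWithin_mono t Set.Ioi_subset_Ici_self)
      have := ((hBt.sub_const (B t)).const_mul K)
      simpa using this
  have hsum := hpart1.add hpart2
  rw [add_zero] at hsum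
  apply Tendsto.congr' _ hsum
  filter_upwards [self_mem_nhdsWithin] with v hv
  simp only [Set.mem_Ioi] at hv
  unfold Iop
  rw [← setIntegral_union (((Set.Iic_disjoint_Ioc le_rfl).mono Set.Icc_subset_Iic_self le_rfl)) measurableSet_Ioc
    (F_intble hB hfm hf1 hg hK v |>.mono_set (Set.Icc_subset_Icc_right (le_of_lt hv)))
    (F_intble hB hfm hf1 hg hK v |>.mono_set (fun s hs => ⟨by linarith [hs.1], hs.2⟩)),
    Set.Icc_union_Ioc_eq_Icc ht (le_of_lt hv)]

lemma Iop_ll (hB : IsNNDistFun B) (hfm : Measurable (Function.uncurry f))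
    (hf1 : ∀ (y t : ℝ), 0 ≤ t → |f y t| ≤ |y|)
    (hf2 : ∀ (y₁ y₂ t : ℝ), 0 ≤ t → |f y₁ t - f y₂ t| ≤ |y₁ - y₂|)
    (hfr : ∀ y : ℝ, RCLLOnNonneg (fun t => f y t))
    {g : ℝ → ℝ} (hg : Measurable g) {K : ℝ} (hK : ∀ u, |g u| ≤ K)
    (hll : ∀ u, ∃ L, Tendsto g (nhdsWithin u (Set.Iio u)) (nhds L)) (t : ℝ) :
    ∃ J, Tendsto (Iop B f g) (nhdsWithin t (Set.Iio t)) (nhds J) := by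
  have hK0 : 0 ≤ K := le_trans (abs_nonneg _) (hK 0)
  rcases le_or_gt t 0 with ht|ht
  · refine ⟨0, ?_⟩
    apply Tendsto.congr' (f₁ := fun _ => (0:ℝ))
    · filter_upwards [self_mem_nhdsWithin] with v hv
      exact (Iop_neg (by simp only [Set.mem_Iio] at hv; linarith)).symm
    · exact tendsto_const_nhds
  -- t > 0
  have key : ∀ s : ℝ, s < t → ∃ M, Tendsto (fun v => f (g v) v) (nhdsWithin (t - s) (Set.Iio (t - s))) (nhds M) :=
    fun s hs => pt_left hf2 hfr (hll (t - s)).choose_spec (by linarith)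
  set G : ℝ → ℝ := fun s => if h : s < t then (key s h).choose else 0 with hG
  refine ⟨∫ s in Set.Icc (0:ℝ) t, G s ∂B.measure, ?_⟩
  have hmain : Tendsto (fun v => ∫ s in Set.Icc (0:ℝ) t,
      (Set.Icc (0:ℝ) v).indicator (fun s => f (g (v - s)) (v - s)) s ∂B.measure)
      (nhdsWithin t (Set.Iio t)) (nhds (∫ s in Set.Icc (0:ℝ) t, G s ∂B.measure)) := by
    apply tendsto_integral_filter_of_dominated_convergence (bound := fun _ => K)
    · exact Eventually.of_forall (fun v =>
        ((F_meas hfm hg v).indicator measurableSet_Icc).aestronglyMeasurable)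
    · refine Eventually.of_forall (fun v => ?_)
      refine ae_restrict_of_forall_mem measurableSet_Icc (fun s hs => ?_)
      by_cases hsv : s ∈ Set.Icc (0:ℝ) v
      · rw [Set.indicator_of_mem hsv, Real.norm_eq_abs]
        exact (hf1 _ _ (by linarith [hsv.1, hsv.2])).trans (hK _)
      · rw [Set.indicator_of_notMem hsv]
        simpa using hK0
    · exact integrableOn_const (ne_of_lt (lt_of_le_of_lt (B_measure_le_one hB _) (by norm_num)))
    · refine ae_restrict_of_forall_mem measurableSet_Icc (fun s hs => ?_)
      rcases lt_or_ge s t with hst|hst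
      · rw [hG]
        simp only [dif_pos hst]
        apply Tendsto.congr' (f₁ := fun v => f (g (v - s)) (v - s))
        · filter_upwards [Ioo_mem_nhdsLT_of_mem (Set.mem_Ioc.2 ⟨hst, le_rfl⟩)] with v hv
          rw [Set.indicator_of_mem (Set.mem_Icc.2 ⟨hs.1, le_of_lt hv.1⟩)]
        · exact ((key s hst).choose_spec).comp (tendsto_sub_within_Iio s t)
      · have hseq : s = t := le_antisymm hs.2 hst
        rw [hG]
        simp only [dif_neg (not_lt.2 hst)]
        apply Tendsto.congr' (f₁ := fun _ => (0:ℝ))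
        · filter_upwards [self_mem_nhdsWithin] with v hv
          simp only [Set.mem_Iio] at hv
          rw [Set.indicator_of_notMem]
          simp only [Set.mem_Icc, not_and_or, not_le]
          right; rw [hseq]; exact hv
        · exact tendsto_const_nhds
  apply Tendsto.congr' _ hmain
  filter_upwards [self_mem_nhdsWithin] with v hv
  simp only [Set.mem_Iio] at hv
  rw [setIntegral_indicator measurableSet_Icc, Set.Icc_inter_Icc]
  unfold Iop
  congr 1
  · rw [max_self, min_eq_right (le_of_lt hv)]

def Cadlag (g : ℝ → ℝ) : Prop :=
  (∀ u, Tendsto g (nhdsWithin u (Set.Ioi u)) (nhds (g u))) ∧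
  (∀ u, ∃ L, Tendsto g (nhdsWithin u (Set.Iio u)) (nhds L))

lemma meas_of_rc {g : ℝ → ℝ} (h : ∀ u, Tendsto g (nhdsWithin u (Set.Ioi u)) (nhds (g u))) :
    Measurable g := by
  have key : ∀ n : ℕ, Measurable (fun u : ℝ => g ((⌈u * 2^n⌉ + 1 : ℤ) / 2^n)) := by
    intro n
    exact (measurable_from_top (f := fun k : ℤ => g ((k + 1 : ℤ) / 2^n))).comp
      (Int.measurable_ceil.comp (measurable_id.mul_const _))
  apply measurable_of_tendsto_metrizable key
  rw [tendsto_pi_nhds]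
  intro u
  apply (h u).comp
  rw [tendsto_nhdsWithin_iff]
  have hlt : ∀ n : ℕ, u < ((⌈u * 2^n⌉ + 1 : ℤ) : ℝ) / 2^n := by
    intro n
    rw [lt_div_iff₀ (by positivity)]
    push_cast
    have := Int.le_ceil (u * 2^n)
    linarith
  have hle : ∀ n : ℕ, ((⌈u * 2^n⌉ + 1 : ℤ) : ℝ) / 2^n ≤ u + 2/2^n := by
    intro n
    rw [div_le_iff₀ (by positivity)]
    push_cast
    have h2 : (0:ℝ) < 2^n := by positivity
    have heq : (u + 2/2^n) * 2^n = u * 2^n + 2 := by field_simp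
    nlinarith [Int.ceil_lt_add_one (u * 2^n)]
  constructor
  · apply tendsto_of_tendsto_of_tendsto_of_le_of_le (g := fun _ : ℕ => u)
      (h := fun n : ℕ => u + 2/2^n) tendsto_const_nhds ?_ (fun n => (hlt n).le) hle
    have h0 : Tendsto (fun n : ℕ => 2/2^n) atTop (nhds (0:ℝ)) := by
      simp only [div_eq_mul_inv, ← inv_pow]
      simpa using (tendsto_pow_atTop_nhds_zero_of_lt_one (r := (2:ℝ)⁻¹) (by norm_num) (by norm_num)).const_mul 2
    simpa using h0.const_add u
  · exact Filter.Eventually.of_forall fun n => hlt n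

/-- Uniform limits preserve one-sided limits. -/
lemma unif_lim {l : Filter ℝ} [hl : l.NeBot] (gs : ℕ → ℝ → ℝ) (g : ℝ → ℝ) (e : ℕ → ℝ) (L : ℕ → ℝ)
    (hconv : ∀ n u, |gs n u - g u| ≤ e n) (he : Tendsto e atTop (nhds 0))
    (hL : ∀ n, Tendsto (gs n) l (nhds (L n))) :
    ∃ LL, Tendsto L atTop (nhds LL) ∧ Tendsto g l (nhds LL) := by
  have hdist : ∀ n m, dist (L n) (L m) ≤ e n + e m := by
    intro n m
    have hev : ∀ u, dist (gs n u) (gs m u) ≤ e n + e m := by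
      intro u
      rw [Real.dist_eq]
      calc |gs n u - gs m u| ≤ |gs n u - g u| + |g u - gs m u| := abs_sub_le _ _ _
        _ ≤ e n + e m := by
            have := hconv m u
            rw [abs_sub_comm] at this
            exact add_le_add (hconv n u) this
    have htd : Tendsto (fun u => dist (gs n u) (gs m u)) l (nhds (dist (L n) (L m))) :=
      (hL n).dist (hL m)
    exact le_of_tendsto htd (Eventually.of_forall hev)
  have hcauchy : CauchySeq L := by
    rw [Metric.cauchySeq_iff']
    intro ε hε
    have : ∀ᶠ n in atTop, |e n| < ε / 2 := by
      have := he.abs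
      simp only [abs_zero] at this
      exact this.eventually_lt_const (by linarith)
    obtain ⟨N, hN⟩ := this.exists_forall_of_atTop
    refine ⟨N, fun n hn => ?_⟩
    calc dist (L n) (L N) ≤ e n + e N := hdist n N
      _ ≤ |e n| + |e N| := add_le_add (le_abs_self _) (le_abs_self _)
      _ < ε / 2 + ε / 2 := add_lt_add (hN n hn) (hN N le_rfl)
      _ = ε := by ring
  obtain ⟨LL, hLL⟩ := cauchySeq_tendsto_of_complete hcauchy
  refine ⟨LL, hLL, ?_⟩
  rw [Metric.tendsto_nhds]
  intro ε hε
  have h1 : ∀ᶠ n in atTop, |e n| < ε / 3 := by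
    have := he.abs
    simp only [abs_zero] at this
    exact this.eventually_lt_const (by linarith)
  have h2 : ∀ᶠ n in atTop, dist (L n) LL < ε / 3 := hLL (Metric.ball_mem_nhds LL (by linarith))
  obtain ⟨n, hn1, hn2⟩ := (h1.and h2).exists
  have h3 : ∀ᶠ u in l, dist (gs n u) (L n) < ε / 3 := (hL n) (Metric.ball_mem_nhds _ (by linarith))
  filter_upwards [h3] with u hu
  calc dist (g u) LL ≤ dist (g u) (gs n u) + dist (gs n u) (L n) + dist (L n) LL := dist_triangle4 _ _ _ _
    _ < ε / 3 + ε / 3 + ε / 3 := by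
        refine add_lt_add (add_lt_add_of_le_of_lt ?_ hu) hn2
        rw [dist_comm, Real.dist_eq]
        exact le_of_lt (lt_of_le_of_lt (hconv n u) (lt_of_le_of_lt (le_abs_self _) hn1))
    _ = ε := by ring

lemma exists_step (hB : IsNNDistFun B) (hfm : Measurable (Function.uncurry f))
    (hf1 : ∀ (y t : ℝ), 0 ≤ t → |f y t| ≤ |y|)
    (hf2 : ∀ (y₁ y₂ t : ℝ), 0 ≤ t → |f y₁ t - f y₂ t| ≤ |y₁ - y₂|)
    (hfr : ∀ y : ℝ, RCLLOnNonneg (fun t => f y t))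
    {X : ℝ → ℝ} {CX : ℝ} (hXm : Measurable X) (hXb : ∀ u, |X u| ≤ CX)
    (hXrc : ∀ u, Tendsto X (nhdsWithin u (Set.Ioi u)) (nhds (X u)))
    (hXll : ∀ u, ∃ L, Tendsto X (nhdsWithin u (Set.Iio u)) (nhds L))
    {δ : ℝ} (hδ : 0 < δ) (hq1 : B δ < 1)
    {a b : ℝ} (hab : a < b) (hba : b - a ≤ δ)
    {z : ℝ → ℝ} {Cz : ℝ} (hzm : Measurable z) (hzb : ∀ u, |z u| ≤ Cz) (hzc : Cadlag z)
    (hza : z a = X a + Iop B f z a) :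
    ∃ (z' : ℝ → ℝ) (K : ℝ), Measurable z' ∧ (∀ u, |z' u| ≤ K) ∧ Cadlag z' ∧
      (∀ u ≤ a, z' u = z u) ∧ (∀ t, a < t → t ≤ b → z' t = X t + Iop B f z' t) := by
  have hq0 : 0 ≤ B δ := B_nonneg hB δ
  have hCX0 : 0 ≤ CX := le_trans (abs_nonneg _) (hXb 0)
  have hCz0 : 0 ≤ Cz := le_trans (abs_nonneg _) (hzb 0)
  set q : ℝ := B δ with hqdef
  set K : ℝ := (CX + Cz) / (1 - q) + Cz with hKdef
  have hq1' : 0 < 1 - q := by linarith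
  have hKCz : Cz ≤ K := by
    have h0 : 0 ≤ (CX + Cz) / (1 - q) := div_nonneg (by linarith) (by linarith)
    rw [hKdef]
    linarith
  have hK0 : 0 ≤ K := le_trans hCz0 hKCz
  have hKrec : CX + Cz + K * q ≤ K := by
    rw [hKdef]
    have h1 : (CX + Cz) / (1 - q) * (1 - q) = CX + Cz := div_mul_cancel₀ _ (ne_of_gt hq1')
    nlinarith [mul_nonneg hCz0 hq0, div_nonneg (add_nonneg hCX0 hCz0) (le_of_lt hq1')]
  -- the Picard iterates
  set seq : ℕ → ℝ → ℝ := fun n => Nat.rec z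
    (fun _ g u => if u ≤ a then z u else X (min u b) + Iop B f g (min u b)) n with hseq
  have hseq0 : seq 0 = z := rfl
  have hseqS : ∀ n u, seq (n+1) u =
      if u ≤ a then z u else X (min u b) + Iop B f (seq n) (min u b) := fun n u => rfl
  -- basic properties of the iterates
  have main : ∀ n, Measurable (seq n) ∧ (∀ u, |seq n u| ≤ K) ∧ Cadlag (seq n) ∧
      (∀ u ≤ a, seq n u = z u) := by
    intro n
    induction n with
    | zero => exact ⟨hzm, fun u => (hzb u).trans hKCz, hzc, fun _ _ => rfl⟩
    | succ n ih =>
      obtain ⟨hgm, hgb, hgc, hgz⟩ := ih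
      have hgza : ∀ u ≤ a, |seq n u| ≤ Cz := fun u hu => by rw [hgz u hu]; exact hzb u
      -- value identity at the boundary
      have hbdry : z a = X a + Iop B f (seq n) a := by
        rw [hza, Iop_congr (fun u hu0 hua => (hgz u hua).symm)]
      -- right continuity
      have hrc : ∀ u, Tendsto (seq (n+1)) (nhdsWithin u (Set.Ioi u)) (nhds (seq (n+1) u)) := by
        intro u
        rcases lt_trichotomy u a with hu|hu|hu
        · apply Tendsto.congr' (f₁ := z)
          · filter_upwards [Ioo_mem_nhdsGT_of_mem (Set.mem_Ico.2 ⟨le_refl u, hu⟩)] with v hv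
            rw [hseqS, if_pos (le_of_lt hv.2)]
          · rw [hseqS, if_pos (le_of_lt hu)]
            exact hzc.1 u
        · -- u = a
          subst hu
          have hlim : Tendsto (fun v => X v + Iop B f (seq n) v) (nhdsWithin u (Set.Ioi u))
              (nhds (X u + Iop B f (seq n) u)) :=
            (hXrc u).add (Iop_rc hB hfm hf1 hf2 hfr hgm hgb hgc.1 u)
          apply Tendsto.congr' (f₁ := fun v => X v + Iop B f (seq n) v)
          · filter_upwards [Ioo_mem_nhdsGT_of_mem (Set.mem_Ico.2 ⟨le_refl u, hab⟩)] with v hv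
            rw [hseqS, if_neg (not_le.2 hv.1), min_eq_left (le_of_lt hv.2)]
          · rw [hseqS, if_pos le_rfl, hbdry]
            exact hlim
        · -- u > a
          rcases lt_or_ge u b with hub|hub
          · apply Tendsto.congr' (f₁ := fun v => X v + Iop B f (seq n) v)
            · filter_upwards [Ioo_mem_nhdsGT_of_mem (Set.mem_Ico.2 ⟨le_refl u, hub⟩)] with v hv
              rw [hseqS, if_neg (not_le.2 (lt_trans hu hv.1)), min_eq_left (le_of_lt hv.2)]
            · rw [hseqS, if_neg (not_le.2 hu), min_eq_left (le_of_lt hub)]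
              exact (hXrc u).add (Iop_rc hB hfm hf1 hf2 hfr hgm hgb hgc.1 u)
          · apply Tendsto.congr' (f₁ := fun _ => X b + Iop B f (seq n) b)
            · filter_upwards [self_mem_nhdsWithin] with v hv
              simp only [Set.mem_Ioi] at hv
              rw [hseqS, if_neg (not_le.2 (lt_trans hu hv)),
                min_eq_right (le_trans hub (le_of_lt hv))]
            · rw [hseqS, if_neg (not_le.2 hu), min_eq_right hub]
              exact tendsto_const_nhds
      have hmeas : Measurable (seq (n+1)) := meas_of_rc hrc
      refine ⟨hmeas, ?_, ⟨hrc, ?_⟩, fun u hu => by rw [hseqS, if_pos hu]⟩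
      · -- bound
        intro u
        rw [hseqS]
        split_ifs with h
        · exact (hzb u).trans hKCz
        · have hIop : |Iop B f (seq n) (min u b)| ≤ Cz + K * q :=
            Iop_bound_window hB hfm hf1 hgm hgb hgza (by
              have : min u b ≤ b := min_le_right u b
              linarith)
          calc |X (min u b) + Iop B f (seq n) (min u b)|
              ≤ |X (min u b)| + |Iop B f (seq n) (min u b)| := abs_add_le _ _
            _ ≤ CX + (Cz + K * q) := add_le_add (hXb _) hIop
            _ ≤ K := by linarith [hKrec]
      · -- left limits
        intro u
        rcases le_or_gt u a with hu|hu
        · obtain ⟨L, hL⟩ := hzc.2 u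
          refine ⟨L, ?_⟩
          apply Tendsto.congr' (f₁ := z) _ hL
          filter_upwards [self_mem_nhdsWithin] with v hv
          simp only [Set.mem_Iio] at hv
          rw [hseqS, if_pos (le_of_lt (lt_of_lt_of_le hv hu))]
        · rcases le_or_gt u b with hub|hub
          · obtain ⟨LX, hLX⟩ := hXll u
            obtain ⟨LI, hLI⟩ := Iop_ll hB hfm hf1 hf2 hfr hgm hgb hgc.2 u
            refine ⟨LX + LI, ?_⟩
            apply Tendsto.congr' (f₁ := fun v => X v + Iop B f (seq n) v) _ (hLX.add hLI)
            filter_upwards [Ioo_mem_nhdsLT_of_mem (Set.mem_Ioc.2 ⟨hu, le_rfl⟩)] with v hv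
            rw [hseqS, if_neg (not_le.2 hv.1), min_eq_left (le_of_lt (lt_of_lt_of_le hv.2 hub))]
          · refine ⟨X b + Iop B f (seq n) b, ?_⟩
            apply Tendsto.congr' (f₁ := fun _ => X b + Iop B f (seq n) b) _ tendsto_const_nhds
            filter_upwards [Ioo_mem_nhdsLT_of_mem (Set.mem_Ioc.2 ⟨hub, le_rfl⟩)] with v hv
            rw [hseqS, if_neg (not_le.2 (lt_trans hab hv.1)), min_eq_right (le_of_lt hv.1)]
  -- contraction
  have hcontr : ∀ n u, |seq (n+1) u - seq n u| ≤ (2*K) * q^n := by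
    intro n
    induction n with
    | zero =>
      intro u
      calc |seq 1 u - seq 0 u| ≤ |seq 1 u| + |seq 0 u| := abs_sub _ _
        _ ≤ K + K := add_le_add ((main 1).2.1 u) ((main 0).2.1 u)
        _ = 2*K * q^0 := by ring
    | succ n ih =>
      intro u
      rw [hseqS (n+1) u, hseqS n u]
      split_ifs with h
      · simp only [sub_self, abs_zero]
        positivity
      · have heq : X (min u b) + Iop B f (seq (n+1)) (min u b) -
            (X (min u b) + Iop B f (seq n) (min u b)) =
            Iop B f (seq (n+1)) (min u b) - Iop B f (seq n) (min u b) := by ring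
        rw [heq]
        have := Iop_lip hB hfm hf1 hf2 (main (n+1)).1 (main n).1 (main (n+1)).2.1 (main n).2.1
          (a := a) (δ := δ) (v := min u b) (c := 2*K*q^n)
          (fun u hu => by rw [(main (n+1)).2.2.2 u hu, (main n).2.2.2 u hu]) ih
          (by linarith [min_le_right u b])
        calc |Iop B f (seq (n+1)) (min u b) - Iop B f (seq n) (min u b)| ≤ 2*K*q^n * q := this
          _ = 2*K*q^(n+1) := by ring
  -- the limit function
  have hcauchy : ∀ u, ∃ L, Tendsto (fun n => seq n u) atTop (nhds L) := by
    intro u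
    have : CauchySeq (fun n => seq n u) := by
      apply cauchySeq_of_le_geometric q (2*K) hq1
      intro n
      rw [Real.dist_eq, abs_sub_comm]
      exact hcontr n u
    exact cauchySeq_tendsto_of_complete this
  set z' : ℝ → ℝ := fun u => (hcauchy u).choose with hz'def
  have hz' : ∀ u, Tendsto (fun n => seq n u) atTop (nhds (z' u)) := fun u => (hcauchy u).choose_spec
  have htail : ∀ n u, |seq n u - z' u| ≤ 2*K*q^n / (1 - q) := by
    intro n u
    have := dist_le_of_le_geometric_of_tendsto q (2*K) hq1
      (fun n => by rw [Real.dist_eq, abs_sub_comm]; exact hcontr n u) (hz' u) n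
    rwa [Real.dist_eq] at this
  have he0 : Tendsto (fun n => 2*K*q^n / (1 - q)) atTop (nhds 0) := by
    have hpow : Tendsto (fun n : ℕ => q^n) atTop (nhds 0) :=
      tendsto_pow_atTop_nhds_zero_of_lt_one hq0 hq1
    have := (hpow.const_mul (2*K)).div_const (1 - q)
    simpa using this
  -- properties of the limit
  have hz'z : ∀ u ≤ a, z' u = z u := by
    intro u hu
    have hconst : ∀ n, seq n u = z u := fun n => (main n).2.2.2 u hu
    have : Tendsto (fun n => seq n u) atTop (nhds (z u)) := by
      apply Tendsto.congr' (f₁ := fun _ => z u) _ tendsto_const_nhds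
      exact Eventually.of_forall (fun n => (hconst n).symm)
    exact tendsto_nhds_unique (hz' u) this
  have hz'b : ∀ u, |z' u| ≤ K := by
    intro u
    have : Tendsto (fun n => |seq n u|) atTop (nhds |z' u|) := (hz' u).abs
    exact le_of_tendsto this (Eventually.of_forall (fun n => (main n).2.1 u))
  have hz'm : Measurable z' :=
    measurable_of_tendsto_metrizable (fun n => (main n).1) (tendsto_pi_nhds.2 hz')
  have hz'c : Cadlag z' := by
    constructor
    · intro u
      obtain ⟨LL, hLL1, hLL2⟩ := unif_lim seq z' (fun n => 2*K*q^n / (1 - q)) (fun n => seq n u)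
        (fun n v => htail n v) he0 (fun n => (main n).2.2.1.1 u)
      have : LL = z' u := tendsto_nhds_unique hLL1 (hz' u)
      rwa [this] at hLL2
    · intro u
      have hLn : ∀ n, ∃ L, Tendsto (seq n) (nhdsWithin u (Set.Iio u)) (nhds L) :=
        fun n => (main n).2.2.1.2 u
      obtain ⟨LL, _, hLL2⟩ := unif_lim seq z' (fun n => 2*K*q^n / (1 - q))
        (fun n => (hLn n).choose) (fun n v => htail n v) he0 (fun n => (hLn n).choose_spec)
      exact ⟨LL, hLL2⟩
  refine ⟨z', K, hz'm, hz'b, hz'c, hz'z, ?_⟩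
  -- the equation on the window
  intro t hat htb
  have hrec : ∀ n, seq (n+1) t = X t + Iop B f (seq n) t := by
    intro n
    rw [hseqS, if_neg (not_le.2 hat), min_eq_left htb]
  have hlhs : Tendsto (fun n => seq (n+1) t) atTop (nhds (z' t)) :=
    (hz' t).comp (tendsto_add_atTop_nat 1)
  have hIopconv : Tendsto (fun n => Iop B f (seq n) t) atTop (nhds (Iop B f z' t)) := by
    rw [← tendsto_sub_nhds_zero_iff]
    apply squeeze_zero_norm (a := fun n => (2*K*q^n / (1 - q)) * q)
    · intro n
      rw [Real.norm_eq_abs]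
      exact Iop_lip hB hfm hf1 hf2 (main n).1 hz'm (main n).2.1 hz'b (a := a) (δ := δ)
        (fun u hu => by rw [(main n).2.2.2 u hu, hz'z u hu])
        (fun u => htail n u) (by linarith)
    · have := he0.mul_const q
      simpa using this
  have hrhs : Tendsto (fun n => X t + Iop B f (seq n) t) atTop (nhds (X t + Iop B f z' t)) :=
    tendsto_const_nhds.add hIopconv
  refine tendsto_nhds_unique hlhs ?_
  apply Tendsto.congr' _ hrhs
  exact Eventually.of_forall (fun n => (hrec n).symm)

noncomputable def clampF (T : ℝ) (hT : (0:ℝ) ≤ T) (x : ℝ → ℝ) : ℝ → ℝ :=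
  fun u => x (Set.projIcc 0 T hT u)

lemma clampF_eq {T : ℝ} (hT : (0:ℝ) ≤ T) (x : ℝ → ℝ) {t : ℝ} (ht : t ∈ Set.Icc 0 T) :
    clampF T hT x t = x t := by
  unfold clampF
  rw [Set.projIcc_of_mem hT ht]

lemma clampF_le_left {T : ℝ} (hT : (0:ℝ) ≤ T) (x : ℝ → ℝ) {u : ℝ} (hu : u ≤ 0) :
    clampF T hT x u = x 0 := by
  unfold clampF
  rw [Set.projIcc_of_le_left hT hu]

lemma clampF_ge {T : ℝ} (hT : (0:ℝ) ≤ T) (x : ℝ → ℝ) {u : ℝ} (hu : T ≤ u) :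
    clampF T hT x u = x T := by
  unfold clampF
  rw [Set.projIcc_of_right_le hT hu]

lemma clampF_meas {T : ℝ} (hT : (0:ℝ) ≤ T) {x : ℝ → ℝ}
    (hxm : Measurable (fun t : Set.Icc (0 : ℝ) T => x t)) :
    Measurable (clampF T hT x) :=
  hxm.comp continuous_projIcc.measurable

lemma clampF_bound {T : ℝ} (hT : (0:ℝ) ≤ T) {x : ℝ → ℝ} {C : ℝ}
    (hxb : ∀ t ∈ Set.Icc (0 : ℝ) T, |x t| ≤ C) (u : ℝ) : |clampF T hT x u| ≤ C :=
  hxb _ (Set.projIcc 0 T hT u).2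

lemma clampF_rc {T : ℝ} (hT : (0:ℝ) < T) {x : ℝ → ℝ} (hxr : RCLLOn x T) (u : ℝ) :
    Tendsto (clampF T hT.le x) (nhdsWithin u (Set.Ioi u)) (nhds (clampF T hT.le x u)) := by
  rcases lt_or_ge u 0 with hu|hu
  · apply Tendsto.congr' (f₁ := fun _ => x 0)
    · filter_upwards [Ioo_mem_nhdsGT_of_mem (Set.mem_Ico.2 ⟨le_refl u, hu⟩)] with v hv
      exact (clampF_le_left hT.le x (le_of_lt hv.2)).symm
    · rw [clampF_le_left hT.le x (le_of_lt hu)]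
      exact tendsto_const_nhds
  rcases lt_or_ge u T with huT|huT
  · apply Tendsto.congr' (f₁ := x)
    · filter_upwards [Ioo_mem_nhdsGT_of_mem (Set.mem_Ico.2 ⟨le_refl u, huT⟩)] with v hv
      exact (clampF_eq hT.le x ⟨le_trans hu (le_of_lt hv.1), le_of_lt hv.2⟩).symm
    · rw [clampF_eq hT.le x ⟨hu, le_of_lt huT⟩]
      exact hxr.1 u ⟨hu, huT⟩
  · apply Tendsto.congr' (f₁ := fun _ => x T)
    · filter_upwards [self_mem_nhdsWithin] with v hv
      simp only [Set.mem_Ioi] at hv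
      exact (clampF_ge hT.le x (le_trans huT (le_of_lt hv))).symm
    · rw [clampF_ge hT.le x huT]
      exact tendsto_const_nhds

lemma clampF_ll {T : ℝ} (hT : (0:ℝ) < T) {x : ℝ → ℝ} (hxr : RCLLOn x T) (u : ℝ) :
    ∃ L, Tendsto (clampF T hT.le x) (nhdsWithin u (Set.Iio u)) (nhds L) := by
  rcases le_or_gt u 0 with hu|hu
  · refine ⟨x 0, ?_⟩
    apply Tendsto.congr' (f₁ := fun _ => x 0) _ tendsto_const_nhds
    filter_upwards [self_mem_nhdsWithin] with v hv
    simp only [Set.mem_Iio] at hv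
    exact (clampF_le_left hT.le x (by linarith)).symm
  rcases le_or_gt u T with huT|huT
  · obtain ⟨L, hL⟩ := hxr.2 u ⟨hu, huT⟩
    refine ⟨L, ?_⟩
    apply Tendsto.congr' (f₁ := x) _ hL
    filter_upwards [Ioo_mem_nhdsLT_of_mem (Set.mem_Ioc.2 ⟨hu, le_rfl⟩)] with v hv
    exact (clampF_eq hT.le x ⟨le_of_lt hv.1, le_of_lt (lt_of_lt_of_le hv.2 huT)⟩).symm
  · refine ⟨x T, ?_⟩
    apply Tendsto.congr' (f₁ := fun _ => x T) _ tendsto_const_nhds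
    filter_upwards [Ioo_mem_nhdsLT_of_mem (Set.mem_Ioc.2 ⟨huT, le_rfl⟩)] with v hv
    exact (clampF_ge hT.le x (le_of_lt hv.1)).symm

lemma B_exists_delta (hB0 : B 0 < 1) : ∃ δ : ℝ, 0 < δ ∧ B δ < 1 := by
  have h : Tendsto B (nhdsWithin 0 (Set.Ioi 0)) (nhds (B 0)) :=
    (B.right_continuous 0).tendsto.mono_left (nhdsWithin_mono 0 Set.Ioi_subset_Ici_self)
  have h2 : ∀ᶠ u in nhdsWithin 0 (Set.Ioi 0), B u < 1 := h.eventually_lt_const hB0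
  obtain ⟨δ, hδ1, hδ2⟩ := (h2.and self_mem_nhdsWithin).exists
  exact ⟨δ, hδ2, hδ1⟩

end Aux


end AuxLemmas

/-- If `x` is right-continuous with left-hand limits and `f(y, ·)` is right-continuous with
left-hand limits for every `y`, then the unique bounded Borel solution of the convolution
equation is right-continuous with left-hand limits (Lemma B.1, regularity part). -/
theorem convolutionEquation_solution_rcll
    (B : StieltjesFunction ℝ) (hB : IsNNDistFun B) (hB0 : B 0 < 1)
    (T : ℝ) (hT : 0 < T)
    (x : ℝ → ℝ) (hxm : Measurable (fun t : Set.Icc (0 : ℝ) T => x t))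
    (hxb : ∃ C : ℝ, ∀ t ∈ Set.Icc (0 : ℝ) T, |x t| ≤ C)
    (hxr : RCLLOn x T)
    (f : ℝ → ℝ → ℝ) (hfm : Measurable (Function.uncurry f))
    (hf1 : ∀ (y t : ℝ), 0 ≤ t → |f y t| ≤ |y|)
    (hf2 : ∀ (y₁ y₂ t : ℝ), 0 ≤ t → |f y₁ t - f y₂ t| ≤ |y₁ - y₂|)
    (hfr : ∀ y : ℝ, RCLLOnNonneg (fun t => f y t))
    (y : ℝ → ℝ) (hy : SolvesConv B T x f y) :
    RCLLOn y T := by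
  classical
  obtain ⟨Cx, hCx⟩ := hxb
  obtain ⟨Cy, hCy⟩ := hy.2.1
  obtain ⟨δ, hδ, hq1⟩ := B_exists_delta (B := B) hB0
  have hq0 : 0 ≤ B δ := B_nonneg hB δ
  set X : ℝ → ℝ := clampF T hT.le x with hXdef
  have hXm : Measurable X := clampF_meas hT.le hxm
  have hXb : ∀ u, |X u| ≤ Cx := clampF_bound hT.le hCx
  have hXrc : ∀ u, Tendsto X (nhdsWithin u (Set.Ioi u)) (nhds (X u)) := clampF_rc hT hxr
  have hXll : ∀ u, ∃ L, Tendsto X (nhdsWithin u (Set.Iio u)) (nhds L) := clampF_ll hT hxr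
  have hXIcc : ∀ t ∈ Set.Icc (0:ℝ) T, X t = x t := fun t ht => clampF_eq hT.le x ht
  -- existence of a cadlag solution, by induction on windows of length δ
  have E : ∀ m : ℕ, ∃ (z : ℝ → ℝ) (K : ℝ), Measurable z ∧ (∀ u, |z u| ≤ K) ∧ Cadlag z ∧
      (∀ t ∈ Set.Icc (0:ℝ) T, t ≤ (m:ℝ)*δ - δ → z t = X t + Iop B f z t) ∧
      (z (min ((m:ℝ)*δ - δ) T) = X (min ((m:ℝ)*δ - δ) T) + Iop B f z (min ((m:ℝ)*δ - δ) T)) := by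
    intro m
    induction m with
    | zero =>
      refine ⟨fun _ => X 0, Cx, measurable_const, fun u => hXb 0, ⟨fun u => tendsto_const_nhds,
        fun u => ⟨X 0, tendsto_const_nhds⟩⟩, ?_, ?_⟩
      · intro t ht htm
        push_cast at htm
        linarith [ht.1]
      · have hmin' : min (((0:ℕ):ℝ)*δ - δ) T = -δ := by
          push_cast
          rw [zero_mul, zero_sub]
          exact min_eq_left (by linarith)
        rw [hmin']
        show X 0 = X (-δ) + Iop B f (fun _ => X 0) (-δ)
        have h1 : X (-δ) = x 0 := clampF_le_left hT.le x (by linarith)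
        have h2 : X 0 = x 0 := clampF_le_left hT.le x le_rfl
        rw [Iop_neg (by linarith), add_zero, h1, h2]
    | succ m ih =>
      obtain ⟨z, K, hzm, hzb, hzc, hzeq, hzbd⟩ := ih
      rcases le_or_gt T ((m:ℝ)*δ - δ) with hTm|hTm
      · -- already done
        refine ⟨z, K, hzm, hzb, hzc, fun t ht _ => hzeq t ht (le_trans ht.2 hTm), ?_⟩
        have h1 : min ((m:ℝ)*δ - δ) T = T := min_eq_right hTm
        have h2 : min (((m:ℕ)+1:ℝ)*δ - δ) T = T := min_eq_right (by push_cast; nlinarith)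
        rw [show (((m+1:ℕ)):ℝ) = ((m:ℝ)+1) by push_cast; ring]
        rw [h2, ← h1]
        exact hzbd
      · -- new window
        set a : ℝ := (m:ℝ)*δ - δ with hadef
        set b : ℝ := min ((m:ℝ)*δ) T with hbdef
        have hab : a < b := lt_min (by linarith) hTm
        have hba : b - a ≤ δ := by
          have : b ≤ (m:ℝ)*δ := min_le_left _ _
          linarith
        have hza : z a = X a + Iop B f z a := by
          have := hzbd
          rwa [min_eq_left (le_of_lt hTm)] at this
        obtain ⟨z', K', hz'm, hz'b, hz'c, hz'z, hz'eq⟩ :=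
          exists_step hB hfm hf1 hf2 hfr hXm hXb hXrc hXll hδ hq1 hab hba hzm hzb hzc hza
        refine ⟨z', K', hz'm, hz'b, hz'c, ?_, ?_⟩
        · intro t ht htm
          rcases le_or_gt t a with hta|hta
          · rw [hz'z t hta, hzeq t ht hta, Iop_congr (fun u hu0 hua => (hz'z u (le_trans hua hta)).symm)]
          · have htb : t ≤ b := by
              refine le_min ?_ ht.2
              push_cast at htm
              linarith
            exact hz'eq t hta htb
        · have hbeq : min (((m:ℕ)+1:ℝ)*δ - δ) T = b := by
            rw [hbdef]
            congr 1
            push_cast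
            ring
          rw [show (((m+1:ℕ)):ℝ) = ((m:ℝ)+1) by push_cast; ring]
          rw [hbeq]
          exact hz'eq b hab le_rfl
  -- pick m₀ with m₀·δ - δ ≥ T
  obtain ⟨m₀, hm₀⟩ := exists_nat_ge ((T + δ)/δ)
  have hm₀' : T ≤ (m₀:ℝ)*δ - δ := by
    rw [div_le_iff₀ hδ] at hm₀
    linarith
  obtain ⟨Z, K, hZm, hZb, hZc, hZeq, -⟩ := E m₀
  have hZeq' : ∀ t ∈ Set.Icc (0:ℝ) T, Z t = x t + Iop B f Z t := by
    intro t ht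
    rw [hZeq t ht (le_trans ht.2 hm₀'), hXIcc t ht]
  -- the given solution, extended to the line
  set Y : ℝ → ℝ := clampF T hT.le y with hYdef
  have hYm : Measurable Y := clampF_meas hT.le hy.1
  have hYb : ∀ u, |Y u| ≤ Cy := clampF_bound hT.le hCy
  have hYIcc : ∀ t ∈ Set.Icc (0:ℝ) T, Y t = y t := fun t ht => clampF_eq hT.le y ht
  have hYeq : ∀ t ∈ Set.Icc (0:ℝ) T, Y t = x t + Iop B f Y t := by
    intro t ht
    rw [hYIcc t ht, hy.2.2 t ht]
    congr 1
    unfold Iop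
    refine setIntegral_congr_fun measurableSet_Icc (fun s hs => ?_)
    rw [hYIcc (t - s) ⟨by linarith [hs.1, hs.2], by linarith [hs.1, hs.2, ht.2]⟩]
  -- uniqueness: Y = Z on [0,T]
  have huniq : ∀ t ∈ Set.Icc (0:ℝ) T, y t = Z t := by
    have outer : ∀ m : ℕ, ∀ t ∈ Set.Icc (0:ℝ) T, t ≤ (m:ℝ)*δ - δ → Y t = Z t := by
      intro m
      induction m with
      | zero =>
        intro t ht htm
        push_cast at htm
        linarith [ht.1]
      | succ m ih =>
        set C₀ : ℝ := max Cy K with hC₀def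
        have hCyC : Cy ≤ C₀ := le_max_left _ _
        have hKC : K ≤ C₀ := le_max_right _ _
        have hC₀0 : 0 ≤ C₀ := le_trans (le_trans (abs_nonneg _) (hYb 0)) hCyC
        have inner : ∀ k : ℕ, ∀ t ∈ Set.Icc (0:ℝ) T, t ≤ ((m:ℝ)+1)*δ - δ →
            |Y t - Z t| ≤ 2*C₀*(B δ)^k := by
          intro k
          induction k with
          | zero =>
            intro t ht htm
            calc |Y t - Z t| ≤ |Y t| + |Z t| := abs_sub _ _
              _ ≤ Cy + K := add_le_add (hYb t) (hZb t)
              _ ≤ 2*C₀*(B δ)^0 := by rw [pow_zero, mul_one]; linarith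
          | succ k ihk =>
            intro t ht htm
            rcases le_or_gt t ((m:ℝ)*δ - δ) with h|h
            · rw [ih t ht h, sub_self, abs_zero]
              positivity
            · have hYt := hYeq t ht
              have hZt := hZeq' t ht
              have heq : Y t - Z t = Iop B f Y t - Iop B f Z t := by
                rw [hYt, hZt]; ring
              rw [heq]
              unfold Iop
              have hcore := core_est (δ := δ) hB
                (F_intble hB hfm hf1 hYm hYb t) (F_intble hB hfm hf1 hZm hZb t)
                le_rfl (by positivity) (c2 := 2*C₀*(B δ)^k) ?_
              · calc |_ - _| ≤ 0 + 2*C₀*(B δ)^k * B δ := hcore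
                  _ = 2*C₀*(B δ)^(k+1) := by ring
              · intro s hs
                have hu0 : 0 ≤ t - s := by linarith [hs.1, hs.2]
                have huT : t - s ≤ T := by linarith [hs.1, hs.2, ht.2]
                rcases le_or_gt (t - s) ((m:ℝ)*δ - δ) with h'|h'
                · have : Y (t - s) = Z (t - s) := ih (t - s) ⟨hu0, huT⟩ h'
                  rw [Real.norm_eq_abs,
                    show f (Y (t-s)) (t-s) - f (Z (t-s)) (t-s) = 0 by rw [this]; ring]
                  simp only [abs_zero, zero_add]
                  exact Set.indicator_nonneg (fun _ _ => by positivity) s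
                · have hmem : s ∈ Set.Icc 0 δ := ⟨hs.1, by linarith⟩
                  rw [Set.indicator_of_mem hmem, Real.norm_eq_abs, zero_add]
                  exact (hf2 _ _ _ hu0).trans (ihk (t - s) ⟨hu0, huT⟩ (by linarith [hs.1]))
        intro t ht htm
        have hlim : Tendsto (fun k : ℕ => 2*C₀*(B δ)^k) atTop (nhds 0) := by
          have := (tendsto_pow_atTop_nhds_zero_of_lt_one hq0 hq1).const_mul (2*C₀)
          simpa using this
        have hle : |Y t - Z t| ≤ 0 := by
          refine ge_of_tendsto hlim (Eventually.of_forall (fun k => ?_))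
          exact inner k t ht (by push_cast at htm ⊢; linarith)
        have := le_antisymm hle (abs_nonneg _)
        rwa [abs_eq_zero, sub_eq_zero] at this
    intro t ht
    rw [← hYIcc t ht]
    exact outer m₀ t ht (le_trans ht.2 hm₀')
  -- conclude
  constructor
  · intro t ht
    have h := hZc.1 t
    rw [← huniq t ⟨ht.1, le_of_lt ht.2⟩] at h
    apply Tendsto.congr' _ h
    filter_upwards [Ioo_mem_nhdsGT_of_mem (Set.mem_Ico.2 ⟨le_refl t, ht.2⟩)] with v hv
    exact (huniq v ⟨le_trans ht.1 (le_of_lt hv.1), le_of_lt hv.2⟩).symm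
  · intro t ht
    obtain ⟨L, hL⟩ := hZc.2 t
    refine ⟨L, ?_⟩
    apply Tendsto.congr' _ hL
    filter_upwards [Ioo_mem_nhdsLT_of_mem (Set.mem_Ioc.2 ⟨ht.1, le_rfl⟩)] with v hv
    exact (huniq v ⟨le_of_lt hv.1, le_of_lt (lt_of_lt_of_le hv.2 ht.2)⟩).symm
end

section
/- Let B be a distribution function of a nonnegative random variable with B(0) < 1, let T > 0, let x : [0,T] → ℝ be bounded Borel, and let f : ℝ × [0,∞) → ℝ be Borel with |f(y,t)| ≤ |y| and |f(y₁,t) − f(y₂,t)| ≤ |y₁ − y₂| for all y, y₁, y₂, t. Suppose x is continuous on [0,T], for each y ∈ ℝ the function t ↦ f(y,t) admits limits on the right and limits on the left at every point, and B is continuous on [0,T] with B(0) = 0. Then the unique bounded Borel solution y of y(t) = x(t) + ∫₀ᵗ f(y(t−s), t−s) dB(s), t ∈ [0,T], is continuous. -/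
open MeasureTheory Filter Set Topology

/-- `g` admits limits on the right and limits on the left at every point of `[0,∞)`. -/
def HasOneSidedLimitsNonneg (g : ℝ → ℝ) : Prop :=
  (∀ t ≥ (0 : ℝ), ∃ L : ℝ, Tendsto g (nhdsWithin t (Set.Ioi t)) (nhds L)) ∧
  (∀ t > (0 : ℝ), ∃ L : ℝ, Tendsto g (nhdsWithin t (Set.Iio t)) (nhds L))


lemma isolated_countable {S : Set ℝ}
    (h : ∀ u ∈ S, ∃ p q : ℚ, (p : ℝ) < u ∧ u < q ∧
      ∀ w ∈ S, (p : ℝ) < w → w < (q : ℝ) → w = u) : S.Countable := by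
  choose p q hp hq hiso using fun u : S => h u u.2
  rw [Set.countable_iff_exists_injective]
  refine ⟨fun u => Encodable.encode (p u, q u), ?_⟩
  intro u v huv
  have := Encodable.encode_injective huv
  have h1 : p u = p v := by simpa using congrArg Prod.fst this
  have h2 : q u = q v := by simpa using congrArg Prod.snd this
  have := hiso u v v.2 (h1 ▸ hp v) (h2 ▸ hq v)
  exact (Subtype.ext this).symm

lemma countable_not_rightCont {T : ℝ} {g : ℝ → ℝ}
    (hR : ∀ u ∈ Ico (0:ℝ) T, ∃ L, Tendsto g (𝓝[>] u) (𝓝 L))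
    (hL : ∀ u ∈ Ioc (0:ℝ) T, ∃ L, Tendsto g (𝓝[<] u) (𝓝 L)) :
    {u ∈ Ico (0:ℝ) T | ¬ Tendsto g (𝓝[>] u) (𝓝 (g u))}.Countable := by
  classical
  set R : ℝ → ℝ := fun u => if h : u ∈ Ico (0:ℝ) T then (hR u h).choose else 0 with hRdef
  have hRspec : ∀ u ∈ Ico (0:ℝ) T, Tendsto g (𝓝[>] u) (𝓝 (R u)) := by
    intro u hu; rw [hRdef]; simp only [dif_pos hu]; exact (hR u hu).choose_spec
  set S := {u ∈ Ico (0:ℝ) T | ¬ Tendsto g (𝓝[>] u) (𝓝 (g u))} with hS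
  have hSsub : ∀ u ∈ S, R u ≠ g u := by
    intro u hu heq
    exact hu.2 (heq ▸ hRspec u hu.1)
  -- decompose into Sn
  have : S ⊆ ⋃ n : ℕ, {u ∈ S | 1 / ((n:ℝ) + 1) < |R u - g u|} := by
    intro u hu
    have : 0 < |R u - g u| := abs_pos.2 (sub_ne_zero.2 (hSsub u hu))
    obtain ⟨n, hn⟩ := exists_nat_one_div_lt this
    exact Set.mem_iUnion.2 ⟨n, hu, hn⟩
  refine Set.Countable.mono this (Set.countable_iUnion fun n => ?_)
  set ε : ℝ := 1 / (4 * ((n:ℝ) + 1)) with hε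
  have hεpos : 0 < ε := by positivity
  set Sn := {u ∈ S | 1 / ((n:ℝ) + 1) < |R u - g u|} with hSn
  apply isolated_countable
  intro u hu
  have huIco : u ∈ Ico (0:ℝ) T := hu.1.1
  -- right clearing
  have hevR : ∀ᶠ v in 𝓝[>] u, |g v - R u| < ε := by
    have := Metric.tendsto_nhds.1 (hRspec u huIco) ε hεpos
    filter_upwards [this] with v hv using by simpa [Real.dist_eq] using hv
  obtain ⟨b, hbu, hbsub⟩ := mem_nhdsGT_iff_exists_Ioo_subset.1 hevR
  -- claim: no Sn points in (u, b)
  have hright : ∀ w ∈ Sn, u < w → w < b → False := by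
    intro w hw h1 h2
    have hgw : |g w - R u| < ε := hbsub ⟨h1, h2⟩
    have hRw : |R w - R u| ≤ ε := by
      have ht : Tendsto (fun v => |g v - R u|) (𝓝[>] w) (𝓝 (|R w - R u|)) :=
        ((hRspec w hw.1.1).sub_const _).abs
      refine le_of_tendsto ht ?_
      filter_upwards [Ioo_mem_nhdsGT_of_mem ⟨le_refl w, h2⟩] with v hv
      exact le_of_lt (hbsub ⟨lt_trans h1 hv.1, hv.2⟩)
    have : |R w - g w| ≤ 2 * ε := by
      have := abs_sub_le (R w) (R u) (g w)
      calc |R w - g w| ≤ |R w - R u| + |R u - g w| := this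
        _ ≤ ε + ε := add_le_add hRw (by rw [abs_sub_comm]; exact le_of_lt hgw)
        _ = 2 * ε := by ring
    have hlt : 1 / ((n:ℝ) + 1) < 2 * ε := lt_of_lt_of_le hw.2 this
    rw [hε] at hlt
    have hc : (0:ℝ) < (n:ℝ)+1 := by positivity
    have h2c : 2 * (1 / (4 * ((n:ℝ) + 1))) = 1 / (2*((n:ℝ)+1)) := by field_simp; ring
    rw [h2c] at hlt
    have := lt_of_one_div_lt_one_div hc hlt
    linarith
  -- left clearing
  have hleft : ∃ a < u, ∀ w ∈ Sn, a < w → w < u → False := by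
    rcases eq_or_lt_of_le huIco.1 with h0 | h0
    · refine ⟨u - 1, by linarith, fun w hw h1 h2 => ?_⟩
      have hw0 : (0:ℝ) ≤ w := hw.1.1.1
      rw [← h0] at h2; linarith
    · obtain ⟨M, hM⟩ := hL u ⟨h0, le_of_lt huIco.2⟩
      have hevL : ∀ᶠ v in 𝓝[<] u, |g v - M| < ε := by
        have := Metric.tendsto_nhds.1 hM ε hεpos
        filter_upwards [this] with v hv using by simpa [Real.dist_eq] using hv
      obtain ⟨a, hau, hasub⟩ := mem_nhdsLT_iff_exists_Ioo_subset.1 hevL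
      refine ⟨a, hau, fun w hw h1 h2 => ?_⟩
      have hgw : |g w - M| < ε := hasub ⟨h1, h2⟩
      have hRw : |R w - M| ≤ ε := by
        have ht : Tendsto (fun v => |g v - M|) (𝓝[>] w) (𝓝 (|R w - M|)) :=
          ((hRspec w hw.1.1).sub_const _).abs
        refine le_of_tendsto ht ?_
        filter_upwards [Ioo_mem_nhdsGT_of_mem ⟨le_refl w, h2⟩] with v hv
        exact le_of_lt (hasub ⟨lt_trans h1 hv.1, hv.2⟩)
      have : |R w - g w| ≤ 2 * ε := by
        calc |R w - g w| ≤ |R w - M| + |M - g w| := abs_sub_le _ _ _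
          _ ≤ ε + ε := add_le_add hRw (by rw [abs_sub_comm]; exact le_of_lt hgw)
          _ = 2 * ε := by ring
      have hlt : 1 / ((n:ℝ) + 1) < 2 * ε := lt_of_lt_of_le hw.2 this
      rw [hε] at hlt
      have hc : (0:ℝ) < (n:ℝ)+1 := by positivity
      have h2c : 2 * (1 / (4 * ((n:ℝ) + 1))) = 1 / (2*((n:ℝ)+1)) := by field_simp; ring
      rw [h2c] at hlt
      have := lt_of_one_div_lt_one_div hc hlt
      linarith
  obtain ⟨a, hau, ha⟩ := hleft
  obtain ⟨p, hp1, hp2⟩ := exists_rat_btwn hau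
  obtain ⟨qq, hq1, hq2⟩ := exists_rat_btwn (show u < b from hbu)
  refine ⟨p, qq, hp2, hq1, fun w hw hpw hwq => ?_⟩
  rcases lt_trichotomy w u with h | h | h
  · exact absurd (ha w hw (lt_trans hp1 hpw) h) (fun x => x)
  · exact h
  · exact absurd (hright w hw h (lt_trans hwq hq2)) (fun x => x)

lemma countable_not_leftCont {T : ℝ} {g : ℝ → ℝ}
    (hR : ∀ u ∈ Ico (0:ℝ) T, ∃ L, Tendsto g (𝓝[>] u) (𝓝 L))
    (hL : ∀ u ∈ Ioc (0:ℝ) T, ∃ L, Tendsto g (𝓝[<] u) (𝓝 L)) :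
    {u ∈ Ioc (0:ℝ) T | ¬ Tendsto g (𝓝[<] u) (𝓝 (g u))}.Countable := by
  set g' : ℝ → ℝ := fun v => g (T - v) with hg'
  have hmapR : ∀ w : ℝ, Tendsto (fun v => T - v) (𝓝[>] w) (𝓝[<] (T - w)) := by
    intro w
    apply tendsto_nhdsWithin_of_tendsto_nhds_of_eventually_within
    · exact Tendsto.mono_left ((continuous_const.sub continuous_id).tendsto w) nhdsWithin_le_nhds
    · filter_upwards [self_mem_nhdsWithin] with v hv
      exact sub_lt_sub_left hv T
  have hmapL : ∀ w : ℝ, Tendsto (fun v => T - v) (𝓝[<] w) (𝓝[>] (T - w)) := by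
    intro w
    apply tendsto_nhdsWithin_of_tendsto_nhds_of_eventually_within
    · exact Tendsto.mono_left ((continuous_const.sub continuous_id).tendsto w) nhdsWithin_le_nhds
    · filter_upwards [self_mem_nhdsWithin] with v hv
      exact sub_lt_sub_left hv T
  have hR' : ∀ w ∈ Ico (0:ℝ) T, ∃ L, Tendsto g' (𝓝[>] w) (𝓝 L) := by
    intro w hw
    obtain ⟨L, hLt⟩ := hL (T - w) ⟨by linarith [hw.2], by linarith [hw.1]⟩
    exact ⟨L, hLt.comp (hmapR w)⟩
  have hL' : ∀ w ∈ Ioc (0:ℝ) T, ∃ L, Tendsto g' (𝓝[<] w) (𝓝 L) := by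
    intro w hw
    obtain ⟨L, hLt⟩ := hR (T - w) ⟨by linarith [hw.2], by linarith [hw.1]⟩
    exact ⟨L, hLt.comp (hmapL w)⟩
  have hcnt := countable_not_rightCont hR' hL'
  refine Set.Countable.mono ?_ (hcnt.image (fun v => T - v))
  intro u hu
  refine ⟨T - u, ⟨⟨by linarith [hu.1.2], by linarith [hu.1.1]⟩, ?_⟩, by ring⟩
  intro hcontra
  apply hu.2
  have : Tendsto (g' ∘ (fun v => T - v)) (𝓝[<] u) (𝓝 (g' (T - u))) := by
    have heq : T - (T - u) = u := by ring
    exact hcontra.comp (heq ▸ hmapL u)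
  have hgeq : g' (T - u) = g u := by simp [hg']
  rw [hgeq] at this
  apply this.congr
  intro v; simp [hg']

lemma conv_continuousOn {μ : Measure ℝ} {T : ℝ} (hT : 0 < T)
    (hfin : μ (Icc (0:ℝ) T) ≠ ⊤) (hatom : ∀ a ∈ Icc (0:ℝ) T, μ {a} = 0)
    {g : ℝ → ℝ} {C : ℝ} (hgb : ∀ u ∈ Icc (0:ℝ) T, |g u| ≤ C)
    (hgm : ∀ t ∈ Icc (0:ℝ) T, AEStronglyMeasurable (fun s => g (t - s)) (μ.restrict (Icc 0 t)))
    (hgR : ∀ u ∈ Ico (0:ℝ) T, ∃ L, Tendsto g (𝓝[>] u) (𝓝 L))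
    (hgL : ∀ u ∈ Ioc (0:ℝ) T, ∃ L, Tendsto g (𝓝[<] u) (𝓝 L)) :
    ContinuousOn (fun t => ∫ s in Icc (0:ℝ) t, g (t - s) ∂μ) (Icc (0:ℝ) T) := by
  classical
  set ν := μ.restrict (Icc (0:ℝ) T) with hν
  haveI : IsFiniteMeasure ν := by
    constructor
    rw [hν, Measure.restrict_apply_univ]
    exact lt_top_iff_ne_top.2 hfin
  have hνsing : ∀ a : ℝ, ν {a} = 0 := by
    intro a
    rw [hν, Measure.restrict_apply (measurableSet_singleton a)]
    by_cases ha : a ∈ Icc (0:ℝ) T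
    · rw [Set.inter_eq_self_of_subset_left (Set.singleton_subset_iff.2 ha)]
      exact hatom a ha
    · rw [Set.singleton_inter_eq_empty.mpr ha, measure_empty]
  have hνcnt : ∀ s : Set ℝ, s.Countable → ν s = 0 := by
    intro s hs
    rw [← Set.biUnion_of_singleton s]
    exact (measure_biUnion_null_iff hs).2 fun a _ => hνsing a
  have hSRc := countable_not_rightCont hgR hgL
  have hSLc := countable_not_leftCont hgR hgL
  set S_R := {u ∈ Ico (0:ℝ) T | ¬ Tendsto g (𝓝[>] u) (𝓝 (g u))} with hS_R
  set S_L := {u ∈ Ioc (0:ℝ) T | ¬ Tendsto g (𝓝[<] u) (𝓝 (g u))} with hS_L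
  set C' := max C 0 with hC'
  set F : ℝ → ℝ → ℝ := fun t' s => Set.indicator (Icc 0 t') (fun s => g (t' - s)) s with hF
  have hFval : ∀ t' ∈ Icc (0:ℝ) T, ∫ s, F t' s ∂ν = ∫ s in Icc (0:ℝ) t', g (t' - s) ∂μ := by
    intro t' ht'
    rw [hF, integral_indicator measurableSet_Icc, hν,
      Measure.restrict_restrict measurableSet_Icc,
      Set.inter_eq_self_of_subset_left (Set.Icc_subset_Icc le_rfl ht'.2)]
  have hFmeas : ∀ t' ∈ Icc (0:ℝ) T, AEStronglyMeasurable (F t') ν := by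
    intro t' ht'
    rw [hF, aestronglyMeasurable_indicator_iff measurableSet_Icc, hν,
      Measure.restrict_restrict measurableSet_Icc,
      Set.inter_eq_self_of_subset_left (Set.Icc_subset_Icc le_rfl ht'.2)]
    exact hgm t' ht'
  have hFbd : ∀ t' ∈ Icc (0:ℝ) T, ∀ s, ‖F t' s‖ ≤ C' := by
    intro t' ht' s
    by_cases hs : s ∈ Icc (0:ℝ) t'
    · have heq : F t' s = g (t' - s) := Set.indicator_of_mem hs _
      rw [heq, Real.norm_eq_abs]
      exact le_trans (hgb _ ⟨by linarith [hs.2], by linarith [hs.1, ht'.2]⟩) (le_max_left _ _)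
    · have heq : F t' s = 0 := Set.indicator_of_notMem hs _
      rw [heq, norm_zero]
      exact le_max_right C 0
  intro t ht
  set lR := 𝓝[Icc (0:ℝ) T ∩ Ioi t] t with hlR
  set lL := 𝓝[Icc (0:ℝ) T ∩ Iio t] t with hlL
  have hRt : Tendsto (fun t' => ∫ s, F t' s ∂ν) lR (𝓝 (∫ s, F t s ∂ν)) := by
    rcases eq_or_lt_of_le ht.2 with htT | htT
    · have : Icc (0:ℝ) T ∩ Ioi t = ∅ := by
        ext v; simp only [Set.mem_inter_iff, Set.mem_Icc, Set.mem_Ioi, Set.mem_empty_iff_false,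
          iff_false]
        rintro ⟨⟨_, h1⟩, h2⟩; rw [← htT] at h1; linarith
      rw [hlR, this, nhdsWithin_empty]
      exact tendsto_bot
    · have hbase : Icc (0:ℝ) T ∩ Ioi t ∈ lR := self_mem_nhdsWithin
      apply tendsto_integral_filter_of_dominated_convergence (bound := fun _ => C')
      · filter_upwards [hbase] with t' ht'
        exact hFmeas t' ht'.1
      · filter_upwards [hbase] with t' ht'
        exact ae_of_all _ fun s => hFbd t' ht'.1 s
      · exact integrable_const _
      · have hN : ν ({t} ∪ ((fun u => t - u) '' S_R)) = 0 := by
          apply measure_union_null (hνsing t)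
          exact hνcnt _ (hSRc.image _)
        filter_upwards [ae_restrict_mem measurableSet_Icc,
          (measure_eq_zero_iff_ae_notMem.1 hN)] with s hsIcc hsN
        have hst : s ≠ t := fun h => hsN (Or.inl (by simp [h]))
        rcases lt_or_gt_of_ne hst with hlt | hgt
        · -- s < t
          have hFts : F t s = g (t - s) := by
            exact Set.indicator_of_mem (show s ∈ Icc (0:ℝ) t from ⟨hsIcc.1, le_of_lt hlt⟩) _
          have hmem : ∀ᶠ t' in lR, F t' s = g (t' - s) := by
            filter_upwards [hbase] with t' ht'
            exact Set.indicator_of_mem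
              (show s ∈ Icc (0:ℝ) t' from ⟨hsIcc.1, le_of_lt (lt_trans hlt ht'.2)⟩) _
          have hu : t - s ∈ Ico (0:ℝ) T := ⟨by linarith, by linarith [hsIcc.1]⟩
          have hrc : Tendsto g (𝓝[>] (t - s)) (𝓝 (g (t - s))) := by
            by_contra hcon
            exact hsN (Or.inr ⟨t - s, ⟨hu, hcon⟩, by ring⟩)
          have hcomp : Tendsto (fun t' => t' - s) lR (𝓝[>] (t - s)) := by
            apply tendsto_nhdsWithin_of_tendsto_nhds_of_eventually_within
            · exact Tendsto.mono_left ((continuous_id.sub continuous_const).tendsto t)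
                nhdsWithin_le_nhds
            · filter_upwards [hbase] with t' ht'
              exact sub_lt_sub_right ht'.2 s
          rw [hFts]
          exact (hrc.comp hcomp).congr' (hmem.mono fun t' h => h.symm)
        · -- s > t
          have hFts : F t s = 0 := by
            exact Set.indicator_of_notMem (fun h => absurd h.2 (not_le.2 hgt)) _
          have hmem : ∀ᶠ t' in lR, F t' s = 0 := by
            have : Iio s ∈ 𝓝 t := Iio_mem_nhds hgt
            filter_upwards [nhdsWithin_le_nhds this] with t' ht'
            exact Set.indicator_of_notMem (fun h => absurd h.2 (not_le.2 ht')) _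
          rw [hFts]
          exact tendsto_const_nhds.congr' (hmem.mono fun t' h => h.symm)
  have hLt : Tendsto (fun t' => ∫ s, F t' s ∂ν) lL (𝓝 (∫ s, F t s ∂ν)) := by
    rcases eq_or_lt_of_le ht.1 with ht0 | ht0
    · have : Icc (0:ℝ) T ∩ Iio t = ∅ := by
        ext v; simp only [Set.mem_inter_iff, Set.mem_Icc, Set.mem_Iio, Set.mem_empty_iff_false,
          iff_false]
        rintro ⟨⟨h1, _⟩, h2⟩; rw [← ht0] at h2; linarith
      rw [hlL, this, nhdsWithin_empty]
      exact tendsto_bot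
    · have hbase : Icc (0:ℝ) T ∩ Iio t ∈ lL := self_mem_nhdsWithin
      apply tendsto_integral_filter_of_dominated_convergence (bound := fun _ => C')
      · filter_upwards [hbase] with t' ht'
        exact hFmeas t' ht'.1
      · filter_upwards [hbase] with t' ht'
        exact ae_of_all _ fun s => hFbd t' ht'.1 s
      · exact integrable_const _
      · have hN : ν ({t} ∪ ((fun u => t - u) '' S_L)) = 0 := by
          apply measure_union_null (hνsing t)
          exact hνcnt _ (hSLc.image _)
        filter_upwards [ae_restrict_mem measurableSet_Icc,
          (measure_eq_zero_iff_ae_notMem.1 hN)] with s hsIcc hsN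
        have hst : s ≠ t := fun h => hsN (Or.inl (by simp [h]))
        rcases lt_or_gt_of_ne hst with hlt | hgt
        · -- s < t
          have hFts : F t s = g (t - s) := by
            exact Set.indicator_of_mem (show s ∈ Icc (0:ℝ) t from ⟨hsIcc.1, le_of_lt hlt⟩) _
          have hmem : ∀ᶠ t' in lL, F t' s = g (t' - s) := by
            have : Ioi s ∈ 𝓝 t := Ioi_mem_nhds hlt
            filter_upwards [nhdsWithin_le_nhds this] with t' ht'
            exact Set.indicator_of_mem (show s ∈ Icc (0:ℝ) t' from ⟨hsIcc.1, le_of_lt ht'⟩) _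
          have hu : t - s ∈ Ioc (0:ℝ) T := ⟨by linarith, by linarith [hsIcc.1, ht.2]⟩
          have hrc : Tendsto g (𝓝[<] (t - s)) (𝓝 (g (t - s))) := by
            by_contra hcon
            exact hsN (Or.inr ⟨t - s, ⟨hu, hcon⟩, by ring⟩)
          have hcomp : Tendsto (fun t' => t' - s) lL (𝓝[<] (t - s)) := by
            apply tendsto_nhdsWithin_of_tendsto_nhds_of_eventually_within
            · exact Tendsto.mono_left ((continuous_id.sub continuous_const).tendsto t)
                nhdsWithin_le_nhds
            · filter_upwards [hbase] with t' ht'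
              exact sub_lt_sub_right ht'.2 s
          rw [hFts]
          exact (hrc.comp hcomp).congr' (hmem.mono fun t' h => h.symm)
        · -- s > t
          have hFts : F t s = 0 := by
            exact Set.indicator_of_notMem (fun h => absurd h.2 (not_le.2 hgt)) _
          have hmem : ∀ᶠ t' in lL, F t' s = 0 := by
            filter_upwards [hbase] with t' ht'
            exact Set.indicator_of_notMem
              (fun h => absurd h.2 (not_le.2 (lt_trans ht'.2 hgt))) _
          rw [hFts]
          exact tendsto_const_nhds.congr' (hmem.mono fun t' h => h.symm)
  have hsplit : 𝓝[Icc (0:ℝ) T] t ≤ lL ⊔ (pure t ⊔ lR) := by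
    have hsub : Icc (0:ℝ) T ⊆ (Icc (0:ℝ) T ∩ Iio t) ∪ ({t} ∪ (Icc (0:ℝ) T ∩ Ioi t)) := by
      intro v hv
      rcases lt_trichotomy v t with h | h | h
      · exact Or.inl ⟨hv, h⟩
      · exact Or.inr (Or.inl h)
      · exact Or.inr (Or.inr ⟨hv, h⟩)
    calc 𝓝[Icc (0:ℝ) T] t
        ≤ 𝓝[(Icc (0:ℝ) T ∩ Iio t) ∪ ({t} ∪ (Icc (0:ℝ) T ∩ Ioi t))] t := nhdsWithin_mono t hsub
      _ = lL ⊔ (pure t ⊔ lR) := by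
          rw [nhdsWithin_union, nhdsWithin_union, nhdsWithin_singleton]
  have hH : ContinuousWithinAt (fun t' => ∫ s, F t' s ∂ν) (Icc (0:ℝ) T) t := by
    refine Tendsto.mono_left ?_ hsplit
    exact tendsto_sup.2 ⟨hLt, tendsto_sup.2 ⟨tendsto_pure_nhds _ _, hRt⟩⟩
  exact (hH.congr (fun t' ht' => (hFval t' ht').symm) (hFval t ht).symm : _)

theorem convolutionEquation_solution_continuous'
    (B : StieltjesFunction ℝ) (hB : (∀ x < (0 : ℝ), B x = 0))
    (T : ℝ) (hT : 0 < T)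
    (hBcont : ContinuousOn (fun u => B u) (Set.Icc (0 : ℝ) T)) (hBzero : B 0 = 0)
    (x : ℝ → ℝ)
    (hxc : ContinuousOn x (Set.Icc (0 : ℝ) T))
    (f : ℝ → ℝ → ℝ) (hfm : Measurable (Function.uncurry f))
    (hf1 : ∀ (y t : ℝ), 0 ≤ t → |f y t| ≤ |y|)
    (hf2 : ∀ (y₁ y₂ t : ℝ), 0 ≤ t → |f y₁ t - f y₂ t| ≤ |y₁ - y₂|)
    (hfl : ∀ y : ℝ, (∀ t ≥ (0 : ℝ), ∃ L : ℝ, Tendsto (fun u => f y u) (𝓝[>] t) (𝓝 L)) ∧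
      (∀ t > (0 : ℝ), ∃ L : ℝ, Tendsto (fun u => f y u) (𝓝[<] t) (𝓝 L)))
    (y : ℝ → ℝ) (hym : Measurable (fun t : Set.Icc (0 : ℝ) T => y t))
    (Cy : ℝ) (hCy : ∀ t ∈ Set.Icc (0 : ℝ) T, |y t| ≤ Cy)
    (heq : ∀ t ∈ Set.Icc (0 : ℝ) T,
      y t = x t + ∫ s in Set.Icc (0 : ℝ) t, f (y (t - s)) (t - s) ∂B.measure) :
    ContinuousOn y (Set.Icc (0 : ℝ) T) := by
  classical
  set μ := B.measure with hμdef
  have hIccT : IsCompact (Icc (0:ℝ) T) := isCompact_Icc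
  have hfin : μ (Icc (0:ℝ) T) ≠ ⊤ := hIccT.measure_lt_top.ne
  -- no atoms on [0, T]
  have hatom : ∀ a ∈ Icc (0:ℝ) T, μ {a} = 0 := by
    intro a ha
    rw [hμdef, B.measure_singleton]
    have hll : Function.leftLim (⇑B) a = B a := by
      have hne : 𝓝[<] a ≠ ⊥ := (nhdsLT_neBot a).ne'
      rcases eq_or_lt_of_le ha.1 with h0 | h0
      · have htend : Tendsto (⇑B) (𝓝[<] a) (𝓝 (B a)) := by
          rw [← h0, hBzero]
          have hev : ∀ᶠ v in 𝓝[<] (0:ℝ), B v = 0 := by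
            filter_upwards [self_mem_nhdsWithin] with v hv using hB v hv
          exact Tendsto.congr' (hev.mono fun v h => h.symm) tendsto_const_nhds
        exact leftLim_eq_of_tendsto htend
      · have htend : Tendsto (⇑B) (𝓝[<] a) (𝓝 (B a)) := by
          have hc : Tendsto (⇑B) (𝓝[Icc (0:ℝ) T] a) (𝓝 (B a)) := hBcont a ha
          have hmono : 𝓝[Ico (0:ℝ) a] a ≤ 𝓝[Icc (0:ℝ) T] a :=
            nhdsWithin_mono _ fun v hv => ⟨hv.1, le_trans (le_of_lt hv.2) ha.2⟩
          rw [← nhdsWithin_Ico_eq_nhdsLT h0]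
          exact hc.mono_left hmono
        exact leftLim_eq_of_tendsto htend
    rw [hll, sub_self, ENNReal.ofReal_zero]
  -- choice of exponent
  have htendq : Tendsto (fun n : ℕ => ∫ s in Icc (0:ℝ) T, Real.exp (-(n:ℝ) * s) ∂μ)
      atTop (𝓝 0) := by
    have key := tendsto_integral_of_dominated_convergence
      (μ := μ.restrict (Icc (0:ℝ) T)) (F := fun (n : ℕ) s => Real.exp (-(n:ℝ) * s))
      (f := fun _ => (0:ℝ)) (fun _ => (1:ℝ)) ?_ ?_ ?_ ?_
    · simpa using key
    · intro n
      exact (Real.continuous_exp.comp (continuous_const.mul continuous_id)).aestronglyMeasurable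
    · haveI : IsFiniteMeasure (μ.restrict (Icc (0:ℝ) T)) := by
        constructor
        rw [Measure.restrict_apply_univ]
        exact lt_top_iff_ne_top.2 hfin
      exact integrable_const _
    · intro n
      filter_upwards [ae_restrict_mem measurableSet_Icc] with s hs
      rw [Real.norm_eq_abs, abs_of_pos (Real.exp_pos _)]
      exact Real.exp_le_one_iff.2 (by nlinarith [hs.1, Nat.cast_nonneg (α := ℝ) n])
    · have hz : (μ.restrict (Icc (0:ℝ) T)) {(0:ℝ)} = 0 := by
        rw [Measure.restrict_apply (measurableSet_singleton _),
          Set.inter_eq_self_of_subset_left (Set.singleton_subset_iff.2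
            (show (0:ℝ) ∈ Icc (0:ℝ) T from ⟨le_refl _, le_of_lt hT⟩))]
        exact hatom 0 ⟨le_refl _, le_of_lt hT⟩
      filter_upwards [ae_restrict_mem measurableSet_Icc,
        measure_eq_zero_iff_ae_notMem.1 hz] with s hs hs0
      have hspos : 0 < s := lt_of_le_of_ne hs.1 (fun h => hs0 (by simp [← h]))
      have : Tendsto (fun n : ℕ => -(n:ℝ) * s) atTop atBot := by
        have h1 : Tendsto (fun n : ℕ => (n:ℝ) * s) atTop atTop :=
          Tendsto.atTop_mul_const hspos tendsto_natCast_atTop_atTop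
        have h2 : Tendsto (fun n : ℕ => -((n:ℝ) * s)) atTop atBot :=
          tendsto_neg_atTop_atBot.comp h1
        simpa [neg_mul] using h2
      exact Real.tendsto_exp_atBot.comp this
  obtain ⟨n0, hn0⟩ := (Filter.Tendsto.eventually_lt_const (by norm_num : (0:ℝ) < 1) htendq).exists
  set lam : ℝ := (n0 : ℝ) with hlam
  have hlam0 : 0 ≤ lam := Nat.cast_nonneg n0
  set q : ℝ := ∫ s in Icc (0:ℝ) T, Real.exp (-lam * s) ∂μ with hqdef
  have hq1 : q < 1 := hn0
  have hq0 : 0 ≤ q :=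
    setIntegral_nonneg measurableSet_Icc fun s _ => (Real.exp_pos _).le
  -- measurability helper
  have hmeasz : ∀ (z : ℝ → ℝ) (t : ℝ),
      AEMeasurable (fun s => z (t - s)) (μ.restrict (Icc 0 t)) →
      AEStronglyMeasurable (fun s => f (z (t - s)) (t - s)) (μ.restrict (Icc 0 t)) := by
    intro z t hz
    have hsub : AEMeasurable (fun s : ℝ => t - s) (μ.restrict (Icc 0 t)) :=
      (measurable_const.sub measurable_id).aemeasurable
    have hpair := hz.prodMk hsub
    have hcomp := hfm.comp_aemeasurable hpair
    exact (hcomp : AEMeasurable (fun s => f (z (t - s)) (t - s)) _).aestronglyMeasurable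
  have hmeascont : ∀ (z : ℝ → ℝ), ContinuousOn z (Icc (0:ℝ) T) → ∀ t ∈ Icc (0:ℝ) T,
      AEMeasurable (fun s => z (t - s)) (μ.restrict (Icc 0 t)) := by
    intro z hz t ht
    have : ContinuousOn (fun s => z (t - s)) (Icc (0:ℝ) t) := by
      apply hz.comp ((continuous_const.sub continuous_id).continuousOn)
      intro s hs
      exact ⟨by simp; linarith [hs.2], by simp; linarith [hs.1, ht.2]⟩
    exact this.aemeasurable measurableSet_Icc
  -- integrability helper
  have hint : ∀ (z : ℝ → ℝ) (Cz : ℝ), (∀ u ∈ Icc (0:ℝ) T, |z u| ≤ Cz) →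
      ∀ t ∈ Icc (0:ℝ) T,
      AEStronglyMeasurable (fun s => f (z (t - s)) (t - s)) (μ.restrict (Icc 0 t)) →
      IntegrableOn (fun s => f (z (t - s)) (t - s)) (Icc 0 t) μ := by
    intro z Cz hCz t ht hmeas
    haveI : IsFiniteMeasure (μ.restrict (Icc (0:ℝ) t)) := by
      constructor
      rw [Measure.restrict_apply_univ]
      exact isCompact_Icc.measure_lt_top
    apply Integrable.mono' (integrable_const Cz) hmeas
    filter_upwards [ae_restrict_mem measurableSet_Icc] with s hs
    have h1 : t - s ∈ Icc (0:ℝ) T := ⟨by linarith [hs.2], by linarith [hs.1, ht.2]⟩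
    rw [Real.norm_eq_abs]
    exact le_trans (hf1 _ _ h1.1) (hCz _ h1)
  -- globalized solution
  set Y : ℝ → ℝ := fun u => if h : u ∈ Icc (0:ℝ) T then y u else 0 with hYdef
  have hYmeas : Measurable Y := Measurable.dite hym measurable_const measurableSet_Icc
  set M : ℝ := max Cy 0 with hM
  have hM0 : 0 ≤ M := le_max_right _ _
  have hYb : ∀ u ∈ Icc (0:ℝ) T, |Y u| ≤ M := by
    intro u hu
    rw [hYdef]; simp only [dif_pos hu]
    exact le_trans (hCy u hu) (le_max_left _ _)
  have hYeq : ∀ u ∈ Icc (0:ℝ) T, Y u = y u := fun u hu => dif_pos hu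
  have heqY : ∀ t ∈ Icc (0:ℝ) T,
      Y t = x t + ∫ s in Icc (0:ℝ) t, f (Y (t - s)) (t - s) ∂μ := by
    intro t ht
    rw [hYeq t ht, heq t ht]
    congr 1
    apply setIntegral_congr_fun measurableSet_Icc
    intro s hs
    show f (y (t - s)) (t - s) = f (Y (t - s)) (t - s)
    rw [hYeq (t - s) ⟨by linarith [hs.2], by linarith [hs.1, ht.2]⟩]
  -- Picard iterates
  set Z : ℕ → ℝ → ℝ := fun n => n.rec (motive := fun _ => ℝ → ℝ) (fun _ => 0)
    (fun _ zn t => x t + ∫ s in Icc (0:ℝ) t, f (zn (t - s)) (t - s) ∂μ) with hZdef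
  have hZsucc : ∀ n t, Z (n+1) t = x t + ∫ s in Icc (0:ℝ) t, f (Z n (t - s)) (t - s) ∂μ :=
    fun n t => rfl
  have hZcont : ∀ n, ContinuousOn (Z n) (Icc (0:ℝ) T) := by
    intro n
    induction n with
    | zero => exact continuousOn_const
    | succ n ih =>
      obtain ⟨Cn, hCn⟩ := hIccT.exists_bound_of_continuousOn ih
      have happ := conv_continuousOn (μ := μ) (g := fun u => f (Z n u) u) (C := Cn) hT hfin
        hatom ?_ ?_ ?_ ?_
      · refine ContinuousOn.congr (hxc.add happ) ?_
        intro t ht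
        exact hZsucc n t
      · intro u hu
        exact le_trans (hf1 _ _ hu.1) (by rw [← Real.norm_eq_abs]; exact hCn u hu)
      · intro t ht
        exact hmeasz (Z n) t (hmeascont (Z n) ih t ht)
      · intro u hu
        obtain ⟨L, hL⟩ := (hfl (Z n u)).1 u hu.1
        refine ⟨L, ?_⟩
        have hzt : Tendsto (Z n) (𝓝[>] u) (𝓝 (Z n u)) := by
          rw [← nhdsWithin_Ioc_eq_nhdsGT hu.2]
          exact (ih u ⟨hu.1, le_of_lt hu.2⟩).mono_left
            (nhdsWithin_mono _ fun v hv => ⟨le_trans hu.1 (le_of_lt hv.1), hv.2⟩)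
        have habs : Tendsto (fun v => |Z n v - Z n u|) (𝓝[>] u) (𝓝 0) := by
          have := (hzt.sub_const (Z n u)).abs
          simpa using this
        have hdiff : Tendsto (fun v => f (Z n v) v - f (Z n u) v) (𝓝[>] u) (𝓝 0) := by
          apply squeeze_zero_norm' ?_ habs
          filter_upwards [self_mem_nhdsWithin] with v hv
          rw [Real.norm_eq_abs]
          exact hf2 _ _ v (by linarith [hu.1, Set.mem_Ioi.1 hv])
        have := hL.add hdiff
        rw [add_zero] at this
        refine this.congr fun v => ?_
        ring
      · intro u hu
        obtain ⟨L, hL⟩ := (hfl (Z n u)).2 u hu.1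
        refine ⟨L, ?_⟩
        have hzt : Tendsto (Z n) (𝓝[<] u) (𝓝 (Z n u)) := by
          rw [← nhdsWithin_Ico_eq_nhdsLT hu.1]
          exact (ih u ⟨le_of_lt hu.1, hu.2⟩).mono_left
            (nhdsWithin_mono _ fun v hv => ⟨hv.1, le_trans (le_of_lt hv.2) hu.2⟩)
        have habs : Tendsto (fun v => |Z n v - Z n u|) (𝓝[<] u) (𝓝 0) := by
          have := (hzt.sub_const (Z n u)).abs
          simpa using this
        have hdiff : Tendsto (fun v => f (Z n v) v - f (Z n u) v) (𝓝[<] u) (𝓝 0) := by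
          apply squeeze_zero_norm' ?_ habs
          filter_upwards [nhdsWithin_le_nhds (Ioi_mem_nhds hu.1)] with v hv
          rw [Real.norm_eq_abs]
          exact hf2 _ _ v (le_of_lt hv)
        have := hL.add hdiff
        rw [add_zero] at this
        refine this.congr fun v => ?_
        ring
  -- defect estimate
  have hdef : ∀ n, ∀ t ∈ Icc (0:ℝ) T, |Y t - Z n t| ≤ q ^ n * M * Real.exp (lam * t) := by
    intro n
    induction n with
    | zero =>
      intro t ht
      have h1 : |Y t - Z 0 t| = |Y t| := by
        have : Z 0 t = 0 := rfl
        rw [this, sub_zero]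
      rw [h1, pow_zero, one_mul]
      exact le_trans (hYb t ht)
        (le_mul_of_one_le_right hM0 (Real.one_le_exp (mul_nonneg hlam0 ht.1)))
    | succ n ih =>
      intro t ht
      obtain ⟨Cn, hCn⟩ := hIccT.exists_bound_of_continuousOn (hZcont n)
      have hCn' : ∀ u ∈ Icc (0:ℝ) T, |Z n u| ≤ Cn := by
        intro u hu; rw [← Real.norm_eq_abs]; exact hCn u hu
      have hmeas1 : AEStronglyMeasurable (fun s => f (Y (t - s)) (t - s))
          (μ.restrict (Icc 0 t)) :=
        hmeasz Y t ((hYmeas.comp (measurable_const.sub measurable_id)).aemeasurable)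
      have hmeas2 : AEStronglyMeasurable (fun s => f (Z n (t - s)) (t - s))
          (μ.restrict (Icc 0 t)) :=
        hmeasz (Z n) t (hmeascont (Z n) (hZcont n) t ht)
      have hint1 := hint Y M hYb t ht hmeas1
      have hint2 := hint (Z n) Cn hCn' t ht hmeas2
      have hsplit : Y t - Z (n+1) t =
          ∫ s in Icc (0:ℝ) t, (f (Y (t - s)) (t - s) - f (Z n (t - s)) (t - s)) ∂μ := by
        rw [heqY t ht, hZsucc n t, integral_sub hint1 hint2]
        ring
      rw [hsplit]
      have hbound : ‖∫ s in Icc (0:ℝ) t,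
            (f (Y (t - s)) (t - s) - f (Z n (t - s)) (t - s)) ∂μ‖ ≤
          ∫ s in Icc (0:ℝ) t, q ^ n * M * Real.exp (lam * (t - s)) ∂μ := by
        apply norm_integral_le_of_norm_le
        · exact Continuous.integrableOn_Icc
            (continuous_const.mul (Real.continuous_exp.comp
              (continuous_const.mul (continuous_const.sub continuous_id))))
        · filter_upwards [ae_restrict_mem measurableSet_Icc] with s hs
          have hts : t - s ∈ Icc (0:ℝ) T := ⟨by linarith [hs.2], by linarith [hs.1, ht.2]⟩
          rw [Real.norm_eq_abs]
          exact le_trans (hf2 _ _ _ hts.1) (ih (t - s) hts)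
      rw [← Real.norm_eq_abs]
      refine le_trans hbound ?_
      have hfact : ∀ s : ℝ, q ^ n * M * Real.exp (lam * (t - s)) =
          (q ^ n * M * Real.exp (lam * t)) * Real.exp (-lam * s) := by
        intro s
        rw [show lam * (t - s) = lam * t + -lam * s by ring, Real.exp_add]
        ring
      simp_rw [hfact]
      rw [MeasureTheory.integral_const_mul]
      have hsubq : (∫ s in Icc (0:ℝ) t, Real.exp (-lam * s) ∂μ) ≤ q := by
        rw [hqdef]
        apply setIntegral_mono_set
        · exact Continuous.integrableOn_Icc
            (Real.continuous_exp.comp (continuous_const.mul continuous_id))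
        · exact ae_of_all _ fun s => (Real.exp_pos _).le
        · exact HasSubset.Subset.eventuallyLE (Set.Icc_subset_Icc le_rfl ht.2)
      calc (q ^ n * M * Real.exp (lam * t)) * (∫ s in Icc (0:ℝ) t, Real.exp (-lam * s) ∂μ)
          ≤ (q ^ n * M * Real.exp (lam * t)) * q := by
            apply mul_le_mul_of_nonneg_left hsubq
            exact mul_nonneg (mul_nonneg (pow_nonneg hq0 n) hM0) (Real.exp_pos _).le
        _ = q ^ (n+1) * M * Real.exp (lam * t) := by ring
  -- uniform convergence and conclusion
  have hunif : TendstoUniformlyOn (fun n t => Z n t) Y atTop (Icc (0:ℝ) T) := by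
    rw [Metric.tendstoUniformlyOn_iff]
    intro ε hε
    have htend0 : Tendsto (fun n => q ^ n * (M * Real.exp (lam * T))) atTop (𝓝 0) := by
      simpa using (tendsto_pow_atTop_nhds_zero_of_lt_one hq0 hq1).mul_const
        (M * Real.exp (lam * T))
    filter_upwards [htend0.eventually_lt_const hε] with n hn
    intro t ht
    rw [Real.dist_eq]
    calc |Y t - Z n t| ≤ q ^ n * M * Real.exp (lam * t) := hdef n t ht
      _ ≤ q ^ n * (M * Real.exp (lam * T)) := by
          rw [← mul_assoc]
          apply mul_le_mul_of_nonneg_left (Real.exp_le_exp.2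
            (mul_le_mul_of_nonneg_left ht.2 hlam0))
          exact mul_nonneg (pow_nonneg hq0 n) hM0
      _ < ε := hn
  have hYcont : ContinuousOn Y (Icc (0:ℝ) T) :=
    hunif.continuousOn (Eventually.of_forall hZcont).frequently
  exact hYcont.congr fun t ht => (hYeq t ht).symm

/-- If `x` is continuous, `f(y, ·)` admits one-sided limits for every `y`, and `B` is
continuous on `[0,T]` with `B(0) = 0`, then the unique bounded Borel solution of the
convolution equation is continuous (Lemma B.1, continuity part). -/
theorem convolutionEquation_solution_continuous
    (B : StieltjesFunction ℝ) (hB : IsNNDistFun B) (hB0 : B 0 < 1)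
    (T : ℝ) (hT : 0 < T)
    (hBcont : ContinuousOn (fun u => B u) (Set.Icc (0 : ℝ) T)) (hBzero : B 0 = 0)
    (x : ℝ → ℝ) (hxm : Measurable (fun t : Set.Icc (0 : ℝ) T => x t))
    (hxb : ∃ C : ℝ, ∀ t ∈ Set.Icc (0 : ℝ) T, |x t| ≤ C)
    (hxc : ContinuousOn x (Set.Icc (0 : ℝ) T))
    (f : ℝ → ℝ → ℝ) (hfm : Measurable (Function.uncurry f))
    (hf1 : ∀ (y t : ℝ), 0 ≤ t → |f y t| ≤ |y|)
    (hf2 : ∀ (y₁ y₂ t : ℝ), 0 ≤ t → |f y₁ t - f y₂ t| ≤ |y₁ - y₂|)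
    (hfl : ∀ y : ℝ, HasOneSidedLimitsNonneg (fun t => f y t))
    (y : ℝ → ℝ) (hy : SolvesConv B T x f y) :
    ContinuousOn y (Set.Icc (0 : ℝ) T) := by
  obtain ⟨hym, ⟨Cy, hCy⟩, heq⟩ := hy
  exact convolutionEquation_solution_continuous' B hB.1 T hT hBcont hBzero x hxc f hfm hf1 hf2
    (fun c => ⟨(hfl c).1, (hfl c).2⟩) y hym Cy hCy heq
end

section
/- Let B be a distribution function of a nonnegative random variable with B(0) < 1, let T > 0, and let f and fⁿ (n ≥ 1) be Borel functions from ℝ × [0,∞) to ℝ, each satisfying |g(y,t)| ≤ |y| and |g(y₁,t) − g(y₂,t)| ≤ |y₁ − y₂|. Let x and xⁿ be bounded Borel functions on [0,T], and let y and yⁿ be the unique bounded Borel solutions of y(t) = x(t) + ∫₀ᵗ f(y(t−s), t−s) dB(s) and yⁿ(t) = xⁿ(t) + ∫₀ᵗ fⁿ(yⁿ(t−s), t−s) dB(s), t ∈ [0,T]. If sup_{t∈[0,T]} ∫₀ᵗ |fⁿ(y(t−s), t−s) − f(y(t−s), t−s)| dB(s) → 0 and sup_{t∈[0,T]} |xⁿ(t)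 − x(t)| → 0 as n → ∞, then sup_{t∈[0,T]} |yⁿ(t) − y(t)| → 0 as n → ∞. -/
open MeasureTheory Filter Set Topology

/-- `g` is a Borel function on `ℝ × [0,∞)` satisfying `|g(y,t)| ≤ |y|` and the Lipschitz
condition `|g(y₁,t) − g(y₂,t)| ≤ |y₁ − y₂|`. -/
def GoodKernel (g : ℝ → ℝ → ℝ) : Prop :=
  Measurable (Function.uncurry g) ∧
  (∀ (y t : ℝ), 0 ≤ t → |g y t| ≤ |y|) ∧
  (∀ (y₁ y₂ t : ℝ), 0 ≤ t → |g y₁ t - g y₂ t| ≤ |y₁ - y₂|)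

lemma exists_measurable_ext (T : ℝ) (y : ℝ → ℝ)
    (hm : Measurable (fun t : Set.Icc (0:ℝ) T => y t)) :
    ∃ Y : ℝ → ℝ, Measurable Y ∧ (∀ u ∈ Set.Icc (0:ℝ) T, Y u = y u) ∧
      (∀ u ∉ Set.Icc (0:ℝ) T, Y u = 0) := by
  refine ⟨Function.extend Subtype.val (fun t : Set.Icc (0:ℝ) T => y t) (fun _ => 0), ?_, ?_, ?_⟩
  · exact (MeasurableEmbedding.subtype_coe measurableSet_Icc).measurable_extend hm
      measurable_const
  · intro u hu
    simpa using Subtype.val_injective.extend_apply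
      (fun t : Set.Icc (0:ℝ) T => y t) (fun _ => 0) ⟨u, hu⟩
  · intro u hu
    refine Function.extend_apply' _ _ _ ?_
    rintro ⟨a, rfl⟩
    exact hu a.2

lemma integrableOn_of_forall_le (μ : Measure ℝ) (s : Set ℝ) (hsm : MeasurableSet s)
    (hμ : μ s ≠ ⊤) (g : ℝ → ℝ) (hg : Measurable g) (C : ℝ) (hC : ∀ u ∈ s, |g u| ≤ C) :
    IntegrableOn g s μ :=
  Measure.integrableOn_of_bounded hμ hg.aestronglyMeasurable
    ((ae_restrict_iff' hsm).mpr (ae_of_all _ (by simpa [Real.norm_eq_abs] using hC)))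

set_option maxHeartbeats 2000000 in
/-- Uniform convergence of solutions of convolution equations (Lemma B.2, part 1). -/
theorem convolutionEquation_solutions_converge_uniformly
    (B : StieltjesFunction ℝ) (hB : IsNNDistFun B) (hB0 : B 0 < 1)
    (T : ℝ) (hT : 0 < T)
    (f : ℝ → ℝ → ℝ) (hf : GoodKernel f)
    (fn : ℕ → ℝ → ℝ → ℝ) (hfn : ∀ n, GoodKernel (fn n))
    (x : ℝ → ℝ) (xn : ℕ → ℝ → ℝ)
    (hxm : Measurable (fun t : Set.Icc (0 : ℝ) T => x t))
    (hxb : ∃ C : ℝ, ∀ t ∈ Set.Icc (0 : ℝ) T, |x t| ≤ C)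
    (hxnm : ∀ n, Measurable (fun t : Set.Icc (0 : ℝ) T => xn n t))
    (hxnb : ∀ n, ∃ C : ℝ, ∀ t ∈ Set.Icc (0 : ℝ) T, |xn n t| ≤ C)
    (y : ℝ → ℝ) (hy : SolvesConv B T x f y)
    (yn : ℕ → ℝ → ℝ) (hyn : ∀ n, SolvesConv B T (xn n) (fn n) (yn n))
    (hfconv : ∀ ε > (0 : ℝ), ∃ N : ℕ, ∀ n ≥ N, ∀ t ∈ Set.Icc (0 : ℝ) T,
      (∫ s in Set.Icc (0 : ℝ) t,
          |fn n (y (t - s)) (t - s) - f (y (t - s)) (t - s)| ∂B.measure) < ε)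
    (hxconv : ∀ ε > (0 : ℝ), ∃ N : ℕ, ∀ n ≥ N, ∀ t ∈ Set.Icc (0 : ℝ) T,
      |xn n t - x t| < ε) :
    ∀ ε > (0 : ℝ), ∃ N : ℕ, ∀ n ≥ N, ∀ t ∈ Set.Icc (0 : ℝ) T,
      |yn n t - y t| < ε := by
  -- Basic facts about `B`
  have hBmono := B.mono
  have hBneg : B (-1) = 0 := hB.1 (-1) (by norm_num)
  have hB0nonneg : (0:ℝ) ≤ B 0 := by
    have := hBmono (by norm_num : (-1:ℝ) ≤ 0); linarith
  have hBle1 : ∀ u : ℝ, B u ≤ 1 := fun u => hBmono.ge_of_tendsto hB.2 u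
  have hBnonneg : ∀ u : ℝ, 0 ≤ u → 0 ≤ B u := by
    intro u hu
    have := hBmono (by linarith : (-1:ℝ) ≤ u); linarith
  have hll : Function.leftLim (B : ℝ → ℝ) 0 = 0 := by
    have hev : ∀ᶠ u in 𝓝[<] (0:ℝ), (0:ℝ) = B u := by
      filter_upwards [self_mem_nhdsWithin] with u hu
      exact (hB.1 u hu).symm
    exact leftLim_eq_of_tendsto
      (Tendsto.congr' hev tendsto_const_nhds)
  have hIccMeas : ∀ b : ℝ, B.measure (Set.Icc 0 b) = ENNReal.ofReal (B b) := by
    intro b; rw [B.measure_Icc, hll, sub_zero]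
  have hIccReal : ∀ b : ℝ, 0 ≤ b → (B.measure (Set.Icc 0 b)).toReal = B b := by
    intro b hb; rw [hIccMeas b, ENNReal.toReal_ofReal (hBnonneg b hb)]
  have hIccTop : ∀ b : ℝ, B.measure (Set.Icc 0 b) ≠ ⊤ := by
    intro b; rw [hIccMeas b]; exact ENNReal.ofReal_ne_top
  have hIocTop : ∀ a b : ℝ, B.measure (Set.Ioc a b) ≠ ⊤ := by
    intro a b; rw [B.measure_Ioc]; exact ENNReal.ofReal_ne_top
  -- The threshold `θ` and the step `δ`
  set θ : ℝ := (1 + B 0) / 2 with hθdef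
  have hθ1 : θ < 1 := by rw [hθdef]; linarith
  have hBθ : B 0 < θ := by rw [hθdef]; linarith
  have hθpos : 0 < 1 - θ := by linarith
  have hθ0 : 0 ≤ θ := by rw [hθdef]; linarith
  obtain ⟨δ, hδpos, hBδ⟩ : ∃ δ : ℝ, 0 < δ ∧ B δ < θ := by
    have hright : Tendsto B (𝓝[≥] (0:ℝ)) (𝓝 (B 0)) := B.right_continuous 0
    have hev : ∀ᶠ u in 𝓝[≥] (0:ℝ), B u < θ :=
      hright.eventually (eventually_lt_nhds hBθ)
    obtain ⟨u, hu, hsub⟩ := mem_nhdsGE_iff_exists_Ico_subset.1 hev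
    have hu' : 0 < u := hu
    exact ⟨u/2, half_pos hu', hsub ⟨(half_pos hu').le, half_lt_self hu'⟩⟩
  -- The number of steps needed to cover `[0,T]`
  set K : ℕ := ⌈T / δ⌉₊ with hKdef
  have hKδ : T ≤ (K:ℝ) * δ := by
    have h1 : T / δ ≤ (K:ℝ) := Nat.le_ceil _
    have h2 := mul_le_mul_of_nonneg_right h1 hδpos.le
    rwa [div_mul_cancel₀ _ hδpos.ne'] at h2
  -- The geometric-type recursion constants
  let e : ℕ → ℝ := fun k => Nat.rec ((1-θ)⁻¹) (fun _ ih => (1-θ)⁻¹ * (1 + ih)) k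
  have he0 : e 0 = (1-θ)⁻¹ := rfl
  have heS : ∀ k, e (k+1) = (1-θ)⁻¹ * (1 + e k) := fun _ => rfl
  have hepos : ∀ k, 0 < e k := by
    intro k
    induction k with
    | zero => rw [he0]; positivity
    | succ k ih =>
      rw [heS]
      have h1 : (0:ℝ) < (1-θ)⁻¹ := by positivity
      nlinarith
  intro ε hε
  set η : ℝ := ε / (2 * e K) with hηdef
  have hηpos : 0 < η := by
    have := hepos K
    rw [hηdef]; positivity
  obtain ⟨N1, hN1⟩ := hfconv (η/2) (by positivity)
  obtain ⟨N2, hN2⟩ := hxconv (η/2) (by positivity)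
  refine ⟨max N1 N2, fun n hn => ?_⟩
  -- measurable extensions of `y` and `yn n`
  obtain ⟨Y, hYm, hYeq, hYz⟩ := exists_measurable_ext T y hy.1
  obtain ⟨Yn, hYnm, hYneq, hYnz⟩ := exists_measurable_ext T (yn n) (hyn n).1
  obtain ⟨Cy, hCy⟩ := hy.2.1
  obtain ⟨Cn, hCn⟩ := (hyn n).2.1
  have hYb : ∀ u, |Y u| ≤ max Cy 0 := by
    intro u
    by_cases h : u ∈ Set.Icc (0:ℝ) T
    · rw [hYeq u h]; exact le_trans (hCy u h) (le_max_left _ _)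
    · rw [hYz u h]; simp
  have hYnb : ∀ u, |Yn u| ≤ max Cn 0 := by
    intro u
    by_cases h : u ∈ Set.Icc (0:ℝ) T
    · rw [hYneq u h]; exact le_trans (hCn u h) (le_max_left _ _)
    · rw [hYnz u h]; simp
  set D : ℝ := max Cy 0 + max Cn 0 with hDdef
  set Δ : ℝ → ℝ := fun u => |Yn u - Y u| with hΔdef
  have hΔm : Measurable Δ := (hYnm.sub hYm).abs
  have hΔnn : ∀ u, 0 ≤ Δ u := fun u => abs_nonneg _
  have hΔD : ∀ u, Δ u ≤ D := by
    intro u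
    have h1 := abs_sub (Yn u) (Y u)
    have := hYb u; have := hYnb u
    rw [hΔdef, hDdef]
    dsimp only
    linarith [abs_sub_abs_le_abs_sub (Yn u) (Y u), abs_sub (Yn u) (Y u)]
  -- Key pointwise integral inequality
  have key : ∀ t ∈ Set.Icc (0:ℝ) T,
      Δ t ≤ η + ∫ s in Set.Icc (0:ℝ) t, Δ (t - s) ∂B.measure := by
    intro t ht
    obtain ⟨ht0, htT⟩ := ht
    have hsub : ∀ s ∈ Set.Icc (0:ℝ) t, t - s ∈ Set.Icc (0:ℝ) T := by
      intro s hs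
      exact ⟨by linarith [hs.2], by linarith [hs.1]⟩
    have hSm : MeasurableSet (Set.Icc (0:ℝ) t) := measurableSet_Icc
    have hStop : B.measure (Set.Icc (0:ℝ) t) ≠ ⊤ := hIccTop t
    have hts : Measurable (fun s : ℝ => t - s) := measurable_const.sub measurable_id
    -- the three integrands
    set F : ℝ → ℝ := fun s => f (Y (t-s)) (t-s) with hF
    set Fm : ℝ → ℝ := fun s => fn n (Yn (t-s)) (t-s) with hFm
    set G : ℝ → ℝ := fun s => |fn n (Y (t-s)) (t-s) - f (Y (t-s)) (t-s)| with hG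
    have hFmeas : Measurable F := by
      have : Measurable (fun s : ℝ => Function.uncurry f (Y (t-s), t-s)) :=
        hf.1.comp ((hYm.comp hts).prodMk hts)
      simpa [Function.uncurry] using this
    have hFmmeas : Measurable Fm := by
      have : Measurable (fun s : ℝ => Function.uncurry (fn n) (Yn (t-s), t-s)) :=
        (hfn n).1.comp ((hYnm.comp hts).prodMk hts)
      simpa [Function.uncurry] using this
    have hGmeas : Measurable G := by
      have h1 : Measurable (fun s : ℝ => Function.uncurry (fn n) (Y (t-s), t-s)) :=
        (hfn n).1.comp ((hYm.comp hts).prodMk hts)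
      have h2 : Measurable (fun s : ℝ => fn n (Y (t-s)) (t-s)) := by
        simpa [Function.uncurry] using h1
      exact (h2.sub hFmeas).abs
    have hFb : ∀ s ∈ Set.Icc (0:ℝ) t, |F s| ≤ max Cy 0 := by
      intro s hs
      have h0 : (0:ℝ) ≤ t - s := by linarith [hs.2]
      exact le_trans (hf.2.1 _ _ h0) (hYb _)
    have hFmb : ∀ s ∈ Set.Icc (0:ℝ) t, |Fm s| ≤ max Cn 0 := by
      intro s hs
      have h0 : (0:ℝ) ≤ t - s := by linarith [hs.2]
      exact le_trans ((hfn n).2.1 _ _ h0) (hYnb _)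
    have hGb : ∀ s ∈ Set.Icc (0:ℝ) t, |G s| ≤ 2 * max Cy 0 := by
      intro s hs
      have h0 : (0:ℝ) ≤ t - s := by linarith [hs.2]
      have h1 : |fn n (Y (t-s)) (t-s)| ≤ max Cy 0 :=
        le_trans ((hfn n).2.1 _ _ h0) (hYb _)
      have h2 : |f (Y (t-s)) (t-s)| ≤ max Cy 0 := le_trans (hf.2.1 _ _ h0) (hYb _)
      rw [hG]
      dsimp only
      rw [abs_abs]
      linarith [abs_sub (fn n (Y (t-s)) (t-s)) (f (Y (t-s)) (t-s))]
    have hFint : IntegrableOn F (Set.Icc (0:ℝ) t) B.measure :=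
      integrableOn_of_forall_le _ _ hSm hStop F hFmeas _ hFb
    have hFmint : IntegrableOn Fm (Set.Icc (0:ℝ) t) B.measure :=
      integrableOn_of_forall_le _ _ hSm hStop Fm hFmmeas _ hFmb
    have hGint : IntegrableOn G (Set.Icc (0:ℝ) t) B.measure :=
      integrableOn_of_forall_le _ _ hSm hStop G hGmeas _ hGb
    have hΔcint : IntegrableOn (fun s => Δ (t-s)) (Set.Icc (0:ℝ) t) B.measure :=
      integrableOn_of_forall_le _ _ hSm hStop _ (hΔm.comp hts) D
        (fun u _ => by rw [abs_of_nonneg (hΔnn _)]; exact hΔD _)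
    -- rewrite the fixed point equations
    have hyeq := hy.2.2 t ⟨ht0, htT⟩
    have hyneq := (hyn n).2.2 t ⟨ht0, htT⟩
    have hrw1 : (∫ s in Set.Icc (0:ℝ) t, f (y (t-s)) (t-s) ∂B.measure)
        = ∫ s in Set.Icc (0:ℝ) t, F s ∂B.measure := by
      refine setIntegral_congr_fun hSm (fun s hs => ?_)
      rw [hF]; dsimp only; rw [hYeq _ (hsub s hs)]
    have hrw2 : (∫ s in Set.Icc (0:ℝ) t, fn n (yn n (t-s)) (t-s) ∂B.measure)
        = ∫ s in Set.Icc (0:ℝ) t, Fm s ∂B.measure := by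
      refine setIntegral_congr_fun hSm (fun s hs => ?_)
      rw [hFm]; dsimp only; rw [hYneq _ (hsub s hs)]
    have hrw3 : (∫ s in Set.Icc (0:ℝ) t,
          |fn n (y (t - s)) (t - s) - f (y (t - s)) (t - s)| ∂B.measure)
        = ∫ s in Set.Icc (0:ℝ) t, G s ∂B.measure := by
      refine setIntegral_congr_fun hSm (fun s hs => ?_)
      rw [hG]; dsimp only; rw [hYeq _ (hsub s hs)]
    have hxnt : |xn n t - x t| ≤ η/2 :=
      (hN2 n (le_trans (le_max_right N1 N2) hn) t ⟨ht0, htT⟩).le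
    have hGsmall : (∫ s in Set.Icc (0:ℝ) t, G s ∂B.measure) ≤ η/2 := by
      rw [← hrw3]
      exact (hN1 n (le_trans (le_max_left N1 N2) hn) t ⟨ht0, htT⟩).le
    have hdiff : yn n t - y t = (xn n t - x t)
        + ((∫ s in Set.Icc (0:ℝ) t, Fm s ∂B.measure)
            - ∫ s in Set.Icc (0:ℝ) t, F s ∂B.measure) := by
      rw [hyneq, hyeq, hrw1, hrw2]; ring
    have hcomb : (∫ s in Set.Icc (0:ℝ) t, Fm s ∂B.measure)
        - (∫ s in Set.Icc (0:ℝ) t, F s ∂B.measure)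
        = ∫ s in Set.Icc (0:ℝ) t, (Fm s - F s) ∂B.measure :=
      (integral_sub hFmint hFint).symm
    have habs : |∫ s in Set.Icc (0:ℝ) t, (Fm s - F s) ∂B.measure|
        ≤ ∫ s in Set.Icc (0:ℝ) t, |Fm s - F s| ∂B.measure := by
      simpa [Real.norm_eq_abs] using
        norm_integral_le_integral_norm (μ := B.measure.restrict (Set.Icc (0:ℝ) t))
          (fun s => Fm s - F s)
    have hptw : ∀ s ∈ Set.Icc (0:ℝ) t, |Fm s - F s| ≤ Δ (t-s) + G s := by
      intro s hs
      have h0 : (0:ℝ) ≤ t - s := by linarith [hs.2]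
      have h1 : |Fm s - fn n (Y (t-s)) (t-s)| ≤ |Yn (t-s) - Y (t-s)| :=
        (hfn n).2.2 _ _ _ h0
      have h2 : |Fm s - F s| ≤ |Fm s - fn n (Y (t-s)) (t-s)|
          + |fn n (Y (t-s)) (t-s) - F s| := abs_sub_le _ _ _
      have h3 : |fn n (Y (t-s)) (t-s) - F s| = G s := rfl
      have h4 : Δ (t-s) = |Yn (t-s) - Y (t-s)| := rfl
      linarith
    have hABint : IntegrableOn (fun s => |Fm s - F s|) (Set.Icc (0:ℝ) t) B.measure :=
      (hFmint.sub hFint).abs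
    have hmono : (∫ s in Set.Icc (0:ℝ) t, |Fm s - F s| ∂B.measure)
        ≤ ∫ s in Set.Icc (0:ℝ) t, (Δ (t-s) + G s) ∂B.measure :=
      setIntegral_mono_on hABint (hΔcint.add hGint) hSm hptw
    have hsplit : (∫ s in Set.Icc (0:ℝ) t, (Δ (t-s) + G s) ∂B.measure)
        = (∫ s in Set.Icc (0:ℝ) t, Δ (t-s) ∂B.measure)
          + ∫ s in Set.Icc (0:ℝ) t, G s ∂B.measure :=
      integral_add hΔcint hGint
    have hΔt : Δ t = |yn n t - y t| := by
      rw [hΔdef]; dsimp only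
      rw [hYeq t ⟨ht0, htT⟩, hYneq t ⟨ht0, htT⟩]
    have hfinal : |yn n t - y t| ≤ |xn n t - x t|
        + |∫ s in Set.Icc (0:ℝ) t, (Fm s - F s) ∂B.measure| := by
      rw [hdiff, hcomb]
      exact abs_add_le _ _
    rw [hΔt]
    linarith
  -- core step: splitting the integral at δ
  have core : ∀ t ∈ Set.Icc (0:ℝ) T, ∀ Q P : ℝ, 0 ≤ Q → 0 ≤ P →
      (∀ u ∈ Set.Icc (0:ℝ) t, Δ u ≤ Q) →
      (∀ u ∈ Set.Icc (0:ℝ) t, u ≤ t - δ → Δ u ≤ P) →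
      Δ t ≤ η + θ * Q + P := by
    intro t ht Q P hQ0 hP0 hQ hP
    obtain ⟨ht0, htT⟩ := ht
    set δ' : ℝ := min δ t with hδ'def
    have hδ'0 : 0 ≤ δ' := le_min hδpos.le ht0
    have hδ't : δ' ≤ t := min_le_right _ _
    have hδ'δ : δ' ≤ δ := min_le_left _ _
    have hts : Measurable (fun s : ℝ => t - s) := measurable_const.sub measurable_id
    have hunion : Set.Icc (0:ℝ) δ' ∪ Set.Ioc δ' t = Set.Icc (0:ℝ) t :=
      Set.Icc_union_Ioc_eq_Icc hδ'0 hδ't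
    have hdisj : Disjoint (Set.Icc (0:ℝ) δ') (Set.Ioc δ' t) := by
      rw [Set.disjoint_left]
      rintro u ⟨_, h1⟩ ⟨h2, _⟩
      linarith
    have hint1 : IntegrableOn (fun s => Δ (t-s)) (Set.Icc (0:ℝ) δ') B.measure :=
      integrableOn_of_forall_le _ _ measurableSet_Icc (hIccTop δ') _ (hΔm.comp hts) D
        (fun u _ => by rw [abs_of_nonneg (hΔnn _)]; exact hΔD _)
    have hint2 : IntegrableOn (fun s => Δ (t-s)) (Set.Ioc δ' t) B.measure :=
      integrableOn_of_forall_le _ _ measurableSet_Ioc (hIocTop δ' t) _ (hΔm.comp hts) D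
        (fun u _ => by rw [abs_of_nonneg (hΔnn _)]; exact hΔD _)
    have hsplit : (∫ s in Set.Icc (0:ℝ) t, Δ (t-s) ∂B.measure)
        = (∫ s in Set.Icc (0:ℝ) δ', Δ (t-s) ∂B.measure)
          + ∫ s in Set.Ioc δ' t, Δ (t-s) ∂B.measure := by
      rw [← hunion]
      exact setIntegral_union hdisj measurableSet_Ioc hint1 hint2
    have hb1 : (∫ s in Set.Icc (0:ℝ) δ', Δ (t-s) ∂B.measure) ≤ θ * Q := by
      have hconst : IntegrableOn (fun _ : ℝ => Q) (Set.Icc (0:ℝ) δ') B.measure := by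
        refine integrableOn_const ?_
        exact hIccTop δ'
      have h1 : (∫ s in Set.Icc (0:ℝ) δ', Δ (t-s) ∂B.measure)
          ≤ ∫ _ in Set.Icc (0:ℝ) δ', Q ∂B.measure := by
        refine setIntegral_mono_on hint1 hconst measurableSet_Icc (fun s hs => ?_)
        exact hQ (t-s) ⟨by linarith [hs.2, hδ't], by linarith [hs.1]⟩
      rw [setIntegral_const, smul_eq_mul, measureReal_def, hIccReal δ' hδ'0] at h1
      have h2 : B δ' ≤ θ := le_of_lt (lt_of_le_of_lt (hBmono hδ'δ) hBδ)
      nlinarith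
    have hb2 : (∫ s in Set.Ioc δ' t, Δ (t-s) ∂B.measure) ≤ P := by
      have hconst : IntegrableOn (fun _ : ℝ => P) (Set.Ioc δ' t) B.measure := by
        refine integrableOn_const ?_
        exact hIocTop δ' t
      have h1 : (∫ s in Set.Ioc δ' t, Δ (t-s) ∂B.measure)
          ≤ ∫ _ in Set.Ioc δ' t, P ∂B.measure := by
        refine setIntegral_mono_on hint2 hconst measurableSet_Ioc (fun s hs => ?_)
        have hsδ : δ ≤ t ∧ δ < s := by
          rcases le_or_gt δ t with h | h
          · have : δ' = δ := min_eq_left h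
            exact ⟨h, by rw [← this]; exact hs.1⟩
          · have heq : δ' = t := min_eq_right h.le
            exfalso
            have h1 := hs.1
            rw [heq] at h1
            linarith [hs.2]
        refine hP (t-s) ⟨by linarith [hs.2], by linarith [hs.1, hδ'0]⟩ (by linarith [hsδ.2])
      rw [setIntegral_const, smul_eq_mul, measureReal_def, B.measure_Ioc,
        ENNReal.toReal_ofReal (sub_nonneg.2 (hBmono hδ't))] at h1
      have h2 : B t - B δ' ≤ 1 := by
        have := hBle1 t; have := hBnonneg δ' hδ'0; linarith
      nlinarith
    have hk := key t ⟨ht0, htT⟩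
    rw [hsplit] at hk
    linarith
  -- Suprema over bands
  have hSne : ∀ k : ℕ, (Δ '' Set.Icc (0:ℝ) (min ((k:ℝ)*δ) T)).Nonempty := by
    intro k
    exact ⟨Δ 0, 0, ⟨le_refl 0, le_min (mul_nonneg (Nat.cast_nonneg k) hδpos.le) hT.le⟩, rfl⟩
  have hSbdd : ∀ k : ℕ, BddAbove (Δ '' Set.Icc (0:ℝ) (min ((k:ℝ)*δ) T)) := by
    intro k
    refine ⟨D, ?_⟩
    rintro a ⟨u, _, rfl⟩
    exact hΔD u
  set M : ℕ → ℝ := fun k => sSup (Δ '' Set.Icc (0:ℝ) (min ((k:ℝ)*δ) T)) with hMdef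
  have hMle : ∀ k : ℕ, ∀ u ∈ Set.Icc (0:ℝ) (min ((k:ℝ)*δ) T), Δ u ≤ M k :=
    fun k u hu => le_csSup (hSbdd k) ⟨u, hu, rfl⟩
  have hMnn : ∀ k : ℕ, 0 ≤ M k := by
    intro k
    exact le_trans (hΔnn 0)
      (hMle k 0 ⟨le_refl 0, le_min (mul_nonneg (Nat.cast_nonneg k) hδpos.le) hT.le⟩)
  -- the main induction
  have hMbound : ∀ k : ℕ, M k ≤ η * e k := by
    intro k
    induction k with
    | zero =>
      have hmin0 : min (((0:ℕ):ℝ)*δ) T = 0 := by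
        rw [Nat.cast_zero, zero_mul]
        exact min_eq_left hT.le
      have hstep : M 0 ≤ η + θ * M 0 + 0 := by
        refine csSup_le (hSne 0) ?_
        rintro a ⟨u, hu, rfl⟩
        rw [hmin0] at hu
        have hu0 : u = 0 := le_antisymm hu.2 hu.1
        subst hu0
        refine core 0 ⟨le_refl 0, hT.le⟩ (M 0) 0 (hMnn 0) le_rfl ?_ ?_
        · intro v hv
          refine hMle 0 v ?_
          rw [hmin0]
          exact hv
        · intro v hv hvle
          exfalso
          have h1 := hv.1
          linarith
      rw [he0, ← div_eq_mul_inv, le_div_iff₀ hθpos]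
      linarith
    | succ k ih =>
      have hcast : ((k+1:ℕ):ℝ) = (k:ℝ) + 1 := by push_cast; ring
      have hstep : M (k+1) ≤ η + θ * M (k+1) + η * e k := by
        refine csSup_le (hSne (k+1)) ?_
        rintro a ⟨u, hu, rfl⟩
        have huT : u ≤ T := le_trans hu.2 (min_le_right _ _)
        have huk : u ≤ ((k:ℝ)+1) * δ := by
          have h1 := le_trans hu.2 (min_le_left _ _)
          rw [hcast] at h1
          exact h1
        refine core u ⟨hu.1, huT⟩ (M (k+1)) (η * e k) (hMnn _)
          (le_of_lt (mul_pos hηpos (hepos k))) ?_ ?_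
        · intro v hv
          exact hMle (k+1) v ⟨hv.1, le_trans hv.2 hu.2⟩
        · intro v hv hvle
          refine le_trans (hMle k v ⟨hv.1, le_min ?_ ?_⟩) ih
          · have h2 := hv.2
            nlinarith [huk, hvle]
          · linarith [hv.2, huT]
      have h2 : M (k+1) * (1-θ) ≤ η * (1 + e k) := by nlinarith [hstep]
      calc M (k+1) = M (k+1) * (1-θ) * (1-θ)⁻¹ := by
            rw [mul_assoc, mul_inv_cancel₀ hθpos.ne', mul_one]
        _ ≤ η * (1 + e k) * (1-θ)⁻¹ :=
            mul_le_mul_of_nonneg_right h2 (inv_nonneg.2 hθpos.le)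
        _ = η * e (k+1) := by rw [heS]; ring
  -- conclusion
  intro t ht
  have htK : t ∈ Set.Icc (0:ℝ) (min ((K:ℝ)*δ) T) :=
    ⟨ht.1, le_min (le_trans ht.2 hKδ) ht.2⟩
  have h1 : Δ t ≤ η * e K := le_trans (hMle K t htK) (hMbound K)
  have hΔt : Δ t = |yn n t - y t| := by
    rw [hΔdef]; dsimp only
    rw [hYeq t ht, hYneq t ht]
  have hek : e K ≠ 0 := (hepos K).ne'
  have h2 : η * e K = ε / 2 := by
    rw [hηdef]
    field_simp
  rw [hΔt] at h1
  linarith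
end
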